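/- arXiv:2304.04805 — 5 statements merged into one kernel-verified Lean document; each statement's English description precedes it below -/
import Mathlib

section
/- (Brun–Hooley sieve, upper bound.) Let 𝒜 be a finite set of positive integers and 𝒫 a finite set of primes, and set P = Π_{p ∈ 𝒫} p and S(𝒜,𝒫) = #{a ∈ 𝒜 : gcd(a,P) = 1}. Suppose that for every d | P one has A_d := #{a ∈ 𝒜 : d | a} = X·g(d) + r_d, where X > 0 and g is a multiplicative function with 0 < g(p) < 1 for p ∈ 𝒫 and g(p) = 0 for p ∉ 𝒫. Let 𝒫 = 𝒫₁ ∪ ⋯ ∪ 𝒫_t be a partition of 𝒫 into disjoint subsets, let P_j = Π_{p ∈ 𝒫_j} p, let k₁,…,k_t be even positive integers, let V_j = Π_{p ∈ 𝒫_j}(1 − g(p)), L_j = log(V_j^{-1}), E = Σ_{j=1}^{t} e^{L_j} L_j^{k_j+1}/(k_j+1)!, and R = Σ |r_{d₁⋯d_t}|, where the sum runs over tuples (d₁,…,d_t) with d_j | P_j and ω(d_j) ≤ k_j for all j. Then S(𝒜,𝒫) ≤ X·Π_{p ∈ 𝒫}(1 − g(p))·e^E + R. -/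
open Finset


private lemma aux_alt (n k : ℕ) (hn : 1 ≤ n) :
    ∑ i ∈ Finset.range (k+1), (-1:ℝ)^i * (n.choose i) = (-1)^k * ((n-1).choose k) := by
  obtain ⟨m, rfl⟩ : ∃ m, n = m + 1 := ⟨n - 1, (Nat.succ_pred_eq_of_pos hn).symm⟩
  simp only [Nat.add_sub_cancel]
  induction k with
  | zero => simp
  | succ k ih =>
    rw [Finset.sum_range_succ, ih, Nat.choose_succ_succ' m k]
    push_cast
    ring

private lemma aux_card_sum (W : Finset ℕ) (k : ℕ) (F : ℕ → ℝ) :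
    ∑ T ∈ W.powerset.filter (fun T => T.card ≤ k), F T.card
      = ∑ i ∈ Finset.range (k+1), F i * (W.card.choose i) := by
  rw [← Finset.sum_fiberwise_of_maps_to' (g := Finset.card) (t := Finset.range (k+1))
      (fun T hT => by
        simp only [Finset.mem_filter] at hT
        exact Finset.mem_range.mpr (Nat.lt_succ_of_le hT.2)) F]
  refine Finset.sum_congr rfl fun i hi => ?_
  have hik : i ≤ k := Nat.lt_succ_iff.mp (Finset.mem_range.mp hi)
  have hset : (W.powerset.filter (fun T => T.card ≤ k)).filter (fun T => T.card = i)
      = W.powersetCard i := by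
    rw [Finset.powersetCard_eq_filter]
    ext T
    simp only [Finset.mem_filter, Finset.mem_powerset]
    constructor
    · rintro ⟨⟨h1, _⟩, h3⟩; exact ⟨h1, h3⟩
    · rintro ⟨h1, h2⟩; exact ⟨⟨h1, h2 ▸ hik⟩, h2⟩
  rw [hset, Finset.sum_const, Finset.card_powersetCard, nsmul_eq_mul, mul_comm]

private lemma aux_bonf_lower (W : Finset ℕ) (k : ℕ) (hk : Even k) :
    (if W = ∅ then (1:ℝ) else 0)
      ≤ ∑ T ∈ W.powerset.filter (fun T => T.card ≤ k), (-1:ℝ)^T.card := by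
  rw [show (fun T : Finset ℕ => (-1:ℝ)^T.card) = (fun T => (fun c => (-1:ℝ)^c) T.card) from rfl,
    aux_card_sum]
  by_cases hW : W = ∅
  · subst hW
    rw [Finset.sum_eq_single 0]
    · simp
    · intro i _ hi
      simp [Nat.choose_eq_zero_of_lt (by omega : (0:ℕ) < i)]
    · simp
  · rw [aux_alt _ _ (Nat.one_le_iff_ne_zero.mpr (fun h => hW (Finset.card_eq_zero.mp h)))]
    simp only [hW, if_false]
    rw [hk.neg_one_pow, one_mul]
    positivity

private lemma aux_bonf_upper (W : Finset ℕ) (k : ℕ) :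
    ∑ T ∈ W.powerset.filter (fun T => T.card ≤ k), (-1:ℝ)^T.card
      ≤ (if W = ∅ then (1:ℝ) else 0) + (W.card.choose (k+1)) := by
  by_cases hW : W = ∅
  · subst hW
    simp [Finset.filter_singleton, Nat.choose_eq_zero_of_lt (Nat.succ_pos k)]
  · have hn : 1 ≤ W.card := Nat.one_le_iff_ne_zero.mpr
      (fun h => hW (Finset.card_eq_zero.mp h))
    rw [show (fun T : Finset ℕ => (-1:ℝ)^T.card) = (fun T => (fun c => (-1:ℝ)^c) T.card) from rfl,
      aux_card_sum, aux_alt _ _ hn]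
    simp only [hW, if_false, zero_add]
    calc (-1:ℝ)^k * ((W.card-1).choose k)
        ≤ ((W.card-1).choose k : ℝ) := by
          have h1 : ((-1:ℝ)^k) ≤ 1 := by
            rcases Nat.even_or_odd k with h | h
            · rw [h.neg_one_pow]
            · rw [h.neg_one_pow]; norm_num
          have h2 : (0:ℝ) ≤ ((W.card-1).choose k : ℝ) := by positivity
          nlinarith
      _ ≤ (W.card.choose (k+1) : ℝ) := by
          obtain ⟨m, hm⟩ : ∃ m, W.card = m + 1 := ⟨W.card - 1, (Nat.succ_pred_eq_of_pos hn).symm⟩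
          rw [hm, Nat.add_sub_cancel]
          exact_mod_cast Nat.choose_succ_succ' m k ▸ Nat.le_add_right _ _


-- key "expectation of indicator of T ⊆ W" identity
private lemma aux_E1 (S T : Finset ℕ) (hT : T ⊆ S) (x : ℕ → ℝ) :
    ∑ W ∈ S.powerset.filter (fun W => T ⊆ W),
      (∏ p ∈ W, x p) * ∏ p ∈ S \ W, (1 - x p) = ∏ p ∈ T, x p := by
  have key : ∑ W ∈ S.powerset.filter (fun W => T ⊆ W),
      (∏ p ∈ W, x p) * ∏ p ∈ S \ W, (1 - x p)
      = ∑ U ∈ (S \ T).powerset,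
        (∏ p ∈ T, x p) * ((∏ p ∈ U, x p) * ∏ p ∈ (S \ T) \ U, (1 - x p)) := by
    refine Finset.sum_nbij' (fun W => W \ T) (fun U => T ∪ U) ?_ ?_ ?_ ?_ ?_
    · intro W hW
      simp only [Finset.mem_filter, Finset.mem_powerset] at hW ⊢
      exact Finset.sdiff_subset_sdiff hW.1 le_rfl
    · intro U hU
      simp only [Finset.mem_powerset] at hU
      simp only [Finset.mem_filter, Finset.mem_powerset]
      exact ⟨Finset.union_subset hT (hU.trans (Finset.sdiff_subset)), Finset.subset_union_left⟩
    · intro W hW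
      simp only [Finset.mem_filter, Finset.mem_powerset] at hW
      exact Finset.union_sdiff_of_subset hW.2
    · intro U hU
      simp only [Finset.mem_powerset] at hU
      have hd : Disjoint T U := Finset.disjoint_left.mpr
        (fun a haT haU => (Finset.mem_sdiff.mp (hU haU)).2 haT)
      show (T ∪ U) \ T = U
      rw [Finset.union_sdiff_cancel_left hd]
    · intro W hW
      simp only [Finset.mem_filter, Finset.mem_powerset] at hW
      have h1 : (∏ p ∈ W, x p) = (∏ p ∈ W \ T, x p) * ∏ p ∈ T, x p :=
        (Finset.prod_sdiff hW.2).symm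
      have h2 : S \ W = (S \ T) \ (W \ T) := by
        ext p
        simp only [Finset.mem_sdiff]
        constructor
        · rintro ⟨hS, hW'⟩
          exact ⟨⟨hS, fun h => hW' (hW.2 h)⟩, fun h => hW' h.1⟩
        · rintro ⟨⟨hS, hT'⟩, h⟩
          exact ⟨hS, fun hWp => h ⟨hWp, hT'⟩⟩
      rw [h1, h2]; ring
  rw [key, ← Finset.mul_sum, ← Finset.prod_add]
  simp

private lemma aux_swap (S : Finset ℕ) (k : ℕ) (F : Finset ℕ → Finset ℕ → ℝ) :
    ∑ W ∈ S.powerset, ∑ T ∈ W.powerset.filter (fun T => T.card ≤ k), F W T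
      = ∑ T ∈ S.powerset.filter (fun T => T.card ≤ k),
          ∑ W ∈ S.powerset.filter (fun W => T ⊆ W), F W T := by
  refine Finset.sum_comm' ?_
  intro W T
  simp only [Finset.mem_powerset, Finset.mem_filter]
  constructor
  · rintro ⟨h1, h2, h3⟩
    exact ⟨⟨h1, h2⟩, h2.trans h1, h3⟩
  · rintro ⟨⟨h1, h2⟩, _, h3⟩
    exact ⟨h1, h2, h3⟩

private lemma aux_swap' (S : Finset ℕ) (m : ℕ) (F : Finset ℕ → Finset ℕ → ℝ) :
    ∑ W ∈ S.powerset, ∑ T ∈ W.powersetCard m, F W T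
      = ∑ T ∈ S.powersetCard m,
          ∑ W ∈ S.powerset.filter (fun W => T ⊆ W), F W T := by
  refine Finset.sum_comm' ?_
  intro W T
  simp only [Finset.mem_powerset, Finset.mem_filter, Finset.mem_powersetCard]
  constructor
  · rintro ⟨h1, h2, h3⟩
    exact ⟨⟨h1, h2⟩, h2.trans h1, h3⟩
  · rintro ⟨⟨h1, h2⟩, _, h3⟩
    exact ⟨h1, h2, h3⟩

private lemma aux_trunc_bounds (S : Finset ℕ) (x : ℕ → ℝ)
    (hx : ∀ p ∈ S, 0 ≤ x p ∧ x p ≤ 1) (k : ℕ) (hk : Even k) :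
    (∏ p ∈ S, (1 - x p)
      ≤ ∑ T ∈ S.powerset.filter (fun T => T.card ≤ k), (-1:ℝ)^T.card * ∏ p ∈ T, x p)
    ∧ (∑ T ∈ S.powerset.filter (fun T => T.card ≤ k), (-1:ℝ)^T.card * ∏ p ∈ T, x p
      ≤ ∏ p ∈ S, (1 - x p) + ∑ T ∈ S.powersetCard (k+1), ∏ p ∈ T, x p) := by
  set w : Finset ℕ → ℝ := fun W => (∏ p ∈ W, x p) * ∏ p ∈ S \ W, (1 - x p) with hw
  have hwnn : ∀ W ∈ S.powerset, 0 ≤ w W := by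
    intro W hW
    rw [Finset.mem_powerset] at hW
    refine mul_nonneg (Finset.prod_nonneg fun p hp => (hx p (hW hp)).1)
      (Finset.prod_nonneg fun p hp => ?_)
    have := (hx p (Finset.mem_sdiff.mp hp).1).2
    linarith
  -- main truncated sum as expectation
  have key1 : ∑ T ∈ S.powerset.filter (fun T => T.card ≤ k), (-1:ℝ)^T.card * ∏ p ∈ T, x p
      = ∑ W ∈ S.powerset, w W * ∑ T ∈ W.powerset.filter (fun T => T.card ≤ k), (-1:ℝ)^T.card := by
    have := aux_swap S k (fun W T => w W * (-1:ℝ)^T.card)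
    rw [show (∑ W ∈ S.powerset, w W * ∑ T ∈ W.powerset.filter (fun T => T.card ≤ k),
        (-1:ℝ)^T.card) = ∑ W ∈ S.powerset, ∑ T ∈ W.powerset.filter (fun T => T.card ≤ k),
        w W * (-1:ℝ)^T.card from Finset.sum_congr rfl fun W _ => Finset.mul_sum _ _ _,
      this]
    refine Finset.sum_congr rfl fun T hT => ?_
    rw [Finset.mem_filter, Finset.mem_powerset] at hT
    rw [← Finset.sum_mul, aux_E1 S T hT.1 x, mul_comm]
  have key2 : ∑ T ∈ S.powersetCard (k+1), ∏ p ∈ T, x p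
      = ∑ W ∈ S.powerset, w W * ((W.powersetCard (k+1)).card : ℝ) := by
    have h1 : ∀ W, w W * ((W.powersetCard (k+1)).card : ℝ)
        = ∑ T ∈ W.powersetCard (k+1), w W := by
      intro W; rw [Finset.sum_const, nsmul_eq_mul, mul_comm]
    rw [Finset.sum_congr rfl fun W _ => h1 W, aux_swap' S (k+1) (fun W T => w W)]
    refine Finset.sum_congr rfl fun T hT => ?_
    rw [Finset.mem_powersetCard] at hT
    rw [aux_E1 S T hT.1 x]
  have hV : ∏ p ∈ S, (1 - x p) = ∑ W ∈ S.powerset, (if W = ∅ then w W else 0) := by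
    rw [Finset.sum_ite_eq' S.powerset ∅ w]
    simp [hw]
  constructor
  · rw [key1, hV]
    refine Finset.sum_le_sum fun W hW => ?_
    have h := aux_bonf_lower W k hk
    have hnn := hwnn W hW
    by_cases hWe : W = ∅
    · simp only [hWe, if_true] at h ⊢
      calc w ∅ = w ∅ * 1 := (mul_one _).symm
        _ ≤ w ∅ * ∑ T ∈ (∅ : Finset ℕ).powerset.filter (fun T => T.card ≤ k), (-1:ℝ)^T.card :=
          by exact mul_le_mul_of_nonneg_left (by simpa using h) (by simpa [hWe] using hnn)
    · simp only [hWe, if_false]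
      exact mul_nonneg hnn (le_trans (by simp [hWe]) h)
  · rw [key1, hV]
    have : ∑ W ∈ S.powerset, w W * ∑ T ∈ W.powerset.filter (fun T => T.card ≤ k), (-1:ℝ)^T.card
        ≤ ∑ W ∈ S.powerset, ((if W = ∅ then w W else 0) + w W * ((W.powersetCard (k+1)).card : ℝ)) := by
      refine Finset.sum_le_sum fun W hW => ?_
      have h := aux_bonf_upper W k
      have hnn := hwnn W hW
      have hcard : ((W.powersetCard (k+1)).card : ℝ) = (W.card.choose (k+1) : ℝ) := by
        rw [Finset.card_powersetCard]
      by_cases hWe : W = ∅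
      · simp only [hWe, if_true] at h ⊢
        calc w ∅ * ∑ T ∈ (∅ : Finset ℕ).powerset.filter (fun T => T.card ≤ k), (-1:ℝ)^T.card
            ≤ w ∅ * ((1:ℝ) + (((∅:Finset ℕ).card).choose (k+1) : ℝ)) :=
              mul_le_mul_of_nonneg_left (by simpa using h) (by simpa [hWe] using hnn)
          _ = w ∅ + w ∅ * (((∅:Finset ℕ).powersetCard (k+1)).card : ℝ) := by
              rw [show (((∅:Finset ℕ).powersetCard (k+1)).card : ℝ)
                  = (((∅:Finset ℕ).card).choose (k+1) : ℝ) from by rw [Finset.card_powersetCard]]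
              ring
      · simp only [hWe, if_false, zero_add]
        calc w W * ∑ T ∈ W.powerset.filter (fun T => T.card ≤ k), (-1:ℝ)^T.card
            ≤ w W * ((W.card.choose (k+1)) : ℝ) :=
              mul_le_mul_of_nonneg_left (by simpa [hWe] using h) hnn
          _ = w W * ((W.powersetCard (k+1)).card : ℝ) := by rw [hcard]
    refine this.trans ?_
    rw [Finset.sum_add_distrib, key2]


private lemma aux_esymm (S : Finset ℕ) (x : ℕ → ℝ) (hx : ∀ p ∈ S, 0 ≤ x p) : ∀ m : ℕ,
    (m.factorial : ℝ) * ∑ T ∈ S.powersetCard m, ∏ p ∈ T, x p ≤ (∑ p ∈ S, x p) ^ m := by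
  intro m
  induction m with
  | zero => simp
  | succ m ih =>
    have hs : 0 ≤ ∑ p ∈ S, x p := Finset.sum_nonneg hx
    have key : ((m+1 : ℕ) : ℝ) * ∑ T ∈ S.powersetCard (m+1), ∏ p ∈ T, x p
        ≤ (∑ p ∈ S, x p) * ∑ T ∈ S.powersetCard m, ∏ p ∈ T, x p := by
      have step1 : ((m+1 : ℕ) : ℝ) * ∑ T ∈ S.powersetCard (m+1), ∏ p ∈ T, x p
          = ∑ T ∈ S.powersetCard (m+1), ∑ p ∈ T, ∏ q ∈ T, x q := by
        rw [Finset.mul_sum]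
        refine Finset.sum_congr rfl fun T hT => ?_
        rw [Finset.mem_powersetCard] at hT
        rw [Finset.sum_const, nsmul_eq_mul, hT.2]
      have step2 : ∑ T ∈ S.powersetCard (m+1), ∑ p ∈ T, ∏ q ∈ T, x q
          = ∑ U ∈ S.powersetCard m, ∑ p ∈ S \ U, (x p * ∏ q ∈ U, x q) := by
        rw [Finset.sum_sigma', Finset.sum_sigma']
        refine Finset.sum_nbij' (fun z => ⟨z.1.erase z.2, z.2⟩) (fun z => ⟨insert z.2 z.1, z.2⟩)
          ?_ ?_ ?_ ?_ ?_
        · rintro ⟨T, p⟩ hz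
          simp only [Finset.mem_sigma, Finset.mem_powersetCard] at hz ⊢
          obtain ⟨⟨hTS, hTc⟩, hp⟩ := hz
          refine ⟨⟨(Finset.erase_subset _ _).trans hTS, ?_⟩, ?_⟩
          · rw [Finset.card_erase_of_mem hp, hTc]; omega
          · exact Finset.mem_sdiff.mpr ⟨hTS hp, Finset.notMem_erase _ _⟩
        · rintro ⟨U, p⟩ hz
          simp only [Finset.mem_sigma, Finset.mem_powersetCard] at hz ⊢
          obtain ⟨⟨hUS, hUc⟩, hp⟩ := hz
          rw [Finset.mem_sdiff] at hp
          refine ⟨⟨Finset.insert_subset hp.1 hUS, ?_⟩, Finset.mem_insert_self _ _⟩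
          rw [Finset.card_insert_of_notMem hp.2, hUc]
        · rintro ⟨T, p⟩ hz
          simp only [Finset.mem_sigma] at hz
          simp [Finset.insert_erase hz.2]
        · rintro ⟨U, p⟩ hz
          simp only [Finset.mem_sigma, Finset.mem_powersetCard] at hz
          rw [Finset.mem_sdiff] at hz
          simp [Finset.erase_insert hz.2.2]
        · rintro ⟨T, p⟩ hz
          simp only [Finset.mem_sigma] at hz
          exact (Finset.mul_prod_erase T x hz.2).symm
      have step3 : ∑ U ∈ S.powersetCard m, ∑ p ∈ S \ U, (x p * ∏ q ∈ U, x q)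
          ≤ ∑ U ∈ S.powersetCard m, ∑ p ∈ S, (x p * ∏ q ∈ U, x q) := by
        refine Finset.sum_le_sum fun U hU => ?_
        rw [Finset.mem_powersetCard] at hU
        refine Finset.sum_le_sum_of_subset_of_nonneg (Finset.sdiff_subset) fun p hp _ => ?_
        exact mul_nonneg (hx p hp) (Finset.prod_nonneg fun q hq => hx q (hU.1 hq))
      rw [step1, step2]
      refine step3.trans (le_of_eq ?_)
      rw [Finset.mul_sum]
      refine Finset.sum_congr rfl fun U hU => ?_
      rw [← Finset.sum_mul, mul_comm]
    calc ((m+1).factorial : ℝ) * ∑ T ∈ S.powersetCard (m+1), ∏ p ∈ T, x p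
        = (m.factorial : ℝ) * (((m+1 : ℕ):ℝ) * ∑ T ∈ S.powersetCard (m+1), ∏ p ∈ T, x p) := by
          rw [Nat.factorial_succ]; push_cast; ring
      _ ≤ (m.factorial : ℝ) * ((∑ p ∈ S, x p) * ∑ T ∈ S.powersetCard m, ∏ p ∈ T, x p) :=
          mul_le_mul_of_nonneg_left key (by positivity)
      _ = (∑ p ∈ S, x p) * ((m.factorial : ℝ) * ∑ T ∈ S.powersetCard m, ∏ p ∈ T, x p) := by ring
      _ ≤ (∑ p ∈ S, x p) * (∑ p ∈ S, x p) ^ m := mul_le_mul_of_nonneg_left ih hs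
      _ = (∑ p ∈ S, x p) ^ (m+1) := by ring

private lemma aux_gprod (g : ℕ → ℝ) (hg1 : g 1 = 1)
    (hgmult : ∀ m n : ℕ, Nat.Coprime m n → g (m * n) = g m * g n)
    (S : Finset ℕ) (hS : ∀ p ∈ S, Nat.Prime p) :
    g (∏ p ∈ S, p) = ∏ p ∈ S, g p := by
  induction S using Finset.induction_on with
  | empty => simpa using hg1
  | @insert p s hps ih =>
    have hp := hS p (Finset.mem_insert_self p s)
    have hcop : Nat.Coprime p (∏ q ∈ s, q) := by
      refine Nat.Coprime.prod_right fun q hq => ?_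
      exact (Nat.coprime_primes hp (hS q (Finset.mem_insert_of_mem hq))).mpr
        (fun h => hps (h ▸ hq))
    rw [Finset.prod_insert hps, Finset.prod_insert hps, hgmult p _ hcop,
      ih fun q hq => hS q (Finset.mem_insert_of_mem hq)]

private lemma aux_prod_primes_dvd_iff (S : Finset ℕ) (hS : ∀ p ∈ S, Nat.Prime p) (a : ℕ) :
    (∏ p ∈ S, p) ∣ a ↔ ∀ p ∈ S, p ∣ a := by
  constructor
  · intro h p hp
    exact (Finset.dvd_prod_of_mem _ hp).trans h
  · intro h
    exact Finset.prod_primes_dvd a (fun p hp => (hS p hp).prime) h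

private lemma aux_squarefree_prod (S : Finset ℕ) (hS : ∀ p ∈ S, Nat.Prime p) :
    Squarefree (∏ p ∈ S, p) := by
  induction S using Finset.induction_on with
  | empty => simp only [Finset.prod_empty]; exact squarefree_one
  | @insert p s hps ih =>
    have hp := hS p (Finset.mem_insert_self p s)
    have hcop : Nat.Coprime p (∏ q ∈ s, q) := by
      refine Nat.Coprime.prod_right fun q hq => ?_
      exact (Nat.coprime_primes hp (hS q (Finset.mem_insert_of_mem hq))).mpr
        (fun h => hps (h ▸ hq))
    rw [Finset.prod_insert hps]
    exact (Nat.squarefree_mul hcop).mpr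
      ⟨hp.squarefree, ih fun q hq => hS q (Finset.mem_insert_of_mem hq)⟩

/-- **Brun–Hooley sieve, upper bound** (Ford–Halberstam).
Let `A` be a finite set of positive integers, `P` a finite set of primes,
and suppose `#{a ∈ A : d ∣ a} = X·g(d) + r_d` for every `d ∣ ∏_{p ∈ P} p`,
where `g` is multiplicative with `0 < g(p) < 1` on `P` and `g(p) = 0` for primes
outside `P`.  Given a partition `Pj 1, …, Pj t` of `P` and even positive integers
`k 1, …, k t`, with `E = ∑ⱼ e^{Lⱼ} Lⱼ^{kⱼ+1}/(kⱼ+1)!` (where `Lⱼ = log Vⱼ⁻¹`,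
`Vⱼ = ∏_{p ∈ Pj j}(1 - g p)`) and
`R = ∑_{dⱼ ∣ Pⱼ, ω(dⱼ) ≤ kⱼ} |r_{d₁⋯d_t}|`, one has
`#{a ∈ A : gcd(a, ∏_{p ∈ P} p) = 1} ≤ X · ∏_{p ∈ P}(1 - g p) · e^E + R`. -/
theorem brun_hooley_upper
    (A : Finset ℕ) (hA : ∀ a ∈ A, 0 < a)
    (P : Finset ℕ) (hP : ∀ p ∈ P, Nat.Prime p)
    (X : ℝ) (hX : 0 < X)
    (g : ℕ → ℝ) (hg1 : g 1 = 1)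
    (hgmult : ∀ m n : ℕ, Nat.Coprime m n → g (m * n) = g m * g n)
    (hgP : ∀ p ∈ P, 0 < g p ∧ g p < 1)
    (hgP' : ∀ p : ℕ, p.Prime → p ∉ P → g p = 0)
    (r : ℕ → ℝ)
    (hAd : ∀ d : ℕ, d ∣ ∏ p ∈ P, p →
      ((A.filter (fun a => d ∣ a)).card : ℝ) = X * g d + r d)
    (t : ℕ) (Pj : Fin t → Finset ℕ)
    (hdisj : ∀ i j : Fin t, i ≠ j → Disjoint (Pj i) (Pj j))
    (hunion : Finset.univ.biUnion Pj = P)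
    (k : Fin t → ℕ) (hkeven : ∀ j, Even (k j)) (hkpos : ∀ j, 0 < k j)
    (E R : ℝ)
    (hE : E = ∑ j : Fin t,
      Real.exp (Real.log (∏ p ∈ Pj j, (1 - g p))⁻¹) *
        (Real.log (∏ p ∈ Pj j, (1 - g p))⁻¹) ^ (k j + 1) /
          (Nat.factorial (k j + 1)))
    (hR : R = ∑ d ∈ Fintype.piFinset (fun j : Fin t =>
        (∏ p ∈ Pj j, p).divisors.filter (fun m => m.primeFactors.card ≤ k j)),
      |r (∏ j : Fin t, d j)|) :
    ((A.filter (fun a => Nat.Coprime a (∏ p ∈ P, p))).card : ℝ) ≤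
      X * (∏ p ∈ P, (1 - g p)) * Real.exp E + R := by
  classical
  have hPjP : ∀ j, Pj j ⊆ P := fun j =>
    hunion ▸ Finset.subset_biUnion_of_mem Pj (Finset.mem_univ j)
  have hPjprime : ∀ j : Fin t, ∀ p ∈ Pj j, Nat.Prime p := fun j p hp => hP p (hPjP j hp)
  -- the truncated sieve weights
  set D : Fin t → Finset (Finset ℕ) :=
    fun j => (Pj j).powerset.filter (fun T => T.card ≤ k j) with hD
  set σ : Fin t → ℕ → ℝ :=
    fun j a => ∑ T ∈ D j, (-1:ℝ)^T.card * (if (∏ p ∈ T, p) ∣ a then 1 else 0) with hσ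
  -- Step 1 : σ as a sum over subsets of the primes dividing a
  have hσ_eq : ∀ (j : Fin t) (a : ℕ), σ j a
      = ∑ T ∈ ((Pj j).filter (· ∣ a)).powerset.filter (fun T => T.card ≤ k j),
          (-1:ℝ)^T.card := by
    intro j a
    have h1 : σ j a = ∑ T ∈ (D j).filter (fun T => (∏ p ∈ T, p) ∣ a), (-1:ℝ)^T.card := by
      calc σ j a = ∑ T ∈ D j, (if (∏ p ∈ T, p) ∣ a then (-1:ℝ)^T.card else 0) := by
            rw [hσ]
            exact Finset.sum_congr rfl fun T _ => by split <;> simp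
        _ = ∑ T ∈ (D j).filter (fun T => (∏ p ∈ T, p) ∣ a), (-1:ℝ)^T.card :=
            (Finset.sum_filter _ _).symm
    have h2 : (D j).filter (fun T => (∏ p ∈ T, p) ∣ a)
        = ((Pj j).filter (· ∣ a)).powerset.filter (fun T => T.card ≤ k j) := by
      ext T
      simp only [hD, Finset.mem_filter, Finset.mem_powerset]
      constructor
      · rintro ⟨⟨hTP, hTk⟩, hdvd⟩
        refine ⟨fun p hp => Finset.mem_filter.mpr
          ⟨hTP hp, (Finset.dvd_prod_of_mem _ hp).trans hdvd⟩, hTk⟩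
      · rintro ⟨hTF, hTk⟩
        have hTP : T ⊆ Pj j := fun p hp => (Finset.mem_filter.mp (hTF hp)).1
        refine ⟨⟨hTP, hTk⟩, ?_⟩
        rw [aux_prod_primes_dvd_iff T (fun p hp => hPjprime j p (hTP hp)) a]
        exact fun p hp => (Finset.mem_filter.mp (hTF hp)).2
      
    rw [h1, h2]
  -- Step 2 : pointwise lower bound
  have hσ_ge : ∀ (a : ℕ) (j : Fin t),
      (if ((Pj j).filter (· ∣ a)) = ∅ then (1:ℝ) else 0) ≤ σ j a := by
    intro a j
    rw [hσ_eq]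
    exact aux_bonf_lower _ _ (hkeven j)
  have hpoint : ∀ a ∈ A,
      (if Nat.Coprime a (∏ p ∈ P, p) then (1:ℝ) else 0) ≤ ∏ j, σ j a := by
    intro a _
    by_cases hc : Nat.Coprime a (∏ p ∈ P, p)
    · rw [if_pos hc]
      have hone : ∀ j : Fin t, (1:ℝ) ≤ σ j a := ?_
      · calc (1:ℝ) = ∏ _j : Fin t, (1:ℝ) := by simp
          _ ≤ ∏ j, σ j a :=
            Finset.prod_le_prod (fun j _ => zero_le_one) (fun j _ => hone j)
      intro j
      have hempty : (Pj j).filter (· ∣ a) = ∅ := by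
        rw [Finset.filter_eq_empty_iff]
        intro p hp hdvd
        have hpP : p ∣ ∏ q ∈ P, q := Finset.dvd_prod_of_mem _ (hPjP j hp)
        have h1 : p ∣ Nat.gcd a (∏ q ∈ P, q) := Nat.dvd_gcd hdvd hpP
        rw [Nat.Coprime] at hc
        rw [hc] at h1
        exact (hPjprime j p hp).ne_one (Nat.dvd_one.mp h1)
      have := hσ_ge a j
      rw [hempty] at this
      simpa using this
    · rw [if_neg hc]
      refine Finset.prod_nonneg fun j _ => le_trans ?_ (hσ_ge a j)
      split <;> norm_num
  -- Step 3 : counting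
  have main1 : ((A.filter (fun a => Nat.Coprime a (∏ p ∈ P, p))).card : ℝ)
      ≤ ∑ a ∈ A, ∏ j, σ j a := by
    rw [← Finset.sum_boole]
    exact Finset.sum_le_sum hpoint
  -- data for tuples
  set dd : (Fin t → Finset ℕ) → ℕ := fun τ => ∏ j, ∏ p ∈ τ j, p with hdd
  have hτsub : ∀ τ ∈ Fintype.piFinset D, ∀ j, τ j ⊆ Pj j := by
    intro τ hτ j
    have := (Fintype.mem_piFinset.mp hτ) j
    rw [hD] at this
    exact Finset.mem_powerset.mp (Finset.mem_filter.mp this).1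
  have hτdisj : ∀ τ ∈ Fintype.piFinset D, ∀ i ∈ (Finset.univ : Finset (Fin t)),
      ∀ j ∈ (Finset.univ : Finset (Fin t)), i ≠ j → Disjoint (τ i) (τ j) :=
    fun τ hτ i _ j _ hij => (hdisj i j hij).mono (hτsub τ hτ i) (hτsub τ hτ j)
  have hdd2 : ∀ τ ∈ Fintype.piFinset D, dd τ = ∏ p ∈ Finset.univ.biUnion τ, p :=
    fun τ hτ => (Finset.prod_biUnion (hτdisj τ hτ)).symm
  have hddprimes : ∀ τ ∈ Fintype.piFinset D, ∀ p ∈ Finset.univ.biUnion τ, Nat.Prime p := by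
    intro τ hτ p hp
    obtain ⟨j, _, hj⟩ := Finset.mem_biUnion.mp hp
    exact hPjprime j p (hτsub τ hτ j hj)
  have hdddvd : ∀ τ ∈ Fintype.piFinset D, dd τ ∣ ∏ p ∈ P, p := by
    intro τ hτ
    rw [hdd2 τ hτ]
    refine Finset.prod_dvd_prod_of_subset _ _ _ ?_
    intro p hp
    obtain ⟨j, _, hj⟩ := Finset.mem_biUnion.mp hp
    exact hPjP j (hτsub τ hτ j hj)
  -- Step 4 : expand the product of sieve weights
  have hswap : ∑ a ∈ A, ∏ j, σ j a
      = ∑ τ ∈ Fintype.piFinset D,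
          (∏ j, (-1:ℝ)^(τ j).card) * ((A.filter (fun a => dd τ ∣ a)).card : ℝ) := by
    have h1 : ∀ a, ∏ j, σ j a = ∑ τ ∈ Fintype.piFinset D,
        ∏ j, ((-1:ℝ)^(τ j).card * (if (∏ p ∈ τ j, p) ∣ a then 1 else 0)) := by
      intro a
      rw [hσ]
      exact Finset.prod_univ_sum D _
    rw [Finset.sum_congr rfl fun a _ => h1 a, Finset.sum_comm]
    refine Finset.sum_congr rfl fun τ hτ => ?_
    have hdvd_iff : ∀ a : ℕ, dd τ ∣ a ↔ ∀ j, (∏ p ∈ τ j, p) ∣ a := by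
      intro a
      rw [hdd2 τ hτ, aux_prod_primes_dvd_iff _ (hddprimes τ hτ) a]
      constructor
      · intro h j
        rw [aux_prod_primes_dvd_iff _ (fun p hp => hPjprime j p (hτsub τ hτ j hp)) a]
        exact fun p hp => h p (Finset.mem_biUnion.mpr ⟨j, Finset.mem_univ j, hp⟩)
      · intro h p hp
        obtain ⟨j, _, hj⟩ := Finset.mem_biUnion.mp hp
        exact (Finset.dvd_prod_of_mem _ hj).trans (h j)
    have h2 : ∀ a : ℕ, ∏ j, ((-1:ℝ)^(τ j).card * (if (∏ p ∈ τ j, p) ∣ a then 1 else 0))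
        = (∏ j, (-1:ℝ)^(τ j).card) * (if dd τ ∣ a then 1 else 0) := by
      intro a
      rw [Finset.prod_mul_distrib, Fintype.prod_boole]
      by_cases h : dd τ ∣ a
      · rw [if_pos h, if_pos (fun i => (hdvd_iff a).mp h i)]
      · rw [if_neg h, if_neg (fun hall => h ((hdvd_iff a).mpr hall))]
    rw [Finset.sum_congr rfl fun a _ => h2 a, ← Finset.mul_sum, Finset.sum_boole]
  -- Step 5 : main/error split
  set M : ℝ := ∑ τ ∈ Fintype.piFinset D, (∏ j, (-1:ℝ)^(τ j).card) * g (dd τ) with hM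
  set ρ : ℝ := ∑ τ ∈ Fintype.piFinset D, (∏ j, (-1:ℝ)^(τ j).card) * r (dd τ) with hρ
  have main2 : ∑ τ ∈ Fintype.piFinset D,
      (∏ j, (-1:ℝ)^(τ j).card) * ((A.filter (fun a => dd τ ∣ a)).card : ℝ)
      = X * M + ρ := by
    rw [hM, hρ, Finset.mul_sum, ← Finset.sum_add_distrib]
    refine Finset.sum_congr rfl fun τ hτ => ?_
    rw [hAd (dd τ) (hdddvd τ hτ)]
    ring
  -- Step 6 : error bound
  have hρR : ρ ≤ R := by
    rw [hρ, hR]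
    have habs : ∀ τ ∈ Fintype.piFinset D,
        (∏ j, (-1:ℝ)^(τ j).card) * r (dd τ) ≤ |r (dd τ)| := by
      intro τ _
      calc (∏ j, (-1:ℝ)^(τ j).card) * r (dd τ) ≤ |(∏ j, (-1:ℝ)^(τ j).card) * r (dd τ)| :=
            le_abs_self _
        _ = |r (dd τ)| := by
            rw [abs_mul, Finset.abs_prod]
            simp
    refine le_trans (Finset.sum_le_sum habs) (le_of_eq ?_)
    refine Finset.sum_nbij' (fun τ => fun j => ∏ p ∈ τ j, p)
      (fun d => fun j => (d j).primeFactors) ?_ ?_ ?_ ?_ ?_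
    · intro τ hτ
      rw [Fintype.mem_piFinset]
      intro j
      have hprimes : ∀ p ∈ τ j, Nat.Prime p := fun p hp => hPjprime j p (hτsub τ hτ j hp)
      have hNj : (∏ p ∈ Pj j, p) ≠ 0 :=
        (Finset.prod_pos fun p hp => (hPjprime j p hp).pos).ne'
      rw [Finset.mem_filter, Nat.mem_divisors]
      refine ⟨⟨Finset.prod_dvd_prod_of_subset _ _ _ (hτsub τ hτ j), hNj⟩, ?_⟩
      rw [Nat.primeFactors_prod hprimes]
      have := (Fintype.mem_piFinset.mp hτ) j
      rw [hD, Finset.mem_filter] at this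
      exact this.2
    · intro d hd
      rw [Fintype.mem_piFinset]
      intro j
      have hdj := (Fintype.mem_piFinset.mp hd) j
      rw [Finset.mem_filter, Nat.mem_divisors] at hdj
      rw [hD, Finset.mem_filter, Finset.mem_powerset]
      constructor
      · have := Nat.primeFactors_mono hdj.1.1 hdj.1.2
        rwa [Nat.primeFactors_prod (hPjprime j)] at this
      · exact hdj.2
    · intro τ hτ
      funext j
      exact Nat.primeFactors_prod (fun p hp => hPjprime j p (hτsub τ hτ j hp))
    · intro d hd
      funext j
      have hdj := (Fintype.mem_piFinset.mp hd) j
      rw [Finset.mem_filter, Nat.mem_divisors] at hdj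
      exact Nat.prod_primeFactors_of_squarefree
        ((aux_squarefree_prod (Pj j) (hPjprime j)).squarefree_of_dvd hdj.1.1)
    · intro τ _
      rfl
  -- Step 7 : factor the main term
  have hM_eq : M = ∏ j, ∑ T ∈ D j, ((-1:ℝ)^T.card * ∏ p ∈ T, g p) := by
    rw [hM, Finset.prod_univ_sum]
    refine Finset.sum_congr rfl fun τ hτ => ?_
    have hgdd : g (dd τ) = ∏ j, ∏ p ∈ τ j, g p := by
      rw [hdd2 τ hτ, aux_gprod g hg1 hgmult _ (hddprimes τ hτ),
        Finset.prod_biUnion (hτdisj τ hτ)]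
    rw [Finset.prod_mul_distrib, hgdd]
  -- Step 8 : bound each factor
  have hVpos : ∀ j, (0:ℝ) < ∏ p ∈ Pj j, (1 - g p) := by
    intro j
    refine Finset.prod_pos fun p hp => ?_
    have := (hgP p (hPjP j hp)).2
    linarith
  have hgnn : ∀ j : Fin t, ∀ p ∈ Pj j, 0 ≤ g p ∧ g p ≤ 1 := by
    intro j p hp
    have h := hgP p (hPjP j hp)
    exact ⟨h.1.le, h.2.le⟩
  have hLsum : ∀ j, ∑ p ∈ Pj j, g p ≤ Real.log (∏ p ∈ Pj j, (1 - g p))⁻¹ := by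
    intro j
    rw [Real.log_inv, Real.log_prod (fun p hp => by
      have := (hgP p (hPjP j hp)).2; intro h; linarith [h ▸ (by linarith : (0:ℝ) < 1 - g p)])]
    rw [← Finset.sum_neg_distrib]
    refine Finset.sum_le_sum fun p hp => ?_
    have h1 := (hgP p (hPjP j hp)).1
    have h2 := (hgP p (hPjP j hp)).2
    have := Real.log_le_sub_one_of_pos (by linarith : (0:ℝ) < 1 - g p)
    linarith
  have hLnn : ∀ j, (0:ℝ) ≤ Real.log (∏ p ∈ Pj j, (1 - g p))⁻¹ := by
    intro j
    refine le_trans (Finset.sum_nonneg fun p hp => (hgnn j p hp).1) (hLsum j)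
  have hTub : ∀ j : Fin t,
      ∑ T ∈ D j, ((-1:ℝ)^T.card * ∏ p ∈ T, g p)
        ≤ (∏ p ∈ Pj j, (1 - g p)) *
          Real.exp (Real.exp (Real.log (∏ p ∈ Pj j, (1 - g p))⁻¹) *
            (Real.log (∏ p ∈ Pj j, (1 - g p))⁻¹) ^ (k j + 1) / (Nat.factorial (k j + 1))) := by
    intro j
    set V : ℝ := ∏ p ∈ Pj j, (1 - g p) with hV
    set L : ℝ := Real.log V⁻¹ with hLdef
    set m : ℕ := k j + 1 with hm
    have htail : ∑ T ∈ (Pj j).powersetCard m, ∏ p ∈ T, g p ≤ L ^ m / (m.factorial : ℝ) := by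
      rw [le_div_iff₀ (by positivity : (0:ℝ) < (m.factorial : ℝ))]
      calc (∑ T ∈ (Pj j).powersetCard m, ∏ p ∈ T, g p) * (m.factorial : ℝ)
          = (m.factorial : ℝ) * ∑ T ∈ (Pj j).powersetCard m, ∏ p ∈ T, g p := by ring
        _ ≤ (∑ p ∈ Pj j, g p) ^ m :=
            aux_esymm (Pj j) g (fun p hp => (hgnn j p hp).1) m
        _ ≤ L ^ m := by
            refine pow_le_pow_left₀ (Finset.sum_nonneg fun p hp => (hgnn j p hp).1)
              (hLsum j) m
    have hub := (aux_trunc_bounds (Pj j) g (hgnn j) (k j) (hkeven j)).2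
    have hVinv : V⁻¹ = Real.exp L := by
      rw [hLdef, Real.exp_log (inv_pos.mpr (hVpos j))]
    calc ∑ T ∈ D j, ((-1:ℝ)^T.card * ∏ p ∈ T, g p)
        ≤ V + ∑ T ∈ (Pj j).powersetCard m, ∏ p ∈ T, g p := hub
      _ ≤ V + L ^ m / (m.factorial : ℝ) := by linarith
      _ = V * (1 + Real.exp L * L ^ m / (m.factorial : ℝ)) := by
          rw [← hVinv]
          have hV0 : V ≠ 0 := (hVpos j).ne'
          field_simp
      _ ≤ V * Real.exp (Real.exp L * L ^ m / (m.factorial : ℝ)) := by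
          refine mul_le_mul_of_nonneg_left ?_ (hVpos j).le
          have := Real.add_one_le_exp (Real.exp L * L ^ m / (m.factorial : ℝ))
          linarith
  have hTlb : ∀ j : Fin t, (∏ p ∈ Pj j, (1 - g p))
      ≤ ∑ T ∈ D j, ((-1:ℝ)^T.card * ∏ p ∈ T, g p) :=
    fun j => (aux_trunc_bounds (Pj j) g (hgnn j) (k j) (hkeven j)).1
  -- Step 9 : product bound
  have hMle : M ≤ (∏ p ∈ P, (1 - g p)) * Real.exp E := by
    rw [hM_eq]
    have h1 : ∏ j, (∑ T ∈ D j, ((-1:ℝ)^T.card * ∏ p ∈ T, g p))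
        ≤ ∏ j, ((∏ p ∈ Pj j, (1 - g p)) *
          Real.exp (Real.exp (Real.log (∏ p ∈ Pj j, (1 - g p))⁻¹) *
            (Real.log (∏ p ∈ Pj j, (1 - g p))⁻¹) ^ (k j + 1) / (Nat.factorial (k j + 1)))) :=
      Finset.prod_le_prod (fun j _ => le_trans (hVpos j).le (hTlb j)) (fun j _ => hTub j)
    refine h1.trans (le_of_eq ?_)
    rw [Finset.prod_mul_distrib, ← Real.exp_sum, ← hE]
    congr 1
    rw [← hunion, Finset.prod_biUnion (fun i _ j _ hij => hdisj i j hij)]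
  -- Final assembly
  calc ((A.filter (fun a => Nat.Coprime a (∏ p ∈ P, p))).card : ℝ)
      ≤ ∑ a ∈ A, ∏ j, σ j a := main1
    _ = X * M + ρ := by rw [hswap, main2]
    _ ≤ X * ((∏ p ∈ P, (1 - g p)) * Real.exp E) + R :=
        add_le_add (mul_le_mul_of_nonneg_left hMle hX.le) hρR
    _ = X * (∏ p ∈ P, (1 - g p)) * Real.exp E + R := by ring
end

section
/- (Brun–Hooley sieve, lower bound.) Let 𝒜 be a finite set of positive integers and 𝒫 a finite set of primes, and set P = Π_{p ∈ 𝒫} p and S(𝒜,𝒫) = #{a ∈ 𝒜 : gcd(a,P) = 1}. Suppose that for every d | P one has A_d := #{a ∈ 𝒜 : d | a} = X·g(d) + r_d, where X > 0 and g is a multiplicative function with 0 < g(p) < 1 for p ∈ 𝒫 and g(p) = 0 for p ∉ 𝒫. Let 𝒫 = 𝒫₁ ∪ ⋯ ∪ 𝒫_t be a partition of 𝒫 into disjoint subsets, let P_j = Π_{p ∈ 𝒫_j} p, let k₁,…,k_t be even positive integers, let V_j = Π_{p ∈ 𝒫_j}(1 − g(p)), L_j = log(V_j^{-1}), E = Σ_{j=1}^{t}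 e^{L_j} L_j^{k_j+1}/(k_j+1)!, R = Σ |r_{d₁⋯d_t}| over tuples (d₁,…,d_t) with d_j | P_j and ω(d_j) ≤ k_j for all j, and R' = Σ_{l=1}^{t} Σ |r_{d₁⋯d_t}| over tuples with d_j | P_j, ω(d_j) ≤ k_j for j ≠ l, and ω(d_l) = k_l + 1. Then S(𝒜,𝒫) ≥ X·Π_{p ∈ 𝒫}(1 − g(p))·(1 − E) − R − R'. -/
open Finset


noncomputable def BHSk (w : ℕ → ℝ) (T : Finset ℕ) (k : ℕ) : ℝ :=
  ∑ S ∈ T.powerset.filter (fun S => S.card ≤ k), (-1:ℝ)^S.card * ∏ p ∈ S, w p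

noncomputable def BHEk (w : ℕ → ℝ) (T : Finset ℕ) (m : ℕ) : ℝ :=
  ∑ S ∈ T.powerset.filter (fun S => S.card = m), ∏ p ∈ S, w p

lemma BHSk_zero (w : ℕ → ℝ) (T : Finset ℕ) : BHSk w T 0 = 1 := by
  unfold BHSk
  rw [Finset.sum_filter]
  rw [Finset.sum_eq_single (∅ : Finset ℕ)]
  · simp
  · intro S hS hne
    rw [if_neg]
    simp only [Nat.le_zero, Finset.card_eq_zero]
    exact hne
  · simp

lemma BHEk_zero (w : ℕ → ℝ) (T : Finset ℕ) : BHEk w T 0 = 1 := by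
  unfold BHEk
  rw [Finset.sum_filter]
  rw [Finset.sum_eq_single (∅ : Finset ℕ)]
  · simp
  · intro S hS hne
    rw [if_neg]
    simpa only [Finset.card_eq_zero] using hne
  · simp

lemma BHSk_insert (w : ℕ → ℝ) {a : ℕ} {T : Finset ℕ} (ha : a ∉ T) (k : ℕ) :
    BHSk w (insert a T) (k+1) = BHSk w T (k+1) - w a * BHSk w T k := by
  unfold BHSk
  simp only [Finset.sum_filter]
  rw [Finset.sum_powerset_insert ha]
  have h2 : ∀ S ∈ T.powerset,
      (if (insert a S).card ≤ k + 1 then (-1:ℝ)^(insert a S).card * ∏ p ∈ insert a S, w p else 0)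
      = -(w a * if S.card ≤ k then (-1:ℝ)^S.card * ∏ p ∈ S, w p else 0) := by
    intro S hS
    have haS : a ∉ S := fun h => ha (Finset.mem_powerset.mp hS h)
    rw [Finset.card_insert_of_notMem haS, Finset.prod_insert haS]
    by_cases h : S.card ≤ k
    · rw [if_pos (by omega), if_pos h, pow_succ]
      ring
    · rw [if_neg (by omega), if_neg h]
      ring
  rw [Finset.sum_congr rfl h2, Finset.sum_neg_distrib, ← Finset.mul_sum]
  ring

lemma BHEk_insert (w : ℕ → ℝ) {a : ℕ} {T : Finset ℕ} (ha : a ∉ T) (m : ℕ) :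
    BHEk w (insert a T) (m+1) = BHEk w T (m+1) + w a * BHEk w T m := by
  unfold BHEk
  simp only [Finset.sum_filter]
  rw [Finset.sum_powerset_insert ha]
  have h2 : ∀ S ∈ T.powerset,
      (if (insert a S).card = m + 1 then ∏ p ∈ insert a S, w p else 0)
      = w a * if S.card = m then ∏ p ∈ S, w p else 0 := by
    intro S hS
    have haS : a ∉ S := fun h => ha (Finset.mem_powerset.mp hS h)
    rw [Finset.card_insert_of_notMem haS, Finset.prod_insert haS]
    by_cases h : S.card = m
    · rw [if_pos (by omega), if_pos h]
    · rw [if_neg (by omega), if_neg h, mul_zero]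
  rw [Finset.sum_congr rfl h2, ← Finset.mul_sum]


lemma BH_prod_mem01 (w : ℕ → ℝ) (T : Finset ℕ) (hw : ∀ p ∈ T, 0 ≤ w p ∧ w p ≤ 1) :
    0 ≤ ∏ p ∈ T, (1 - w p) ∧ ∏ p ∈ T, (1 - w p) ≤ 1 := by
  constructor
  · exact Finset.prod_nonneg fun p hp => by linarith [(hw p hp).2]
  · exact Finset.prod_le_one (fun p hp => by linarith [(hw p hp).2])
      (fun p hp => by linarith [(hw p hp).1])

lemma BH_bonferroni (w : ℕ → ℝ) (T : Finset ℕ) (hw : ∀ p ∈ T, 0 ≤ w p ∧ w p ≤ 1) :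
    ∀ k : ℕ, 0 ≤ (-1:ℝ)^k * (BHSk w T k - ∏ p ∈ T, (1 - w p)) ∧
      (-1:ℝ)^k * (BHSk w T k - ∏ p ∈ T, (1 - w p)) ≤ BHEk w T (k+1) := by
  revert hw
  induction T using Finset.induction_on with
  | empty =>
    intro _ k
    have h1 : BHSk w ∅ k = 1 := by
      unfold BHSk
      simp [Finset.powerset_empty, Finset.filter_singleton]
    have h2 : BHEk w ∅ (k+1) = 0 := by
      unfold BHEk
      simp [Finset.powerset_empty, Finset.filter_singleton]
    rw [h1, h2]
    simp
  | @insert a T ha ih =>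
    intro hw
    have hwT : ∀ p ∈ T, 0 ≤ w p ∧ w p ≤ 1 := fun p hp => hw p (Finset.mem_insert_of_mem hp)
    have hwa := hw a (Finset.mem_insert_self a T)
    have hV := BH_prod_mem01 w T hwT
    have hVins : ∏ p ∈ insert a T, (1 - w p) = (1 - w a) * ∏ p ∈ T, (1 - w p) :=
      Finset.prod_insert ha
    replace ih := ih hwT
    intro k
    match k with
    | 0 =>
      rw [BHSk_zero, pow_zero, hVins, one_mul]
      obtain ⟨ih01, ih02⟩ := ih 0
      rw [BHSk_zero, pow_zero, one_mul] at ih01 ih02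
      rw [BHEk_insert w ha 0, BHEk_zero]
      constructor
      · nlinarith [hV.1, hV.2, hwa.1, hwa.2]
      · nlinarith [hV.1, hV.2, hwa.1, hwa.2]
    | (k+1) =>
      obtain ⟨ih11, ih12⟩ := ih (k+1)
      obtain ⟨ih01, ih02⟩ := ih k
      rw [BHSk_insert w ha, BHEk_insert w ha, hVins]
      have hsgn : (-1:ℝ)^(k+1) = -(-1:ℝ)^k := by rw [pow_succ]; ring
      rw [hsgn] at ih11 ih12 ⊢
      constructor
      · nlinarith [hV.1, hV.2, hwa.1, hwa.2]
      · nlinarith [hV.1, hV.2, hwa.1, hwa.2]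


lemma BH_pow_add_le (x c : ℝ) (hx : 0 ≤ x) (hc : 0 ≤ c) (n : ℕ) :
    x^(n+1) + (n+1) * c * x^n ≤ (c + x)^(n+1) := by
  induction n with
  | zero => simp; nlinarith
  | succ n ih =>
    have hcx : (0:ℝ) ≤ c + x := by linarith
    have h1 : (c+x)^(n+2) = (c+x) * (c+x)^(n+1) := by ring
    have h2 : (c+x) * (x^(n+1) + (n+1) * c * x^n) ≤ (c+x) * (c+x)^(n+1) :=
      mul_le_mul_of_nonneg_left ih hcx
    have h3 : x^(n+2) + ((n:ℝ)+2) * c * x^(n+1) ≤ (c+x) * (x^(n+1) + (n+1) * c * x^n) := by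
      have he : (c+x) * (x^(n+1) + ((n:ℝ)+1) * c * x^n)
          = x^(n+2) + ((n:ℝ)+2) * c * x^(n+1) + ((n:ℝ)+1) * c^2 * x^n := by ring
      nlinarith [mul_nonneg (mul_nonneg (by positivity : (0:ℝ) ≤ (n:ℝ)+1) (sq_nonneg c)) (pow_nonneg hx n)]
    have hgoal : x^(n+2) + ((n:ℝ)+2) * c * x^(n+1) ≤ (c+x)^(n+2) := by
      calc x^(n+2) + ((n:ℝ)+2) * c * x^(n+1)
          ≤ (c+x) * (x^(n+1) + (n+1) * c * x^n) := h3
        _ = (c+x) * (c+x)^(n+1) - (c+x) * ((c+x)^(n+1) - (x^(n+1) + (n+1) * c * x^n)) := by ring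
        _ ≤ (c+x)^(n+2) := by nlinarith [mul_le_mul_of_nonneg_left ih hcx]
    push_cast
    rw [show n+1+1 = n+2 from rfl]
    linarith [hgoal]

lemma BHEk_nonneg (w : ℕ → ℝ) (T : Finset ℕ) (hw : ∀ p ∈ T, 0 ≤ w p) (m : ℕ) :
    0 ≤ BHEk w T m := by
  apply Finset.sum_nonneg
  intro S hS
  exact Finset.prod_nonneg fun p hp => hw p (Finset.mem_powerset.mp (Finset.mem_filter.mp hS).1 hp)

lemma BHEk_le (w : ℕ → ℝ) (T : Finset ℕ) (hw : ∀ p ∈ T, 0 ≤ w p) :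
    ∀ m : ℕ, BHEk w T m * (Nat.factorial m) ≤ (∑ p ∈ T, w p)^m := by
  revert hw
  induction T using Finset.induction_on with
  | empty =>
    intro _ m
    match m with
    | 0 => rw [BHEk_zero]; simp
    | (m+1) =>
      have : BHEk w ∅ (m+1) = 0 := by
        unfold BHEk
        simp [Finset.powerset_empty, Finset.filter_singleton]
      rw [this]
      simp
  | @insert a T ha ih =>
    intro hw
    have hwT : ∀ p ∈ T, 0 ≤ w p := fun p hp => hw p (Finset.mem_insert_of_mem hp)
    have hwa := hw a (Finset.mem_insert_self a T)
    replace ih := ih hwT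
    intro m
    match m with
    | 0 => rw [BHEk_zero]; simp
    | (m+1) =>
      rw [BHEk_insert w ha, Finset.sum_insert ha]
      have hsum : 0 ≤ ∑ p ∈ T, w p := Finset.sum_nonneg fun p hp => hwT p hp
      have h1 := ih (m+1)
      have h2 := ih m
      have hfac : (Nat.factorial (m+1) : ℝ) = ((m:ℝ)+1) * (Nat.factorial m) := by
        rw [Nat.factorial_succ]; push_cast; ring
      have key := BH_pow_add_le (∑ p ∈ T, w p) (w a) hsum hwa m
      have hE1 : 0 ≤ BHEk w T m := BHEk_nonneg w T hwT m
      have hfacpos : (0:ℝ) < (Nat.factorial m : ℝ) := by positivity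
      calc (BHEk w T (m+1) + w a * BHEk w T m) * (Nat.factorial (m+1))
          = BHEk w T (m+1) * (Nat.factorial (m+1))
            + ((m:ℝ)+1) * w a * (BHEk w T m * (Nat.factorial m)) := by rw [hfac]; ring
        _ ≤ (∑ p ∈ T, w p)^(m+1) + ((m:ℝ)+1) * w a * (∑ p ∈ T, w p)^m := by
            have := mul_le_mul_of_nonneg_left h2 (by positivity : (0:ℝ) ≤ ((m:ℝ)+1) * w a)
            linarith
        _ ≤ (w a + ∑ p ∈ T, w p)^(m+1) := by
            exact key


lemma BH_prod_sub_prod {ι : Type*} [DecidableEq ι] (s : Finset ι) (f g : ι → ℝ)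
    (h0 : ∀ i ∈ s, 0 ≤ g i) (h1 : ∀ i ∈ s, g i ≤ f i) :
    ∏ i ∈ s, f i - ∏ i ∈ s, g i ≤ ∑ i ∈ s, (f i - g i) * ∏ j ∈ s.erase i, f j := by
  induction s using Finset.induction_on with
  | empty => simp
  | @insert a s ha ih =>
    have h0s : ∀ i ∈ s, 0 ≤ g i := fun i hi => h0 i (Finset.mem_insert_of_mem hi)
    have h1s : ∀ i ∈ s, g i ≤ f i := fun i hi => h1 i (Finset.mem_insert_of_mem hi)
    have h0a := h0 a (Finset.mem_insert_self a s)
    have h1a := h1 a (Finset.mem_insert_self a s)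
    have hfa : 0 ≤ f a := le_trans h0a h1a
    have hprodle : ∏ i ∈ s, g i ≤ ∏ i ∈ s, f i := Finset.prod_le_prod h0s h1s
    have hprodg : 0 ≤ ∏ i ∈ s, g i := Finset.prod_nonneg h0s
    rw [Finset.prod_insert ha, Finset.prod_insert ha, Finset.sum_insert ha,
      Finset.erase_insert ha]
    have hsum : ∀ i ∈ s, (f i - g i) * ∏ j ∈ (insert a s).erase i, f j
        = f a * ((f i - g i) * ∏ j ∈ s.erase i, f j) := by
      intro i hi
      have hia : i ≠ a := fun h => ha (h ▸ hi)
      rw [Finset.erase_insert_of_ne hia.symm, Finset.prod_insert (fun h => ha (Finset.mem_of_mem_erase h))]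
      ring
    rw [Finset.sum_congr rfl hsum, ← Finset.mul_sum]
    have := mul_le_mul_of_nonneg_left (ih h0s h1s) hfa
    nlinarith [mul_le_mul_of_nonneg_left hprodle (by linarith : (0:ℝ) ≤ f a - g a)]

lemma BH_mult_prod (g : ℕ → ℝ) (hg1 : g 1 = 1)
    (hgmult : ∀ m n : ℕ, Nat.Coprime m n → g (m * n) = g m * g n)
    {ι : Type*} [DecidableEq ι] (s : Finset ι) (f : ι → ℕ)
    (hcop : ∀ i ∈ s, ∀ j ∈ s, i ≠ j → Nat.Coprime (f i) (f j)) :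
    g (∏ i ∈ s, f i) = ∏ i ∈ s, g (f i) := by
  induction s using Finset.induction_on with
  | empty => simpa using hg1
  | @insert a s ha ih =>
    rw [Finset.prod_insert ha, Finset.prod_insert ha]
    have hcops : ∀ i ∈ s, ∀ j ∈ s, i ≠ j → Nat.Coprime (f i) (f j) :=
      fun i hi j hj => hcop i (Finset.mem_insert_of_mem hi) j (Finset.mem_insert_of_mem hj)
    have hc : Nat.Coprime (f a) (∏ i ∈ s, f i) := by
      apply Nat.Coprime.prod_right
      intro i hi
      exact hcop a (Finset.mem_insert_self a s) i (Finset.mem_insert_of_mem hi)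
        (fun h => ha (h ▸ hi))
    rw [hgmult _ _ hc, ih hcops]

lemma BH_squarefree_prod {s : Finset ℕ} (hs : ∀ p ∈ s, p.Prime) :
    Squarefree (∏ p ∈ s, p) := by
  induction s using Finset.induction_on with
  | empty => simpa using squarefree_one
  | @insert a s ha ih =>
    rw [Finset.prod_insert ha]
    have hpa := hs a (Finset.mem_insert_self a s)
    have hss : ∀ p ∈ s, p.Prime := fun p hp => hs p (Finset.mem_insert_of_mem hp)
    rw [Nat.squarefree_mul_iff]
    refine ⟨?_, hpa.squarefree, ih hss⟩
    apply Nat.Coprime.prod_right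
    intro q hq
    exact (Nat.coprime_primes hpa (hss q hq)).mpr (fun h => ha (h ▸ hq))

lemma BH_prod_dvd {ι : Type*} [DecidableEq ι] (s : Finset ι) (f : ι → ℕ) (a : ℕ)
    (hcop : ∀ i ∈ s, ∀ j ∈ s, i ≠ j → Nat.Coprime (f i) (f j))
    (hdvd : ∀ i ∈ s, f i ∣ a) : (∏ i ∈ s, f i) ∣ a := by
  induction s using Finset.induction_on with
  | empty => simpa using one_dvd a
  | @insert b s hb ih =>
    rw [Finset.prod_insert hb]
    have hcops : ∀ i ∈ s, ∀ j ∈ s, i ≠ j → Nat.Coprime (f i) (f j) :=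
      fun i hi j hj => hcop i (Finset.mem_insert_of_mem hi) j (Finset.mem_insert_of_mem hj)
    have hc : Nat.Coprime (f b) (∏ i ∈ s, f i) := by
      apply Nat.Coprime.prod_right
      intro i hi
      exact hcop b (Finset.mem_insert_self b s) i (Finset.mem_insert_of_mem hi)
        (fun h => hb (h ▸ hi))
    exact hc.mul_dvd_of_dvd_of_dvd (hdvd b (Finset.mem_insert_self b s))
      (ih hcops (fun i hi => hdvd i (Finset.mem_insert_of_mem hi)))

lemma BH_prod_dvd_iff {s : Finset ℕ} (hs : ∀ p ∈ s, p.Prime) (a : ℕ) :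
    (∏ p ∈ s, p) ∣ a ↔ ∀ p ∈ s, p ∣ a := by
  constructor
  · intro h p hp
    exact dvd_trans (Finset.dvd_prod_of_mem _ hp) h
  · intro h
    exact BH_prod_dvd s id a (fun i hi j hj hij =>
      (Nat.coprime_primes (hs i hi) (hs j hj)).mpr hij) h


lemma BH_sum_tuple_bij {t : ℕ} (Pj : Fin t → Finset ℕ)
    (hP : ∀ j, ∀ p ∈ Pj j, p.Prime)
    (Q : Fin t → ℕ → Prop) [∀ j n, Decidable (Q j n)] (F : ℕ → ℝ) :
    ∑ S ∈ Fintype.piFinset (fun j => (Pj j).powerset.filter (fun s => Q j s.card)),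
      F (∏ j, ∏ p ∈ S j, p)
    = ∑ d ∈ Fintype.piFinset (fun j =>
        (∏ p ∈ Pj j, p).divisors.filter (fun m => Q j m.primeFactors.card)),
      F (∏ j, d j) := by
  have hNj : ∀ j, (∏ p ∈ Pj j, p) ≠ 0 := by
    intro j
    rw [Finset.prod_ne_zero_iff]
    exact fun p hp => (hP j p hp).ne_zero
  apply Finset.sum_nbij' (i := fun S j => ∏ p ∈ S j, p)
    (j := fun d j => (d j).primeFactors)
  · intro S hS
    rw [Fintype.mem_piFinset] at hS ⊢
    intro j
    obtain ⟨hsub, hQ⟩ := Finset.mem_filter.mp (hS j)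
    rw [Finset.mem_powerset] at hsub
    have hprimes : ∀ p ∈ S j, p.Prime := fun p hp => hP j p (hsub hp)
    rw [Finset.mem_filter, Nat.mem_divisors]
    refine ⟨⟨Finset.prod_dvd_prod_of_subset _ _ _ hsub, hNj j⟩, ?_⟩
    rw [Nat.primeFactors_prod hprimes]
    exact hQ
  · intro d hd
    rw [Fintype.mem_piFinset] at hd ⊢
    intro j
    obtain ⟨hdvd, hQ⟩ := Finset.mem_filter.mp (hd j)
    rw [Nat.mem_divisors] at hdvd
    rw [Finset.mem_filter, Finset.mem_powerset]
    constructor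
    · have := Nat.primeFactors_mono hdvd.1 (hNj j)
      rwa [Nat.primeFactors_prod (hP j)] at this
    · exact hQ
  · intro S hS
    rw [Fintype.mem_piFinset] at hS
    funext j
    obtain ⟨hsub, _⟩ := Finset.mem_filter.mp (hS j)
    rw [Finset.mem_powerset] at hsub
    exact Nat.primeFactors_prod (fun p hp => hP j p (hsub hp))
  · intro d hd
    rw [Fintype.mem_piFinset] at hd
    funext j
    obtain ⟨hdvd, _⟩ := Finset.mem_filter.mp (hd j)
    rw [Nat.mem_divisors] at hdvd
    exact Nat.prod_primeFactors_of_squarefree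
      ((BH_squarefree_prod (hP j)).squarefree_of_dvd hdvd.1)
  · intro S hS
    rfl


lemma BH_master {t : ℕ} (A : Finset ℕ) (P : Finset ℕ) (hP : ∀ p ∈ P, Nat.Prime p)
    (X : ℝ) (g : ℕ → ℝ) (hg1 : g 1 = 1)
    (hgmult : ∀ m n : ℕ, Nat.Coprime m n → g (m * n) = g m * g n)
    (r : ℕ → ℝ)
    (hAd : ∀ d : ℕ, d ∣ ∏ p ∈ P, p →
      ((A.filter (fun a => d ∣ a)).card : ℝ) = X * g d + r d)
    (Pj : Fin t → Finset ℕ) (hPjP : ∀ j, Pj j ⊆ P)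
    (hdisj : ∀ i j : Fin t, i ≠ j → Disjoint (Pj i) (Pj j))
    (C : Fin t → Finset (Finset ℕ)) (hC : ∀ j S, S ∈ C j → S ⊆ Pj j)
    (F : Fin t → Finset ℕ → ℝ) :
    ∑ a ∈ A, ∏ j, (∑ S ∈ C j, F j S * ∏ p ∈ S, (if p ∣ a then (1:ℝ) else 0))
    = X * ∏ j, (∑ S ∈ C j, F j S * ∏ p ∈ S, g p)
      + ∑ S ∈ Fintype.piFinset C, (∏ j, F j (S j)) * r (∏ j, ∏ p ∈ S j, p) := by
  have hprime : ∀ j, ∀ p ∈ Pj j, p.Prime := fun j p hp => hP p (hPjP j hp)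
  have hstep : ∀ S ∈ Fintype.piFinset C,
      ∑ a ∈ A, ∏ j, (F j (S j) * ∏ p ∈ S j, (if p ∣ a then (1:ℝ) else 0))
      = (∏ j, F j (S j)) * (X * ∏ j, ∏ p ∈ S j, g p + r (∏ j, ∏ p ∈ S j, p)) := by
    intro S hS
    rw [Fintype.mem_piFinset] at hS
    have hSsub : ∀ j, S j ⊆ Pj j := fun j => hC j (S j) (hS j)
    have hSprime : ∀ j, ∀ p ∈ S j, p.Prime := fun j p hp => hprime j p (hSsub j hp)
    have hpairs : ∀ i ∈ (univ : Finset (Fin t)), ∀ j ∈ (univ : Finset (Fin t)), i ≠ j →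
        Nat.Coprime (∏ p ∈ S i, p) (∏ p ∈ S j, p) := by
      intro i _ j _ hij
      rw [Nat.coprime_prod_left_iff]
      intro p hp
      rw [Nat.coprime_prod_right_iff]
      intro q hq
      refine (Nat.coprime_primes (hSprime i p hp) (hSprime j q hq)).mpr ?_
      intro hpq
      exact (Finset.disjoint_left.mp (hdisj i j hij)) (hSsub i hp) (hpq ▸ hSsub j hq)
    have hD : (∏ j, ∏ p ∈ S j, p) ∣ ∏ p ∈ P, p := by
      have h1 : (∏ j, ∏ p ∈ S j, p) ∣ ∏ j, ∏ p ∈ Pj j, p :=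
        Finset.prod_dvd_prod_of_dvd _ _ (fun j _ =>
          Finset.prod_dvd_prod_of_subset _ _ _ (hSsub j))
      have h2 : ∏ j, ∏ p ∈ Pj j, p = ∏ p ∈ Finset.univ.biUnion Pj, p :=
        (Finset.prod_biUnion (fun i _ j _ hij => hdisj i j hij)).symm
      have h3 : (∏ p ∈ Finset.univ.biUnion Pj, p) ∣ ∏ p ∈ P, p :=
        Finset.prod_dvd_prod_of_subset _ _ _ (fun p hp => by
          obtain ⟨j, _, hj⟩ := Finset.mem_biUnion.mp hp
          exact hPjP j hj)
      exact h1.trans (h2 ▸ h3)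
    have hind : ∀ a : ℕ, ∏ j, ∏ p ∈ S j, (if p ∣ a then (1:ℝ) else 0)
        = if (∏ j, ∏ p ∈ S j, p) ∣ a then (1:ℝ) else 0 := by
      intro a
      have h1 : ∀ j, ∏ p ∈ S j, (if p ∣ a then (1:ℝ) else 0)
          = if (∏ p ∈ S j, p) ∣ a then (1:ℝ) else 0 := by
        intro j
        rw [Finset.prod_boole]
        congr 1
        simp only [eq_iff_iff]
        exact (BH_prod_dvd_iff (hSprime j) a).symm
      rw [Finset.prod_congr rfl (fun j _ => h1 j), Finset.prod_boole]
      congr 1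
      simp only [eq_iff_iff]
      constructor
      · intro h
        exact BH_prod_dvd univ _ a hpairs (fun j _ => h j (Finset.mem_univ j))
      · intro h j _
        exact dvd_trans (Finset.dvd_prod_of_mem (fun j => ∏ p ∈ S j, p) (Finset.mem_univ j)) h
    have hcount : ∑ a ∈ A, (if (∏ j, ∏ p ∈ S j, p) ∣ a then (1:ℝ) else 0)
        = X * g (∏ j, ∏ p ∈ S j, p) + r (∏ j, ∏ p ∈ S j, p) := by
      rw [Finset.sum_boole]
      exact hAd _ hD
    have hgprod : g (∏ j, ∏ p ∈ S j, p) = ∏ j, ∏ p ∈ S j, g p := by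
      rw [BH_mult_prod g hg1 hgmult univ _ hpairs]
      exact Finset.prod_congr rfl (fun j _ => BH_mult_prod g hg1 hgmult (S j) id
        (fun i hi j' hj' hij => (Nat.coprime_primes (hSprime j i hi) (hSprime j j' hj')).mpr hij))
    calc ∑ a ∈ A, ∏ j, (F j (S j) * ∏ p ∈ S j, (if p ∣ a then (1:ℝ) else 0))
        = ∑ a ∈ A, (∏ j, F j (S j)) * ∏ j, ∏ p ∈ S j, (if p ∣ a then (1:ℝ) else 0) := by
          exact Finset.sum_congr rfl (fun a _ => Finset.prod_mul_distrib)
      _ = (∏ j, F j (S j)) * ∑ a ∈ A, (if (∏ j, ∏ p ∈ S j, p) ∣ a then (1:ℝ) else 0) := by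
          rw [Finset.mul_sum]
          exact Finset.sum_congr rfl (fun a _ => by rw [hind a])
      _ = (∏ j, F j (S j)) * (X * ∏ j, ∏ p ∈ S j, g p + r (∏ j, ∏ p ∈ S j, p)) := by
          rw [hcount, hgprod]
  calc ∑ a ∈ A, ∏ j, (∑ S ∈ C j, F j S * ∏ p ∈ S, (if p ∣ a then (1:ℝ) else 0))
      = ∑ a ∈ A, ∑ S ∈ Fintype.piFinset C,
          ∏ j, (F j (S j) * ∏ p ∈ S j, (if p ∣ a then (1:ℝ) else 0)) := by
        exact Finset.sum_congr rfl (fun a _ => Finset.prod_univ_sum _ _)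
    _ = ∑ S ∈ Fintype.piFinset C, ∑ a ∈ A,
          ∏ j, (F j (S j) * ∏ p ∈ S j, (if p ∣ a then (1:ℝ) else 0)) := Finset.sum_comm
    _ = ∑ S ∈ Fintype.piFinset C,
          (∏ j, F j (S j)) * (X * ∏ j, ∏ p ∈ S j, g p + r (∏ j, ∏ p ∈ S j, p)) :=
        Finset.sum_congr rfl hstep
    _ = X * (∑ S ∈ Fintype.piFinset C, ∏ j, (F j (S j) * ∏ p ∈ S j, g p))
        + ∑ S ∈ Fintype.piFinset C, (∏ j, F j (S j)) * r (∏ j, ∏ p ∈ S j, p) := by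
        rw [Finset.mul_sum, ← Finset.sum_add_distrib]
        exact Finset.sum_congr rfl (fun S _ => by rw [Finset.prod_mul_distrib]; ring)
    _ = X * ∏ j, (∑ S ∈ C j, F j S * ∏ p ∈ S, g p)
        + ∑ S ∈ Fintype.piFinset C, (∏ j, F j (S j)) * r (∏ j, ∏ p ∈ S j, p) := by
        rw [Finset.prod_univ_sum (fun j => C j) (fun j S => F j S * ∏ p ∈ S, g p)]


/-- **Brun–Hooley sieve, lower bound** (Ford–Halberstam).
With the same setup as the upper bound, and additionally
`R' = ∑_{l} ∑_{dⱼ ∣ Pⱼ, ω(dⱼ) ≤ kⱼ (j ≠ l), ω(d_l) = k_l + 1} |r_{d₁⋯d_t}|`,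
one has `#{a ∈ A : gcd(a, ∏_{p ∈ P} p) = 1} ≥ X · ∏_{p ∈ P}(1 - g p) · (1 - E) - R - R'`. -/
theorem brun_hooley_lower
    (A : Finset ℕ) (hA : ∀ a ∈ A, 0 < a)
    (P : Finset ℕ) (hP : ∀ p ∈ P, Nat.Prime p)
    (X : ℝ) (hX : 0 < X)
    (g : ℕ → ℝ) (hg1 : g 1 = 1)
    (hgmult : ∀ m n : ℕ, Nat.Coprime m n → g (m * n) = g m * g n)
    (hgP : ∀ p ∈ P, 0 < g p ∧ g p < 1)
    (hgP' : ∀ p : ℕ, p.Prime → p ∉ P → g p = 0)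
    (r : ℕ → ℝ)
    (hAd : ∀ d : ℕ, d ∣ ∏ p ∈ P, p →
      ((A.filter (fun a => d ∣ a)).card : ℝ) = X * g d + r d)
    (t : ℕ) (Pj : Fin t → Finset ℕ)
    (hdisj : ∀ i j : Fin t, i ≠ j → Disjoint (Pj i) (Pj j))
    (hunion : Finset.univ.biUnion Pj = P)
    (k : Fin t → ℕ) (hkeven : ∀ j, Even (k j)) (hkpos : ∀ j, 0 < k j)
    (E R R' : ℝ)
    (hE : E = ∑ j : Fin t,
      Real.exp (Real.log (∏ p ∈ Pj j, (1 - g p))⁻¹) *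
        (Real.log (∏ p ∈ Pj j, (1 - g p))⁻¹) ^ (k j + 1) /
          (Nat.factorial (k j + 1)))
    (hR : R = ∑ d ∈ Fintype.piFinset (fun j : Fin t =>
        (∏ p ∈ Pj j, p).divisors.filter (fun m => m.primeFactors.card ≤ k j)),
      |r (∏ j : Fin t, d j)|)
    (hR' : R' = ∑ l : Fin t, ∑ d ∈ Fintype.piFinset (fun j : Fin t =>
        (∏ p ∈ Pj j, p).divisors.filter (fun m =>
          if j = l then m.primeFactors.card = k l + 1
          else m.primeFactors.card ≤ k j)),
      |r (∏ j : Fin t, d j)|) :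
    ((A.filter (fun a => Nat.Coprime a (∏ p ∈ P, p))).card : ℝ) ≥
      X * (∏ p ∈ P, (1 - g p)) * (1 - E) - R - R' := by
  classical
  -- basic setup
  have hPjP : ∀ j, Pj j ⊆ P := by
    intro j p hp
    rw [← hunion]
    exact Finset.mem_biUnion.mpr ⟨j, Finset.mem_univ j, hp⟩
  have hprime : ∀ j, ∀ p ∈ Pj j, p.Prime := fun j p hp => hP p (hPjP j hp)
  have hg01 : ∀ j, ∀ p ∈ Pj j, 0 ≤ g p ∧ g p ≤ 1 := fun j p hp =>
    ⟨le_of_lt (hgP p (hPjP j hp)).1, le_of_lt (hgP p (hPjP j hp)).2⟩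
  have hR0 : 0 ≤ R := by
    rw [hR]; exact Finset.sum_nonneg (fun _ _ => abs_nonneg _)
  have hR'0 : 0 ≤ R' := by
    rw [hR']
    exact Finset.sum_nonneg (fun _ _ => Finset.sum_nonneg (fun _ _ => abs_nonneg _))
  -- V facts
  have hVpos : ∀ j, 0 < ∏ p ∈ Pj j, (1 - g p) := fun j =>
    Finset.prod_pos (fun p hp => by linarith [(hgP p (hPjP j hp)).2])
  have hVle1 : ∀ j, ∏ p ∈ Pj j, (1 - g p) ≤ 1 := fun j => (BH_prod_mem01 g (Pj j) (hg01 j)).2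
  have hVP : ∏ p ∈ P, (1 - g p) = ∏ j, ∏ p ∈ Pj j, (1 - g p) := by
    rw [← hunion, Finset.prod_biUnion (fun i _ j _ hij => hdisj i j hij)]
  have hVPpos : 0 < ∏ p ∈ P, (1 - g p) := by
    rw [hVP]; exact Finset.prod_pos (fun j _ => hVpos j)
  -- trivial case
  by_cases hE1 : 1 ≤ E
  · have h1 : X * (∏ p ∈ P, (1 - g p)) * (1 - E) ≤ 0 := by
      apply mul_nonpos_of_nonneg_of_nonpos
      · positivity
      · linarith
    have h2 : (0:ℝ) ≤ ((A.filter (fun a => Nat.Coprime a (∏ p ∈ P, p))).card : ℝ) := by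
      positivity
    linarith
  push_neg at hE1
  -- L facts
  have hL0 : ∀ j, 0 ≤ Real.log (∏ p ∈ Pj j, (1 - g p))⁻¹ := by
    intro j
    rw [Real.log_inv]
    have := Real.log_nonpos (le_of_lt (hVpos j)) (hVle1 j)
    linarith
  have hgsumL : ∀ j, ∑ p ∈ Pj j, g p ≤ Real.log (∏ p ∈ Pj j, (1 - g p))⁻¹ := by
    intro j
    rw [Real.log_inv, Real.log_prod (fun p hp => by
      have := (hgP p (hPjP j hp)).2; intro hc; linarith [hc ▸ (by linarith : (0:ℝ) < 1 - g p)])]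
    rw [← Finset.sum_neg_distrib]
    apply Finset.sum_le_sum
    intro p hp
    have h1 : (0:ℝ) < 1 - g p := by linarith [(hgP p (hPjP j hp)).2]
    have := Real.log_le_sub_one_of_pos h1
    linarith
  -- Ej facts
  have hEj0 : ∀ j, 0 ≤ Real.exp (Real.log (∏ p ∈ Pj j, (1 - g p))⁻¹) *
      (Real.log (∏ p ∈ Pj j, (1 - g p))⁻¹) ^ (k j + 1) / (Nat.factorial (k j + 1)) := by
    intro j
    have := hL0 j
    positivity
  -- G facts
  have hGV : ∀ j, ∏ p ∈ Pj j, (1 - g p) ≤ BHSk g (Pj j) (k j) := by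
    intro j
    have h := (BH_bonferroni g (Pj j) (hg01 j) (k j)).1
    rw [(hkeven j).neg_one_pow, one_mul, sub_nonneg] at h
    exact h
  have hGpos : ∀ j, 0 < BHSk g (Pj j) (k j) := fun j => lt_of_lt_of_le (hVpos j) (hGV j)
  -- H facts
  have hH0 : ∀ l, 0 ≤ BHEk g (Pj l) (k l + 1) :=
    fun l => BHEk_nonneg g (Pj l) (fun p hp => (hg01 l p hp).1) (k l + 1)
  have hHle : ∀ l, BHEk g (Pj l) (k l + 1) ≤ (∏ p ∈ Pj l, (1 - g p)) *
      (Real.exp (Real.log (∏ p ∈ Pj l, (1 - g p))⁻¹) *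
        (Real.log (∏ p ∈ Pj l, (1 - g p))⁻¹) ^ (k l + 1) / (Nat.factorial (k l + 1))) := by
    intro l
    have hfac : (0:ℝ) < (Nat.factorial (k l + 1) : ℝ) := by positivity
    have h1 := BHEk_le g (Pj l) (fun p hp => (hg01 l p hp).1) (k l + 1)
    have h2 : (∑ p ∈ Pj l, g p)^(k l + 1) ≤ (Real.log (∏ p ∈ Pj l, (1 - g p))⁻¹)^(k l + 1) := by
      apply pow_le_pow_left₀ (Finset.sum_nonneg (fun p hp => (hg01 l p hp).1)) (hgsumL l)
    have hVl := hVpos l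
    have hexp : Real.exp (Real.log (∏ p ∈ Pj l, (1 - g p))⁻¹) = (∏ p ∈ Pj l, (1 - g p))⁻¹ :=
      Real.exp_log (inv_pos.mpr hVl)
    rw [hexp]
    rw [div_eq_mul_inv]
    have key : BHEk g (Pj l) (k l + 1) ≤ (Real.log (∏ p ∈ Pj l, (1 - g p))⁻¹)^(k l + 1) / (Nat.factorial (k l + 1)) := by
      rw [le_div_iff₀ hfac]
      exact le_trans h1 h2
    calc BHEk g (Pj l) (k l + 1)
        ≤ (Real.log (∏ p ∈ Pj l, (1 - g p))⁻¹)^(k l + 1) / (Nat.factorial (k l + 1)) := key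
      _ = (∏ p ∈ Pj l, (1 - g p)) * ((∏ p ∈ Pj l, (1 - g p))⁻¹ *
          (Real.log (∏ p ∈ Pj l, (1 - g p))⁻¹) ^ (k l + 1) * (Nat.factorial (k l + 1):ℝ)⁻¹) := by
          field_simp
      _ = _ := by ring
  -- counting identity for the coprime cardinality
  have hYcount : ((A.filter (fun a => Nat.Coprime a (∏ p ∈ P, p))).card : ℝ)
      = ∑ a ∈ A, ∏ j, ∏ p ∈ Pj j, (1 - if p ∣ a then (1:ℝ) else 0) := by
    rw [← Finset.sum_boole]
    apply Finset.sum_congr rfl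
    intro a _
    rw [← Finset.prod_biUnion (f := fun p => (1 - if p ∣ a then (1:ℝ) else 0))
      (fun i _ j _ hij => hdisj i j hij), hunion]
    have h2 : ∀ p ∈ P, (1 - if p ∣ a then (1:ℝ) else 0) = if ¬ p ∣ a then (1:ℝ) else 0 := by
      intro p _
      by_cases h : p ∣ a <;> simp [h]
    rw [Finset.prod_congr rfl h2, Finset.prod_boole]
    congr 1
    simp only [eq_iff_iff]
    constructor
    · intro h p hp
      have h' := Nat.coprime_prod_right_iff.mp h p hp
      exact (Nat.Prime.coprime_iff_not_dvd (hP p hp)).mp (Nat.coprime_comm.mp h')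
    · intro h
      exact Nat.coprime_prod_right_iff.mpr (fun p hp =>
        Nat.coprime_comm.mp ((Nat.Prime.coprime_iff_not_dvd (hP p hp)).mpr (h p hp)))
  -- pointwise Bonferroni facts
  have hw01 : ∀ a : ℕ, ∀ p ∈ P, 0 ≤ (if p ∣ a then (1:ℝ) else 0) ∧ (if p ∣ a then (1:ℝ) else 0) ≤ 1 := by
    intro a p _
    by_cases h : p ∣ a <;> simp [h]
  have hy0 : ∀ (a : ℕ) (j : Fin t), 0 ≤ ∏ p ∈ Pj j, (1 - if p ∣ a then (1:ℝ) else 0) :=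
    fun a j => (BH_prod_mem01 _ (Pj j) (fun p hp => hw01 a p (hPjP j hp))).1
  have hyx : ∀ (a : ℕ) (j : Fin t), ∏ p ∈ Pj j, (1 - if p ∣ a then (1:ℝ) else 0)
      ≤ BHSk (fun p => if p ∣ a then (1:ℝ) else 0) (Pj j) (k j) := by
    intro a j
    have h := (BH_bonferroni (fun p => if p ∣ a then (1:ℝ) else 0) (Pj j)
      (fun p hp => hw01 a p (hPjP j hp)) (k j)).1
    rw [(hkeven j).neg_one_pow, one_mul, sub_nonneg] at h
    exact h
  have hx0 : ∀ (a : ℕ) (j : Fin t), 0 ≤ BHSk (fun p => if p ∣ a then (1:ℝ) else 0) (Pj j) (k j) :=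
    fun a j => le_trans (hy0 a j) (hyx a j)
  have hchi : ∀ (a : ℕ) (l : Fin t),
      BHSk (fun p => if p ∣ a then (1:ℝ) else 0) (Pj l) (k l)
        - ∏ p ∈ Pj l, (1 - if p ∣ a then (1:ℝ) else 0)
      ≤ BHEk (fun p => if p ∣ a then (1:ℝ) else 0) (Pj l) (k l + 1) := by
    intro a l
    have h := (BH_bonferroni (fun p => if p ∣ a then (1:ℝ) else 0) (Pj l)
      (fun p hp => hw01 a p (hPjP l hp)) (k l)).2
    rwa [(hkeven l).neg_one_pow, one_mul] at h
  have hchi0 : ∀ (a : ℕ) (l : Fin t),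
      0 ≤ BHEk (fun p => if p ∣ a then (1:ℝ) else 0) (Pj l) (k l + 1) := by
    intro a l
    exact BHEk_nonneg _ (Pj l) (fun p hp => (hw01 a p (hPjP l hp)).1) _
  -- pointwise key inequality
  have hkey : ∀ a : ℕ,
      (∏ j, BHSk (fun p => if p ∣ a then (1:ℝ) else 0) (Pj j) (k j))
        - ∑ l, BHEk (fun p => if p ∣ a then (1:ℝ) else 0) (Pj l) (k l + 1) *
            ∏ j ∈ Finset.univ.erase l, BHSk (fun p => if p ∣ a then (1:ℝ) else 0) (Pj j) (k j)
      ≤ ∏ j, ∏ p ∈ Pj j, (1 - if p ∣ a then (1:ℝ) else 0) := by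
    intro a
    have h1 := BH_prod_sub_prod Finset.univ
      (fun j => BHSk (fun p => if p ∣ a then (1:ℝ) else 0) (Pj j) (k j))
      (fun j => ∏ p ∈ Pj j, (1 - if p ∣ a then (1:ℝ) else 0))
      (fun j _ => hy0 a j) (fun j _ => hyx a j)
    have h2 : ∑ l, (BHSk (fun p => if p ∣ a then (1:ℝ) else 0) (Pj l) (k l)
          - ∏ p ∈ Pj l, (1 - if p ∣ a then (1:ℝ) else 0)) *
            ∏ j ∈ Finset.univ.erase l, BHSk (fun p => if p ∣ a then (1:ℝ) else 0) (Pj j) (k j)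
        ≤ ∑ l, BHEk (fun p => if p ∣ a then (1:ℝ) else 0) (Pj l) (k l + 1) *
            ∏ j ∈ Finset.univ.erase l, BHSk (fun p => if p ∣ a then (1:ℝ) else 0) (Pj j) (k j) := by
      apply Finset.sum_le_sum
      intro l _
      apply mul_le_mul_of_nonneg_right (hchi a l)
      exact Finset.prod_nonneg (fun j _ => hx0 a j)
    linarith
  -- main term via master
  have hmainx : ∑ a ∈ A, ∏ j, BHSk (fun p => if p ∣ a then (1:ℝ) else 0) (Pj j) (k j)
      = X * ∏ j, BHSk g (Pj j) (k j)
        + ∑ S ∈ Fintype.piFinset (fun j => (Pj j).powerset.filter (fun s => s.card ≤ k j)),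
            (∏ j, (-1:ℝ)^(S j).card) * r (∏ j, ∏ p ∈ S j, p) :=
    BH_master A P hP X g hg1 hgmult r hAd Pj hPjP hdisj
      (fun j => (Pj j).powerset.filter (fun s => s.card ≤ k j))
      (fun j S hS => Finset.mem_powerset.mp (Finset.mem_filter.mp hS).1)
      (fun _ S => (-1:ℝ)^S.card)
  have hErr0 : |∑ S ∈ Fintype.piFinset (fun j => (Pj j).powerset.filter (fun s => s.card ≤ k j)),
      (∏ j, (-1:ℝ)^(S j).card) * r (∏ j, ∏ p ∈ S j, p)| ≤ R := by
    calc |∑ S ∈ Fintype.piFinset (fun j => (Pj j).powerset.filter (fun s => s.card ≤ k j)),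
        (∏ j, (-1:ℝ)^(S j).card) * r (∏ j, ∏ p ∈ S j, p)|
        ≤ ∑ S ∈ Fintype.piFinset (fun j => (Pj j).powerset.filter (fun s => s.card ≤ k j)),
          |(∏ j, (-1:ℝ)^(S j).card) * r (∏ j, ∏ p ∈ S j, p)| := Finset.abs_sum_le_sum_abs _ _
      _ = ∑ S ∈ Fintype.piFinset (fun j => (Pj j).powerset.filter (fun s => s.card ≤ k j)),
          |r (∏ j, ∏ p ∈ S j, p)| := by
          apply Finset.sum_congr rfl
          intro S _
          rw [abs_mul, Finset.abs_prod]
          simp [abs_pow]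
      _ = R := by
          rw [hR]
          exact BH_sum_tuple_bij Pj hprime (fun j n => n ≤ k j) (fun n => |r n|)
  -- split of the l-modified product
  have hsplit : ∀ (wf : ℕ → ℝ) (l : Fin t),
      ∏ j, (∑ S ∈ (Pj j).powerset.filter
          (fun s => if j = l then s.card = k l + 1 else s.card ≤ k j),
        (if j = l then (1:ℝ) else (-1:ℝ)^S.card) * ∏ p ∈ S, wf p)
      = BHEk wf (Pj l) (k l + 1) * ∏ j ∈ Finset.univ.erase l, BHSk wf (Pj j) (k j) := by
    intro wf l
    rw [← Finset.mul_prod_erase Finset.univ _ (Finset.mem_univ l)]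
    congr 1
    · simp only [if_pos rfl, eq_self_iff_true, if_true, one_mul]
      rfl
    · apply Finset.prod_congr rfl
      intro j hj
      have hjl : j ≠ l := Finset.ne_of_mem_erase hj
      simp only [if_neg hjl]
      rfl
  -- l-terms via master
  have hmainD : ∀ l : Fin t,
      ∑ a ∈ A, BHEk (fun p => if p ∣ a then (1:ℝ) else 0) (Pj l) (k l + 1) *
          ∏ j ∈ Finset.univ.erase l, BHSk (fun p => if p ∣ a then (1:ℝ) else 0) (Pj j) (k j)
      = X * (BHEk g (Pj l) (k l + 1) * ∏ j ∈ Finset.univ.erase l, BHSk g (Pj j) (k j))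
        + ∑ S ∈ Fintype.piFinset (fun j => (Pj j).powerset.filter
            (fun s => if j = l then s.card = k l + 1 else s.card ≤ k j)),
          (∏ j, (if j = l then (1:ℝ) else (-1:ℝ)^(S j).card)) * r (∏ j, ∏ p ∈ S j, p) := by
    intro l
    have h := BH_master A P hP X g hg1 hgmult r hAd Pj hPjP hdisj
      (fun j => (Pj j).powerset.filter
        (fun s => if j = l then s.card = k l + 1 else s.card ≤ k j))
      (fun j S hS => Finset.mem_powerset.mp (Finset.mem_filter.mp hS).1)
      (fun j S => if j = l then (1:ℝ) else (-1:ℝ)^S.card)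
    calc ∑ a ∈ A, BHEk (fun p => if p ∣ a then (1:ℝ) else 0) (Pj l) (k l + 1) *
          ∏ j ∈ Finset.univ.erase l, BHSk (fun p => if p ∣ a then (1:ℝ) else 0) (Pj j) (k j)
        = ∑ a ∈ A, ∏ j, (∑ S ∈ (Pj j).powerset.filter
            (fun s => if j = l then s.card = k l + 1 else s.card ≤ k j),
          (if j = l then (1:ℝ) else (-1:ℝ)^S.card) *
            ∏ p ∈ S, (if p ∣ a then (1:ℝ) else 0)) :=
          Finset.sum_congr rfl (fun a _ =>
            (hsplit (fun p => if p ∣ a then (1:ℝ) else 0) l).symm)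
      _ = X * ∏ j, (∑ S ∈ (Pj j).powerset.filter
            (fun s => if j = l then s.card = k l + 1 else s.card ≤ k j),
          (if j = l then (1:ℝ) else (-1:ℝ)^S.card) * ∏ p ∈ S, g p)
          + ∑ S ∈ Fintype.piFinset (fun j => (Pj j).powerset.filter
              (fun s => if j = l then s.card = k l + 1 else s.card ≤ k j)),
            (∏ j, (if j = l then (1:ℝ) else (-1:ℝ)^(S j).card)) * r (∏ j, ∏ p ∈ S j, p) := h
      _ = _ := by rw [hsplit g l]
  have hErrl : ∀ l : Fin t,
      |∑ S ∈ Fintype.piFinset (fun j => (Pj j).powerset.filter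
          (fun s => if j = l then s.card = k l + 1 else s.card ≤ k j)),
        (∏ j, (if j = l then (1:ℝ) else (-1:ℝ)^(S j).card)) * r (∏ j, ∏ p ∈ S j, p)|
      ≤ ∑ d ∈ Fintype.piFinset (fun j : Fin t =>
          (∏ p ∈ Pj j, p).divisors.filter (fun m =>
            if j = l then m.primeFactors.card = k l + 1
            else m.primeFactors.card ≤ k j)),
        |r (∏ j : Fin t, d j)| := by
    intro l
    calc |∑ S ∈ Fintype.piFinset (fun j => (Pj j).powerset.filter
          (fun s => if j = l then s.card = k l + 1 else s.card ≤ k j)),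
        (∏ j, (if j = l then (1:ℝ) else (-1:ℝ)^(S j).card)) * r (∏ j, ∏ p ∈ S j, p)|
        ≤ ∑ S ∈ Fintype.piFinset (fun j => (Pj j).powerset.filter
            (fun s => if j = l then s.card = k l + 1 else s.card ≤ k j)),
          |(∏ j, (if j = l then (1:ℝ) else (-1:ℝ)^(S j).card)) * r (∏ j, ∏ p ∈ S j, p)| :=
          Finset.abs_sum_le_sum_abs _ _
      _ = ∑ S ∈ Fintype.piFinset (fun j => (Pj j).powerset.filter
            (fun s => if j = l then s.card = k l + 1 else s.card ≤ k j)),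
          |r (∏ j, ∏ p ∈ S j, p)| := by
          apply Finset.sum_congr rfl
          intro S _
          rw [abs_mul, Finset.abs_prod]
          have : ∀ j : Fin t, |if j = l then (1:ℝ) else (-1:ℝ)^(S j).card| = 1 := by
            intro j
            by_cases h : j = l <;> simp [h, abs_pow]
          rw [Finset.prod_congr rfl (fun j _ => this j)]
          simp
      _ = _ := BH_sum_tuple_bij Pj hprime
          (fun j n => if j = l then n = k l + 1 else n ≤ k j) (fun n => |r n|)
  -- summation of the pointwise inequality
  have hsum1 : ∑ a ∈ A, ∏ j, BHSk (fun p => if p ∣ a then (1:ℝ) else 0) (Pj j) (k j)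
      - ∑ l, ∑ a ∈ A, BHEk (fun p => if p ∣ a then (1:ℝ) else 0) (Pj l) (k l + 1) *
          ∏ j ∈ Finset.univ.erase l, BHSk (fun p => if p ∣ a then (1:ℝ) else 0) (Pj j) (k j)
      ≤ ∑ a ∈ A, ∏ j, ∏ p ∈ Pj j, (1 - if p ∣ a then (1:ℝ) else 0) := by
    have h := Finset.sum_le_sum (fun a (_ : a ∈ A) => hkey a)
    rw [Finset.sum_sub_distrib] at h
    rwa [Finset.sum_comm] at h
  -- the analytic main-term bound
  have hmain_an : X * (∏ p ∈ P, (1 - g p)) * (1 - E)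
      ≤ X * ∏ j, BHSk g (Pj j) (k j)
        - X * ∑ l, BHEk g (Pj l) (k l + 1) *
            ∏ j ∈ Finset.univ.erase l, BHSk g (Pj j) (k j) := by
    have hGerase : ∀ l : Fin t, 0 ≤ ∏ j ∈ Finset.univ.erase l, BHSk g (Pj j) (k j) :=
      fun l => Finset.prod_nonneg (fun j _ => le_of_lt (hGpos j))
    have h1 : ∑ l, BHEk g (Pj l) (k l + 1) *
          ∏ j ∈ Finset.univ.erase l, BHSk g (Pj j) (k j)
        ≤ E * ∏ j, BHSk g (Pj j) (k j) := by
      rw [hE, Finset.sum_mul]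
      apply Finset.sum_le_sum
      intro l _
      calc BHEk g (Pj l) (k l + 1) * ∏ j ∈ Finset.univ.erase l, BHSk g (Pj j) (k j)
          ≤ ((∏ p ∈ Pj l, (1 - g p)) *
              (Real.exp (Real.log (∏ p ∈ Pj l, (1 - g p))⁻¹) *
                (Real.log (∏ p ∈ Pj l, (1 - g p))⁻¹) ^ (k l + 1) / (Nat.factorial (k l + 1)))) *
              ∏ j ∈ Finset.univ.erase l, BHSk g (Pj j) (k j) :=
            mul_le_mul_of_nonneg_right (hHle l) (hGerase l)
        _ ≤ (BHSk g (Pj l) (k l) *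
              (Real.exp (Real.log (∏ p ∈ Pj l, (1 - g p))⁻¹) *
                (Real.log (∏ p ∈ Pj l, (1 - g p))⁻¹) ^ (k l + 1) / (Nat.factorial (k l + 1)))) *
              ∏ j ∈ Finset.univ.erase l, BHSk g (Pj j) (k j) := by
            apply mul_le_mul_of_nonneg_right _ (hGerase l)
            exact mul_le_mul_of_nonneg_right (hGV l) (hEj0 l)
        _ = (Real.exp (Real.log (∏ p ∈ Pj l, (1 - g p))⁻¹) *
              (Real.log (∏ p ∈ Pj l, (1 - g p))⁻¹) ^ (k l + 1) / (Nat.factorial (k l + 1))) *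
              (BHSk g (Pj l) (k l) * ∏ j ∈ Finset.univ.erase l, BHSk g (Pj j) (k j)) := by ring
        _ = (Real.exp (Real.log (∏ p ∈ Pj l, (1 - g p))⁻¹) *
              (Real.log (∏ p ∈ Pj l, (1 - g p))⁻¹) ^ (k l + 1) / (Nat.factorial (k l + 1))) *
              ∏ j, BHSk g (Pj j) (k j) := by
            rw [Finset.mul_prod_erase Finset.univ (fun j => BHSk g (Pj j) (k j))
              (Finset.mem_univ l)]
    have h2 : ∏ p ∈ P, (1 - g p) ≤ ∏ j, BHSk g (Pj j) (k j) := by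
      rw [hVP]
      exact Finset.prod_le_prod (fun j _ => le_of_lt (hVpos j)) (fun j _ => hGV j)
    have h3 : (0:ℝ) < 1 - E := by linarith
    have h4 : X * ∏ j, BHSk g (Pj j) (k j)
        - X * ∑ l, BHEk g (Pj l) (k l + 1) *
            ∏ j ∈ Finset.univ.erase l, BHSk g (Pj j) (k j)
        ≥ X * ∏ j, BHSk g (Pj j) (k j) - X * (E * ∏ j, BHSk g (Pj j) (k j)) := by
      have := mul_le_mul_of_nonneg_left h1 (le_of_lt hX)
      linarith
    have h5 : X * ∏ j, BHSk g (Pj j) (k j) - X * (E * ∏ j, BHSk g (Pj j) (k j))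
        = X * (∏ j, BHSk g (Pj j) (k j)) * (1 - E) := by ring
    have h6 : X * (∏ p ∈ P, (1 - g p)) * (1 - E)
        ≤ X * (∏ j, BHSk g (Pj j) (k j)) * (1 - E) := by
      apply mul_le_mul_of_nonneg_right _ (le_of_lt h3)
      exact mul_le_mul_of_nonneg_left h2 (le_of_lt hX)
    linarith
  -- put everything together
  rw [hYcount]
  rw [Finset.sum_congr rfl (fun l (_ : l ∈ (Finset.univ : Finset (Fin t))) => hmainD l)] at hsum1
  rw [hmainx] at hsum1
  rw [Finset.sum_add_distrib] at hsum1
  have hsumX : ∑ l : Fin t, X * (BHEk g (Pj l) (k l + 1) *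
      ∏ j ∈ Finset.univ.erase l, BHSk g (Pj j) (k j))
      = X * ∑ l, BHEk g (Pj l) (k l + 1) *
          ∏ j ∈ Finset.univ.erase l, BHSk g (Pj j) (k j) := by
    rw [Finset.mul_sum]
  rw [hsumX] at hsum1
  have hRsum : ∑ l : Fin t, ∑ S ∈ Fintype.piFinset (fun j => (Pj j).powerset.filter
      (fun s => if j = l then s.card = k l + 1 else s.card ≤ k j)),
        (∏ j, (if j = l then (1:ℝ) else (-1:ℝ)^(S j).card)) * r (∏ j, ∏ p ∈ S j, p)
      ≤ R' := by
    rw [hR']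
    apply Finset.sum_le_sum
    intro l _
    exact le_trans (le_abs_self _) (hErrl l)
  have habs0 : -R ≤ ∑ S ∈ Fintype.piFinset (fun j => (Pj j).powerset.filter
      (fun s => s.card ≤ k j)), (∏ j, (-1:ℝ)^(S j).card) * r (∏ j, ∏ p ∈ S j, p) :=
    neg_le_of_abs_le hErr0
  linarith [hsum1, hmain_an, habs0, hRsum]
end

section
/- There exists an absolute constant c > 0 such that for all sufficiently large y, Σ_{a ≤ y, a even} 1/(τ(a)·φ(a)) ≥ c·(log y)^{1/2}, where the sum runs over even positive integers a ≤ y. -/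
open Finset

namespace SumTauAux

noncomputable def f (m : ℕ) : ℝ := 1 / (m * m.divisors.card)

lemma f_nonneg (m : ℕ) : 0 ≤ f m := by unfold f; positivity

lemma tau_pos {m : ℕ} (hm : m ≠ 0) : 0 < m.divisors.card :=
  Finset.card_pos.mpr ⟨1, Nat.one_mem_divisors.mpr hm⟩

lemma card_divisors_two_pow (j : ℕ) : (2 ^ j).divisors.card = j + 1 := by
  rw [Nat.divisors_prime_pow Nat.prime_two, Finset.card_map, Finset.card_range]

lemma tau_two_mul_le {m : ℕ} (hm : m ≠ 0) :
    (2 * m).divisors.card ≤ 2 * m.divisors.card := by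
  have ho : m = 2 ^ m.factorization 2 * ordCompl[2] m :=
    (Nat.ordProj_mul_ordCompl_eq_self m 2).symm
  have hcop : Nat.Coprime 2 (ordCompl[2] m) := Nat.coprime_ordCompl Nat.prime_two hm
  have hcop1 : Nat.Coprime (2 ^ m.factorization 2) (ordCompl[2] m) := hcop.pow_left _
  have hcop2 : Nat.Coprime (2 ^ (m.factorization 2 + 1)) (ordCompl[2] m) := hcop.pow_left _
  have h2m : 2 * m = 2 ^ (m.factorization 2 + 1) * ordCompl[2] m := by
    conv_lhs => rw [ho]
    ring
  rw [h2m, hcop2.card_divisors_mul, card_divisors_two_pow]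
  conv_rhs => rw [ho, hcop1.card_divisors_mul, card_divisors_two_pow, ← mul_assoc]
  exact mul_le_mul_left (by omega) _

lemma sum_divisors_f {N : ℕ} (hN : N ≠ 0) (hsf : Squarefree N) :
    ∑ d ∈ N.divisors, f d * f (N / d) = 1 / N := by
  have h1 : ∀ d ∈ N.divisors, f d * f (N / d) = 1 / (N * N.divisors.card) := by
    intro d hd
    obtain ⟨hdvd, -⟩ := Nat.mem_divisors.mp hd
    have hmul : d * (N / d) = N := Nat.mul_div_cancel' hdvd
    have hcop : d.Coprime (N / d) := by
      apply Nat.coprime_of_squarefree_mul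
      rwa [hmul]
    have eN : N * N.divisors.card = (d * d.divisors.card) * ((N / d) * ((N / d).divisors.card)) := by
      conv_lhs => rw [← hmul]
      rw [hcop.card_divisors_mul]
      ring
    unfold f
    rw [div_mul_div_comm, one_mul]
    congr 1
    exact_mod_cast eN.symm
  rw [Finset.sum_congr rfl h1, Finset.sum_const, nsmul_eq_mul]
  have h0 : (N.divisors.card : ℝ) ≠ 0 := Nat.cast_ne_zero.mpr (tau_pos hN).ne'
  have hN0 : (N : ℝ) ≠ 0 := Nat.cast_ne_zero.mpr hN
  field_simp

/-- Key Cauchy-type inequality. -/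
lemma claimA (x : ℕ) :
    ∑ N ∈ (Icc 1 x).filter Squarefree, (1 : ℝ) / N ≤ (∑ m ∈ Icc 1 x, f m) ^ 2 := by
  set SF := (Icc 1 x).filter Squarefree with hSF
  have hmem : ∀ N ∈ SF, N ≠ 0 ∧ Squarefree N ∧ N ≤ x := by
    intro N hN
    rw [hSF, Finset.mem_filter, Finset.mem_Icc] at hN
    exact ⟨by omega, hN.2, hN.1.2⟩
  have key : ∑ N ∈ SF, (1 : ℝ) / N
      = ∑ N ∈ SF, ∑ p ∈ N.divisors.image (fun d => (d, N / d)), f p.1 * f p.2 := by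
    refine Finset.sum_congr rfl fun N hN => ?_
    obtain ⟨hN0, hsf, -⟩ := hmem N hN
    rw [Finset.sum_image (fun a _ b _ hab => congrArg Prod.fst hab)]
    exact (sum_divisors_f hN0 hsf).symm
  have hval : ∀ N : ℕ, ∀ p ∈ N.divisors.image (fun d => (d, N / d)), p.1 * p.2 = N := by
    intro N p hp
    obtain ⟨d, hd, rfl⟩ := Finset.mem_image.mp hp
    exact Nat.mul_div_cancel' (Nat.mem_divisors.mp hd).1
  have hdisj : (SF : Set ℕ).PairwiseDisjoint
      (fun N => N.divisors.image (fun d => (d, N / d))) := by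
    intro N hN N' hN' hne
    simp only [Function.onFun]
    rw [Finset.disjoint_left]
    intro p hp hp'
    exact hne ((hval N p hp).symm.trans (hval N' p hp'))
  rw [key, ← Finset.sum_biUnion hdisj]
  have hsub : SF.biUnion (fun N => N.divisors.image (fun d => (d, N / d)))
      ⊆ (Icc 1 x) ×ˢ (Icc 1 x) := by
    intro p hp
    obtain ⟨N, hN, hpN⟩ := Finset.mem_biUnion.mp hp
    obtain ⟨hN0, -, hNx⟩ := hmem N hN
    obtain ⟨d, hd, rfl⟩ := Finset.mem_image.mp hpN
    obtain ⟨hdvd, -⟩ := Nat.mem_divisors.mp hd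
    have hd0 : d ≠ 0 := by
      rintro rfl
      exact hN0 (Nat.eq_zero_of_zero_dvd hdvd)
    have hdN : d ≤ N := Nat.le_of_dvd (Nat.pos_of_ne_zero hN0) hdvd
    have hq : N / d ∣ N := ⟨d, (Nat.div_mul_cancel hdvd).symm⟩
    have hq0 : N / d ≠ 0 := by
      intro h
      exact hN0 (by simpa [h] using (Nat.div_mul_cancel hdvd).symm)
    have hqN : N / d ≤ N := Nat.le_of_dvd (Nat.pos_of_ne_zero hN0) hq
    simp only [Finset.mem_product, Finset.mem_Icc]
    exact ⟨⟨Nat.one_le_iff_ne_zero.mpr hd0, hdN.trans hNx⟩,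
      ⟨Nat.one_le_iff_ne_zero.mpr hq0, hqN.trans hNx⟩⟩
  calc ∑ p ∈ SF.biUnion (fun N => N.divisors.image (fun d => (d, N / d))), f p.1 * f p.2
      ≤ ∑ p ∈ (Icc 1 x) ×ˢ (Icc 1 x), f p.1 * f p.2 := by
        exact Finset.sum_le_sum_of_subset_of_nonneg hsub
          (fun p _ _ => mul_nonneg (f_nonneg _) (f_nonneg _))
    _ = (∑ m ∈ Icc 1 x, f m) ^ 2 := by
        rw [Finset.sum_product, sq, Finset.sum_mul_sum]

lemma basel_aux : ∀ x : ℕ, ∑ s ∈ Icc 1 (x + 1), (1 : ℝ) / (s : ℝ) ^ 2 ≤ 2 - 1 / (x + 1)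
  | 0 => by norm_num
  | (k + 1) => by
    rw [Finset.sum_Icc_succ_top (by omega : 1 ≤ k + 2)]
    have ih := basel_aux k
    have hk1 : (0 : ℝ) < (k : ℝ) + 1 := by positivity
    have hk2 : (0 : ℝ) < (k : ℝ) + 2 := by positivity
    have h : (1 : ℝ) / ((k : ℝ) + 2) ^ 2 ≤ 1 / ((k : ℝ) + 1) - 1 / ((k : ℝ) + 2) := by
      rw [div_sub_div _ _ hk1.ne' hk2.ne', div_le_div_iff₀ (by positivity) (by positivity)]
      ring_nf
      nlinarith
    push_cast
    push_cast at ih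
    rw [show ((k : ℝ) + 1 + 1) = (k : ℝ) + 2 by ring]
    linarith [ih, h]

lemma basel (x : ℕ) : ∑ s ∈ Icc 1 x, (1 : ℝ) / (s : ℝ) ^ 2 ≤ 2 := by
  cases x with
  | zero => norm_num
  | succ k =>
    have h := basel_aux k
    have : (0 : ℝ) < (k : ℝ) + 1 := by positivity
    have h2 : (0 : ℝ) < 1 / ((k : ℝ) + 1) := by positivity
    push_cast at h ⊢
    linarith

noncomputable def sqf (n : ℕ) : ℕ := (Nat.sq_mul_squarefree n).choose

noncomputable def sqp (n : ℕ) : ℕ := (Nat.sq_mul_squarefree n).choose_spec.choose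

lemma sq_spec (n : ℕ) : (sqp n) ^ 2 * sqf n = n ∧ Squarefree (sqf n) :=
  (Nat.sq_mul_squarefree n).choose_spec.choose_spec

lemma claimB (x : ℕ) :
    ∑ n ∈ Icc 1 x, (1 : ℝ) / n ≤ 2 * ∑ N ∈ (Icc 1 x).filter Squarefree, (1 : ℝ) / N := by
  set SF := (Icc 1 x).filter Squarefree with hSF
  have hSFnonneg : (0 : ℝ) ≤ ∑ N ∈ SF, (1 : ℝ) / N :=
    Finset.sum_nonneg (fun N _ => by positivity)
  have hmap : ∀ n ∈ Icc 1 x, (sqp n, sqf n) ∈ (Icc 1 x) ×ˢ SF := by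
    intro n hn
    rw [Finset.mem_Icc] at hn
    obtain ⟨hsq, hsf⟩ := sq_spec n
    have hp0 : sqp n ≠ 0 := by
      rintro h
      rw [h] at hsq
      simp at hsq
      omega
    have hf0 : sqf n ≠ 0 := by
      rintro h
      rw [h] at hsq
      simp at hsq
      omega
    have hpn : sqp n ≤ n := by
      calc sqp n ≤ sqp n ^ 2 := Nat.le_self_pow two_ne_zero _
        _ ≤ sqp n ^ 2 * sqf n := Nat.le_mul_of_pos_right _ (Nat.pos_of_ne_zero hf0)
        _ = n := hsq
    have hfn : sqf n ≤ n := by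
      calc sqf n ≤ sqp n ^ 2 * sqf n :=
            Nat.le_mul_of_pos_left _ (by positivity)
        _ = n := hsq
    simp only [Finset.mem_product, hSF, Finset.mem_filter, Finset.mem_Icc]
    exact ⟨⟨Nat.one_le_iff_ne_zero.mpr hp0, hpn.trans hn.2⟩,
      ⟨⟨Nat.one_le_iff_ne_zero.mpr hf0, hfn.trans hn.2⟩, hsf⟩⟩
  have hinj : ∀ a ∈ Icc 1 x, ∀ b ∈ Icc 1 x,
      (fun n => (sqp n, sqf n)) a = (fun n => (sqp n, sqf n)) b → a = b := by
    intro a _ b _ h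
    simp only [Prod.mk.injEq] at h
    rw [← (sq_spec a).1, ← (sq_spec b).1, h.1, h.2]
  have hterm : ∀ n ∈ Icc 1 x, (1 : ℝ) / n = 1 / (sqp n : ℝ) ^ 2 * (1 / (sqf n : ℝ)) := by
    intro n _
    have h : ((n : ℝ)) = (sqp n : ℝ) ^ 2 * (sqf n : ℝ) := by
      exact_mod_cast (sq_spec n).1.symm
    rw [h, one_div_mul_one_div]
  calc ∑ n ∈ Icc 1 x, (1 : ℝ) / n
      = ∑ n ∈ Icc 1 x, 1 / (sqp n : ℝ) ^ 2 * (1 / (sqf n : ℝ)) :=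
        Finset.sum_congr rfl hterm
    _ = ∑ p ∈ (Icc 1 x).image (fun n => (sqp n, sqf n)),
          1 / (p.1 : ℝ) ^ 2 * (1 / (p.2 : ℝ)) := by rw [Finset.sum_image hinj]
    _ ≤ ∑ p ∈ (Icc 1 x) ×ˢ SF, 1 / (p.1 : ℝ) ^ 2 * (1 / (p.2 : ℝ)) := by
        refine Finset.sum_le_sum_of_subset_of_nonneg ?_ (fun p _ _ => by positivity)
        exact Finset.image_subset_iff.mpr hmap
    _ = (∑ s ∈ Icc 1 x, (1 : ℝ) / (s : ℝ) ^ 2) * (∑ N ∈ SF, (1 : ℝ) / N) := by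
        rw [Finset.sum_product, Finset.sum_mul_sum]
    _ ≤ 2 * ∑ N ∈ SF, (1 : ℝ) / N :=
        mul_le_mul_of_nonneg_right (basel x) hSFnonneg

lemma harmonic_lower (x : ℕ) : Real.log ((x : ℝ) + 1) ≤ ∑ n ∈ Icc 1 x, (1 : ℝ) / n := by
  have h := log_add_one_le_harmonic x
  rw [harmonic_eq_sum_Icc] at h
  push_cast at h
  simpa [one_div] using h

lemma S_lower (x : ℕ) :
    Real.sqrt (Real.log ((x : ℝ) + 1) / 2) ≤ ∑ m ∈ Icc 1 x, f m := by
  have hA := claimA x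
  have hB := claimB x
  have hH := harmonic_lower x
  have hS : (0 : ℝ) ≤ ∑ m ∈ Icc 1 x, f m :=
    Finset.sum_nonneg (fun m _ => f_nonneg m)
  have h1 : Real.log ((x : ℝ) + 1) / 2 ≤ (∑ m ∈ Icc 1 x, f m) ^ 2 := by linarith
  calc Real.sqrt (Real.log ((x : ℝ) + 1) / 2)
      ≤ Real.sqrt ((∑ m ∈ Icc 1 x, f m) ^ 2) := Real.sqrt_le_sqrt h1
    _ = ∑ m ∈ Icc 1 x, f m := Real.sqrt_sq hS

lemma even_sum_lower (n : ℕ) :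
    (1 / 4 : ℝ) * ∑ m ∈ Icc 1 (n / 2), f m ≤
      ∑ a ∈ (Icc 1 n).filter (fun a => Even a),
        (1 : ℝ) / (a.divisors.card * a.totient) := by
  have hsub : (Icc 1 (n / 2)).image (fun m => 2 * m)
      ⊆ (Icc 1 n).filter (fun a => Even a) := by
    intro a ha
    obtain ⟨m, hm, rfl⟩ := Finset.mem_image.mp ha
    rw [Finset.mem_Icc] at hm
    rw [Finset.mem_filter, Finset.mem_Icc]
    exact ⟨⟨by omega, by omega⟩, ⟨m, by ring⟩⟩
  have hinj : ∀ a ∈ Icc 1 (n / 2), ∀ b ∈ Icc 1 (n / 2),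
      (fun m => 2 * m) a = (fun m => 2 * m) b → a = b := by
    intro a _ b _ h
    simpa using h
  have hterm : ∀ m ∈ Icc 1 (n / 2),
      (1 / 4 : ℝ) * f m ≤ (1 : ℝ) / ((2 * m).divisors.card * (2 * m).totient) := by
    intro m hm
    rw [Finset.mem_Icc] at hm
    have hm0 : m ≠ 0 := by omega
    have ht : ((2 * m).divisors.card : ℝ) ≤ 2 * m.divisors.card := by
      exact_mod_cast tau_two_mul_le hm0
    have hp : ((2 * m).totient : ℝ) ≤ 2 * m := by
      exact_mod_cast Nat.totient_le (2 * m)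
    have htp : (0 : ℝ) < ((2 * m).divisors.card : ℝ) * ((2 * m).totient : ℝ) := by
      have h1 : 0 < (2 * m).divisors.card := tau_pos (by omega)
      have h2 : 0 < (2 * m).totient := Nat.totient_pos.mpr (by omega)
      exact mul_pos (by exact_mod_cast h1) (by exact_mod_cast h2)
    have hbig : ((2 * m).divisors.card : ℝ) * ((2 * m).totient : ℝ)
        ≤ 4 * ((m : ℝ) * m.divisors.card) := by
      have ht0 : (0 : ℝ) ≤ ((2 * m).divisors.card : ℝ) := by positivity
      have hp0 : (0 : ℝ) ≤ 2 * (m : ℝ) := by positivity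
      calc ((2 * m).divisors.card : ℝ) * ((2 * m).totient : ℝ)
          ≤ (2 * (m.divisors.card : ℝ)) * (2 * (m : ℝ)) :=
            mul_le_mul ht hp (by positivity) (by positivity)
        _ = 4 * ((m : ℝ) * m.divisors.card) := by ring
    have : (1 / 4 : ℝ) * f m = 1 / (4 * ((m : ℝ) * m.divisors.card)) := by
      unfold f
      rw [div_mul_div_comm, one_mul]
    rw [this]
    exact one_div_le_one_div_of_le htp hbig
  calc (1 / 4 : ℝ) * ∑ m ∈ Icc 1 (n / 2), f m
      = ∑ m ∈ Icc 1 (n / 2), (1 / 4 : ℝ) * f m := Finset.mul_sum _ _ _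
    _ ≤ ∑ m ∈ Icc 1 (n / 2), (1 : ℝ) / ((2 * m).divisors.card * (2 * m).totient) :=
        Finset.sum_le_sum hterm
    _ = ∑ a ∈ (Icc 1 (n / 2)).image (fun m => 2 * m),
          (1 : ℝ) / (a.divisors.card * a.totient) := by rw [Finset.sum_image hinj]
    _ ≤ ∑ a ∈ (Icc 1 n).filter (fun a => Even a),
          (1 : ℝ) / (a.divisors.card * a.totient) := by
        refine Finset.sum_le_sum_of_subset_of_nonneg hsub (fun a _ _ => by positivity)

end SumTauAux

/-- There exists an absolute constant `c > 0` such that for all sufficiently large `y`,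
`∑_{a ≤ y, a even} 1/(τ(a)·φ(a)) ≥ c·(log y)^(1/2)`. -/
theorem sum_inv_tau_totient_even_lower :
    ∃ c : ℝ, 0 < c ∧ ∃ y₀ : ℝ, ∀ y : ℝ, y ≥ y₀ →
      (∑ a ∈ (Finset.Icc 1 ⌊y⌋₊).filter (fun a => Even a),
          (1 : ℝ) / (a.divisors.card * a.totient)) ≥
        c * (Real.log y) ^ ((1 : ℝ) / 2) := by
  refine ⟨1 / 8, by norm_num, 100, fun y hy => ?_⟩
  have hy100 : (100 : ℝ) ≤ y := hy
  have hy0 : (0 : ℝ) < y := by linarith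
  set n := ⌊y⌋₊ with hn
  set x := n / 2 with hx
  have hfl : y - 1 < (n : ℝ) := Nat.sub_one_lt_floor y
  have h2x : n ≤ 2 * x + 1 := by omega
  have h2xr : (n : ℝ) ≤ 2 * (x : ℝ) + 1 := by exact_mod_cast h2x
  have hsy : Real.sqrt y ≤ (x : ℝ) + 1 := by
    have hs100 : (10 : ℝ) ≤ Real.sqrt y := by
      rw [show (10 : ℝ) = Real.sqrt 100 by
        rw [show (100 : ℝ) = 10 ^ 2 by norm_num, Real.sqrt_sq (by norm_num)]]
      exact Real.sqrt_le_sqrt hy100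
    have hsq : Real.sqrt y ^ 2 = y := Real.sq_sqrt hy0.le
    nlinarith [hsq, hs100, hfl, h2xr]
  have hlog : Real.log y / 2 ≤ Real.log ((x : ℝ) + 1) := by
    rw [← Real.log_sqrt hy0.le]
    apply Real.log_le_log (Real.sqrt_pos.mpr hy0) hsy
  have hS := SumTauAux.S_lower x
  have hE := SumTauAux.even_sum_lower n
  have hlogy : (0 : ℝ) ≤ Real.log y := Real.log_nonneg (by linarith)
  have hsqrt : Real.sqrt (Real.log y / 4) ≤ Real.sqrt (Real.log ((x : ℝ) + 1) / 2) :=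
    Real.sqrt_le_sqrt (by linarith)
  have hhalf : Real.sqrt (Real.log y / 4) = Real.sqrt (Real.log y) / 2 := by
    have h4 : Real.sqrt 4 = 2 := by
      rw [show (4 : ℝ) = 2 ^ 2 by norm_num, Real.sqrt_sq (by norm_num : (0:ℝ) ≤ 2)]
    rw [Real.sqrt_div hlogy, h4]
  have hfinal : (1 / 8 : ℝ) * Real.sqrt (Real.log y)
      ≤ ∑ a ∈ (Finset.Icc 1 n).filter (fun a => Even a),
          (1 : ℝ) / (a.divisors.card * a.totient) := by
    calc (1 / 8 : ℝ) * Real.sqrt (Real.log y)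
        = (1 / 4) * (Real.sqrt (Real.log y) / 2) := by ring
      _ = (1 / 4) * Real.sqrt (Real.log y / 4) := by rw [hhalf]
      _ ≤ (1 / 4) * Real.sqrt (Real.log ((x : ℝ) + 1) / 2) := by linarith [hsqrt]
      _ ≤ (1 / 4) * ∑ m ∈ Finset.Icc 1 x, SumTauAux.f m := by linarith [hS]
      _ ≤ _ := hE
  rw [ge_iff_le, show (Real.log y) ^ ((1 : ℝ) / 2) = Real.sqrt (Real.log y) from
    (Real.sqrt_eq_rpow _).symm]
  exact hfinal
end

section
/- There exists an absolute constant c > 0 such that for all sufficiently large y, Σ_{n ≤ y} 1/(n·τ(n)) ≥ c·(log y)^{1/2}. -/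
open Finset

/-- The summand `1/(n τ(n))`. -/
noncomputable def gfun (n : ℕ) : ℝ := 1 / (n * n.divisors.card)

lemma gfun_nonneg (n : ℕ) : 0 ≤ gfun n := by
  unfold gfun; positivity

/-- Key identity: for squarefree `N`, summing `g(d) g(e)` over factorizations `de = N`
gives `1/N`. -/
lemma sum_antidiag_gfun {N : ℕ} (hN : Squarefree N) :
    ∑ p ∈ N.divisorsAntidiagonal, gfun p.1 * gfun p.2 = 1 / N := by
  have hN0 : N ≠ 0 := hN.ne_zero
  have hτ0 : (0:ℝ) < N.divisors.card := by
    have : 0 < N.divisors.card :=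
      Finset.card_pos.mpr ⟨1, Nat.one_mem_divisors.mpr hN0⟩
    exact_mod_cast this
  have hstep : ∀ p ∈ N.divisorsAntidiagonal,
      gfun p.1 * gfun p.2 = 1 / (N * N.divisors.card) := by
    intro p hp
    obtain ⟨hmul, -⟩ := Nat.mem_divisorsAntidiagonal.mp hp
    have hsf : Squarefree (p.1 * p.2) := hmul ▸ hN
    have hcop : p.1.Coprime p.2 := Nat.coprime_of_squarefree_mul hsf
    have hτ : N.divisors.card = p.1.divisors.card * p.2.divisors.card := by
      rw [← hmul]; exact hcop.card_divisors_mul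
    unfold gfun
    rw [div_mul_div_comm, one_mul]
    congr 1
    rw [← hmul, hcop.card_divisors_mul]
    push_cast
    ring
  rw [Finset.sum_congr rfl hstep]
  rw [Finset.sum_const]
  have hcard : N.divisorsAntidiagonal.card = N.divisors.card := by
    have := Nat.sum_divisorsAntidiagonal (fun _ _ => (1:ℕ)) (n := N)
    simpa [Finset.sum_const] using this
  rw [hcard, nsmul_eq_mul]
  have hNpos : (0:ℝ) < N := by exact_mod_cast Nat.pos_of_ne_zero hN0
  field_simp

/-- The squarefree harmonic sum up to `x` is at most the square of `∑ g`. -/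
lemma sqfree_sum_le_sq (x : ℕ) :
    ∑ N ∈ (Icc 1 x).filter Squarefree, (1:ℝ) / N ≤ (∑ n ∈ Icc 1 x, gfun n) ^ 2 := by
  classical
  have hrw : ∑ N ∈ (Icc 1 x).filter Squarefree, (1:ℝ) / N =
      ∑ p ∈ ((Icc 1 x).filter Squarefree).biUnion (fun N => N.divisorsAntidiagonal),
        gfun p.1 * gfun p.2 := by
    rw [Finset.sum_biUnion]
    · exact Finset.sum_congr rfl fun N hN => by
        rw [sum_antidiag_gfun (Finset.mem_filter.mp hN).2]
    · intro M hM N hN hMN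
      simp only [Finset.disjoint_left]
      intro p hpM hpN
      obtain ⟨h1, -⟩ := Nat.mem_divisorsAntidiagonal.mp hpM
      obtain ⟨h2, -⟩ := Nat.mem_divisorsAntidiagonal.mp hpN
      exact hMN (h1 ▸ h2)
  rw [hrw, sq, Finset.sum_mul_sum, ← Finset.sum_product']
  apply Finset.sum_le_sum_of_subset_of_nonneg
  · intro p hp
    obtain ⟨N, hN, hpN⟩ := Finset.mem_biUnion.mp hp
    obtain ⟨hNx, -⟩ := Finset.mem_filter.mp hN
    obtain ⟨-, hNx'⟩ := Finset.mem_Icc.mp hNx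
    obtain ⟨hmul, hN0⟩ := Nat.mem_divisorsAntidiagonal.mp hpN
    have h1 : p.1 ∣ N := ⟨p.2, hmul.symm⟩
    have h2 : p.2 ∣ N := ⟨p.1, by rw [← hmul, mul_comm]⟩
    have hp1 : p.1 ≠ 0 := (Nat.ne_zero_of_mem_divisorsAntidiagonal hpN).1
    have hp2 : p.2 ≠ 0 := (Nat.ne_zero_of_mem_divisorsAntidiagonal hpN).2
    rw [Finset.mem_product, Finset.mem_Icc, Finset.mem_Icc]
    exact ⟨⟨Nat.one_le_iff_ne_zero.mpr hp1, (Nat.le_of_dvd (Nat.pos_of_ne_zero hN0) h1).trans hNx'⟩,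
      ⟨Nat.one_le_iff_ne_zero.mpr hp2, (Nat.le_of_dvd (Nat.pos_of_ne_zero hN0) h2).trans hNx'⟩⟩
  · intro p _ _
    exact mul_nonneg (gfun_nonneg _) (gfun_nonneg _)

/-- `∑_{b ≤ x} 1/b² ≤ 2`. -/
lemma sum_inv_sq_le (x : ℕ) : ∑ b ∈ Icc 1 x, (1:ℝ) / (b:ℝ)^2 ≤ 2 := by
  induction x with
  | zero => simp
  | succ n ih =>
    rcases Nat.eq_zero_or_pos n with hn | hn
    · subst hn; norm_num
    have key : ∑ b ∈ Icc 1 n, (1:ℝ) / (b:ℝ)^2 ≤ 2 - 1/n := by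
      clear ih
      induction n with
      | zero => simp at hn
      | succ m ih2 =>
        rcases Nat.eq_zero_or_pos m with hm | hm
        · subst hm; norm_num
        have h2 := ih2 hm
        rw [Finset.sum_Icc_succ_top (by omega : 1 ≤ m + 1)]
        have hm' : (0:ℝ) < m := by exact_mod_cast hm
        have : (1:ℝ) / ((m:ℝ)+1)^2 ≤ 1/m - 1/(m+1) := by
          rw [div_sub_div _ _ (ne_of_gt hm') (by positivity)]
          rw [div_le_div_iff₀ (by positivity) (by positivity)]
          ring_nf
          nlinarith [hm']
        push_cast
        push_cast at h2 this
        linarith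
    have hn' : (0:ℝ) < n := by exact_mod_cast hn
    rw [Finset.sum_Icc_succ_top (by omega : 1 ≤ n + 1)]
    have hpos : (0:ℝ) ≤ 1 / ((n:ℝ)+1)^2 := by positivity
    have : (1:ℝ) / ((n:ℝ)+1)^2 ≤ 1/n := by
      apply div_le_div_of_nonneg_left (by norm_num) hn'
      nlinarith
    push_cast
    push_cast at key
    linarith

/-- Harmonic sum is at most twice the squarefree harmonic sum. -/
lemma harmonic_le_two_mul_sqfree (x : ℕ) :
    ∑ n ∈ Icc 1 x, (1:ℝ) / n ≤ 2 * ∑ N ∈ (Icc 1 x).filter Squarefree, (1:ℝ) / N := by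
  classical
  choose a b hab hsq using Nat.sq_mul_squarefree
  -- map n ↦ (a n, b n) ∈ filtered set ×ˢ Icc 1 x
  have key : ∑ n ∈ Icc 1 x, (1:ℝ) / n ≤
      ∑ p ∈ ((Icc 1 x).filter Squarefree) ×ˢ (Icc 1 x), (1:ℝ) / (p.1 * (p.2:ℝ)^2) := by
    have himg : ∑ n ∈ Icc 1 x, (1:ℝ) / n =
        ∑ p ∈ (Icc 1 x).image (fun n => (a n, b n)), (1:ℝ) / (p.1 * (p.2:ℝ)^2) := by
      rw [Finset.sum_image]
      · apply Finset.sum_congr rfl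
        intro n hn
        obtain ⟨hn1, -⟩ := Finset.mem_Icc.mp hn
        have : ((b n : ℝ))^2 * (a n : ℝ) = (n : ℝ) := by exact_mod_cast congrArg Nat.cast (hab n)
        rw [← this]; ring_nf
      · intro n hn m hm h
        have h1 : a n = a m := congrArg Prod.fst h
        have h2 : b n = b m := congrArg Prod.snd h
        have := hab n
        rw [h1, h2, hab m] at this
        exact this.symm
    rw [himg]
    apply Finset.sum_le_sum_of_subset_of_nonneg
    · intro p hp
      obtain ⟨n, hn, hpn⟩ := Finset.mem_image.mp hp
      obtain ⟨hn1, hn2⟩ := Finset.mem_Icc.mp hn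
      have hn0 : n ≠ 0 := by omega
      have ha0 : a n ≠ 0 := by
        intro h; have h' := hab n; rw [h, mul_zero] at h'; exact hn0 h'.symm
      have hb0 : b n ≠ 0 := by
        intro h; have h' := hab n; rw [h] at h'; simp at h'; omega
      have hax : a n ≤ x := by
        have : a n ∣ n := Dvd.intro_left _ (hab n)
        exact (Nat.le_of_dvd (by omega) this).trans hn2
      have hbx : b n ≤ x := by
        have h1 : b n ≤ b n ^ 2 := Nat.le_self_pow two_ne_zero _
        have h2 : b n ^ 2 ∣ n := Dvd.intro _ (hab n)
        exact (h1.trans (Nat.le_of_dvd (by omega) h2)).trans hn2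
      rw [← hpn, Finset.mem_product, Finset.mem_filter, Finset.mem_Icc, Finset.mem_Icc]
      exact ⟨⟨⟨Nat.one_le_iff_ne_zero.mpr ha0, hax⟩, hsq n⟩,
        ⟨Nat.one_le_iff_ne_zero.mpr hb0, hbx⟩⟩
    · intro p _ _; positivity
  refine key.trans ?_
  rw [Finset.sum_product]
  have : ∀ N ∈ (Icc 1 x).filter Squarefree,
      ∑ b' ∈ Icc 1 x, (1:ℝ) / (N * (b':ℝ)^2) ≤ (1/(N:ℝ)) * 2 := by
    intro N hN
    obtain ⟨hN1, -⟩ := Finset.mem_Icc.mp (Finset.mem_filter.mp hN).1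
    have hN0 : (0:ℝ) < N := by exact_mod_cast hN1
    have : ∑ b' ∈ Icc 1 x, (1:ℝ) / (N * (b':ℝ)^2) =
        (1/N) * ∑ b' ∈ Icc 1 x, (1:ℝ) / (b':ℝ)^2 := by
      rw [Finset.mul_sum]
      apply Finset.sum_congr rfl
      intro b' _
      rw [div_mul_div_comm, one_mul]
    rw [this]
    exact mul_le_mul_of_nonneg_left (sum_inv_sq_le x) (by positivity)
  calc ∑ N ∈ (Icc 1 x).filter Squarefree, ∑ b' ∈ Icc 1 x, (1:ℝ) / (N * (b':ℝ)^2)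
      ≤ ∑ N ∈ (Icc 1 x).filter Squarefree, (1/(N:ℝ)) * 2 := Finset.sum_le_sum this
    _ = 2 * ∑ N ∈ (Icc 1 x).filter Squarefree, (1:ℝ) / N := by
        rw [← Finset.sum_mul, mul_comm]

/-- `log x ≤ ∑_{n ≤ x} 1/n`. -/
lemma log_le_harmonic_sum (x : ℕ) :
    Real.log x ≤ ∑ n ∈ Icc 1 x, (1:ℝ) / n := by
  have h := log_le_harmonic_floor (x : ℝ) (by positivity)
  rw [Nat.floor_natCast] at h
  refine h.trans (le_of_eq ?_)
  unfold harmonic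
  push_cast
  rw [← Finset.Ico_add_one_right_eq_Icc, Finset.sum_Ico_eq_sum_range]
  simp [one_div, add_comm]

/-- There exists an absolute constant `c > 0` such that for all sufficiently large `y`,
`∑_{n ≤ y} 1/(n·τ(n)) ≥ c·(log y)^(1/2)`. -/
theorem sum_inv_n_tau_lower :
    ∃ c : ℝ, 0 < c ∧ ∃ y₀ : ℝ, ∀ y : ℝ, y ≥ y₀ →
      (∑ n ∈ Finset.Icc 1 ⌊y⌋₊, (1 : ℝ) / (n * n.divisors.card)) ≥
        c * (Real.log y) ^ ((1 : ℝ) / 2) := by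
  refine ⟨1/2, by norm_num, 4, fun y hy => ?_⟩
  set x := ⌊y⌋₊ with hx
  set S := ∑ n ∈ Icc 1 x, gfun n with hS
  have hSdef : (∑ n ∈ Finset.Icc 1 x, (1 : ℝ) / (n * n.divisors.card)) = S := rfl
  rw [ge_iff_le]
  have hy0 : (0:ℝ) < y := by linarith
  have hlogy : 0 ≤ Real.log y := Real.log_nonneg (by linarith)
  -- step 1: (1/4) log y ≤ log x
  have hfloor : y - 1 < (x:ℝ) := Nat.sub_one_lt_floor y
  have hxy : y / 2 ≤ (x:ℝ) := by linarith
  have hlogx : (1/2) * Real.log y ≤ Real.log x := by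
    have h1 : Real.log (y/2) ≤ Real.log x :=
      Real.log_le_log (by linarith) hxy
    rw [Real.log_div (ne_of_gt hy0) (by norm_num)] at h1
    have h2 : Real.log 2 ≤ (1/2) * Real.log y := by
      have : Real.log 4 ≤ Real.log y := Real.log_le_log (by norm_num) hy
      have h4 : Real.log 4 = 2 * Real.log 2 := by
        rw [show (4:ℝ) = 2^2 by norm_num, Real.log_pow]
        push_cast; ring
      linarith
    linarith
  -- step 2: log x ≤ 2 * sqfree sum ≤ 2 * S^2... combine
  have hchain : Real.log x ≤ 2 * S ^ 2 := by
    calc Real.log x ≤ ∑ n ∈ Icc 1 x, (1:ℝ) / n := log_le_harmonic_sum x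
      _ ≤ 2 * ∑ N ∈ (Icc 1 x).filter Squarefree, (1:ℝ) / N := harmonic_le_two_mul_sqfree x
      _ ≤ 2 * S ^ 2 := by
          have := sqfree_sum_le_sq x
          linarith
  have hkey : (1/4) * Real.log y ≤ S ^ 2 := by linarith
  have hSnn : 0 ≤ S := Finset.sum_nonneg fun n _ => gfun_nonneg n
  -- conclude
  have hsqrt : Real.sqrt ((1/4) * Real.log y) ≤ S := by
    have h1 : Real.sqrt ((1/4) * Real.log y) ≤ Real.sqrt (S^2) :=
      Real.sqrt_le_sqrt hkey
    rwa [Real.sqrt_sq hSnn] at h1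
  have heq : Real.sqrt ((1/4) * Real.log y) = (1/2) * Real.sqrt (Real.log y) := by
    rw [Real.sqrt_mul (by norm_num), show (1/4:ℝ) = (1/2)^2 by norm_num,
      Real.sqrt_sq (by norm_num)]
  rw [hSdef, ← Real.sqrt_eq_rpow]
  rw [heq] at hsqrt
  exact hsqrt
end

section
/- There exists an absolute constant B > 0 such that for every integer l ≥ 0 and all x ≥ 16, Σ 1/φ(a) ≤ (0.5·log log x + B)^l / l!, where the sum runs over positive integers a ≤ x with a ∈ 𝓜 and ω(a) = l. -/
open scoped Classical
open Finset Filter Topology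

section Helpers


-- |x + log(1-x)| ≤ x²/(1-|x|)
lemma log_one_sub_bound {x : ℝ} (hx : |x| < 1) : |x + Real.log (1 - x)| ≤ x ^ 2 / (1 - |x|) := by
  have := Real.abs_log_sub_add_sum_range_le hx 1
  simpa [Finset.sum_range_one, sq_abs] using this

lemma abs_log_one_sub_le {x : ℝ} (hx : |x| ≤ 2⁻¹) : |Real.log (1 - x)| ≤ 2 * |x| := by
  have hx1 : |x| < 1 := lt_of_le_of_lt hx (by norm_num)
  have h1 := log_one_sub_bound hx1
  have h2 : x ^ 2 / (1 - |x|) ≤ |x| := by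
    rw [div_le_iff₀ (by linarith)]
    nlinarith [abs_nonneg x, sq_abs x]
  calc |Real.log (1 - x)| = |x + Real.log (1 - x) - x| := by ring_nf
    _ ≤ |x + Real.log (1 - x)| + |x| := abs_sub _ _
    _ ≤ 2 * |x| := by linarith

noncomputable def pext (g : Nat.Primes → ℝ) : ℕ → ℝ :=
  fun n => if h : n.Prime then g ⟨n, h⟩ else 0

lemma pext_comp (g : Nat.Primes → ℝ) :
    (pext g) ∘ ((↑) : {n : ℕ // n ∈ {m | m.Prime}} → ℕ) = fun p => g ⟨p.1, p.2⟩ := by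
  funext p
  exact dif_pos p.2

lemma pext_indicator (g : Nat.Primes → ℝ) :
    Set.indicator {m | m.Prime} (pext g) = pext g := by
  funext n
  simp only [Set.indicator_apply, Set.mem_setOf_eq]
  by_cases h : n.Prime
  · rw [if_pos h]
  · rw [if_neg h, pext, dif_neg h]

lemma pext_summable {g : Nat.Primes → ℝ} (h : Summable g) : Summable (pext g) := by
  rw [← pext_indicator g, ← summable_subtype_iff_indicator, pext_comp]
  exact h

lemma pext_tsum {g : Nat.Primes → ℝ} (h : Summable g) :
    ∑' n : ℕ, pext g n = ∑' p : Nat.Primes, g p := by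
  conv_lhs => rw [← pext_indicator g]
  rw [← _root_.tsum_subtype]
  exact tsum_congr fun p => dif_pos p.2

lemma tendsto_primesBelow {g : Nat.Primes → ℝ} (h : Summable g) :
    Tendsto (fun N : ℕ => ∑ p ∈ N.primesBelow, pext g p) atTop
      (𝓝 (∑' p : Nat.Primes, g p)) := by
  have h1 : ∀ N : ℕ, ∑ p ∈ N.primesBelow, pext g p = ∑ n ∈ Finset.range N, pext g n := by
    intro N
    refine Finset.sum_subset (Finset.filter_subset _ _) fun n _ hn => ?_
    have hnp : ¬ n.Prime := fun hp => hn (by simp [Nat.primesBelow, Finset.mem_filter, hp, ‹n ∈ Finset.range N›])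
    simp [pext, hnp]
  simp only [h1]
  have := (pext_summable h).hasSum.tendsto_sum_nat
  rwa [pext_tsum h] at this

lemma pext_prime (g : Nat.Primes → ℝ) {p : ℕ} (hp : p.Prime) : pext g p = g ⟨p, hp⟩ :=
  dif_pos hp

theorem exp_tsum_primes {f : ℕ →*₀ ℝ} (hsum : Summable (fun n => ‖f n‖))
    (hf : ∀ {p : ℕ}, p.Prime → |f p| ≤ 2⁻¹) :
    Real.exp (∑' p : Nat.Primes, -Real.log (1 - f p)) = ∑' n : ℕ, f n := by
  set G : Nat.Primes → ℝ := fun p => -Real.log (1 - f p) with hG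
  have hGsum : Summable G := by
    have hfs : Summable (fun p : Nat.Primes => ‖f p‖) := hsum.subtype _
    refine (hfs.mul_left 2).of_norm_bounded fun p => ?_
    simpa [hG, Real.norm_eq_abs] using abs_log_one_sub_le (by simpa using hf p.2)
  have h1 : Tendsto (fun N : ℕ => Real.exp (∑ p ∈ N.primesBelow, pext G p)) atTop
      (𝓝 (Real.exp (∑' p : Nat.Primes, G p))) := (tendsto_primesBelow hGsum).rexp
  have h2 : ∀ N : ℕ, Real.exp (∑ p ∈ N.primesBelow, pext G p)
      = ∏ p ∈ N.primesBelow, (1 - f p)⁻¹ := by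
    intro N
    rw [Real.exp_sum]
    refine Finset.prod_congr rfl fun p hp => ?_
    have hpp : p.Prime := Nat.prime_of_mem_primesBelow hp
    have hpos : 0 < 1 - f p := by
      have := abs_le.mp (hf hpp)
      linarith [this.2]
    rw [pext_prime G hpp]
    simp only [hG]
    rw [Real.exp_neg, Real.exp_log hpos]
  simp only [h2] at h1
  exact tendsto_nhds_unique h1 (EulerProduct.eulerProduct_completely_multiplicative hsum)

noncomputable def zetaHom (s : ℝ) (hs : s ≠ 0) : ℕ →*₀ ℝ where
  toFun n := (n : ℝ) ^ (-s)
  map_zero' := by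
    show ((0:ℕ) : ℝ) ^ (-s) = 0
    rw [Nat.cast_zero, Real.zero_rpow (neg_ne_zero.mpr hs)]
  map_one' := by
    show ((1:ℕ) : ℝ) ^ (-s) = 1
    rw [Nat.cast_one, Real.one_rpow]
  map_mul' m n := by
    show ((m * n : ℕ) : ℝ) ^ (-s) = _
    rw [Nat.cast_mul, Real.mul_rpow (Nat.cast_nonneg m) (Nat.cast_nonneg n)]

lemma zetaHom_apply (s : ℝ) (hs : s ≠ 0) (n : ℕ) : zetaHom s hs n = (n : ℝ) ^ (-s) := rfl

lemma summable_zetaHom {s : ℝ} (hs1 : 1 < s) (hs0 : s ≠ 0) :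
    Summable (fun n => ‖zetaHom s hs0 n‖) := by
  have : Summable (fun n : ℕ => (n : ℝ) ^ (-s)) :=
    Real.summable_nat_rpow.mpr (by linarith)
  refine this.congr fun n => ?_
  rw [Real.norm_eq_abs, zetaHom_apply, abs_of_nonneg (Real.rpow_nonneg (Nat.cast_nonneg n) _)]

lemma prime_rpow_le_half {s : ℝ} (hs1 : 1 ≤ s) {p : ℕ} (hp : p.Prime) :
    |(p : ℝ) ^ (-s)| ≤ 2⁻¹ := by
  have hp2 : (2 : ℝ) ≤ (p : ℝ) := by exact_mod_cast hp.two_le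
  rw [abs_of_nonneg (Real.rpow_nonneg (by positivity) _), Real.rpow_neg (by positivity)]
  rw [inv_le_inv₀ (by positivity) (by norm_num)]
  calc (2:ℝ) = (2:ℝ) ^ (1:ℝ) := (Real.rpow_one 2).symm
    _ ≤ (2:ℝ) ^ s := Real.rpow_le_rpow_of_exponent_le (by norm_num) hs1
    _ ≤ (p:ℝ) ^ s := Real.rpow_le_rpow (by norm_num) hp2 (by linarith)

lemma summable_primes_rpow {s : ℝ} (hs1 : 1 < s) :
    Summable (fun p : Nat.Primes => (p : ℝ) ^ (-s)) :=
  Nat.Primes.summable_rpow.mpr (by linarith)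

lemma summable_neg_log_one_sub {s : ℝ} (hs1 : 1 < s) {c : ℕ → ℝ} (hc : ∀ n, |c n| ≤ 1) :
    Summable (fun p : Nat.Primes => -Real.log (1 - c p * (p : ℝ) ^ (-s))) := by
  refine ((summable_primes_rpow hs1).mul_left 2).of_norm_bounded fun p => ?_
  have h1 : |c p * (p:ℝ) ^ (-s)| ≤ 2⁻¹ := by
    rw [abs_mul]
    calc |c p| * |(p:ℝ)^(-s)| ≤ 1 * 2⁻¹ :=
      mul_le_mul (hc p) (prime_rpow_le_half hs1.le p.2) (abs_nonneg _) zero_le_one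
    _ = 2⁻¹ := one_mul _
  rw [Real.norm_eq_abs, abs_neg]
  calc |Real.log (1 - c p * (p:ℝ)^(-s))| ≤ 2 * |c p * (p:ℝ)^(-s)| := abs_log_one_sub_le h1
    _ ≤ 2 * (p:ℝ)^(-s) := by
        rw [abs_mul]
        have := Real.rpow_nonneg (Nat.cast_nonneg p.1) (-s)
        nlinarith [hc p, abs_nonneg (c p.1), abs_of_nonneg this]

lemma zeta_sum_le {s : ℝ} (hs1 : 1 < s) (hs0 : s ≠ 0) :
    (∑' n : ℕ, zetaHom s hs0 n) ≤ 1 + 1/(s-1) := by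
  have key := ZetaAsymptotics.zeta_limit_aux1 hs1
  have hterm : 0 ≤ ZetaAsymptotics.termTSum s :=
    tsum_nonneg fun n => ZetaAsymptotics.term_nonneg _ _
  have heq : (∑' n : ℕ, zetaHom s hs0 n) = ∑' n : ℕ, 1 / (n + 1 : ℝ) ^ s := by
    rw [Summable.tsum_eq_zero_add (summable_zetaHom hs1 hs0).of_norm]
    rw [zetaHom_apply, Nat.cast_zero, Real.zero_rpow (neg_ne_zero.mpr hs0), zero_add]
    refine tsum_congr fun n => ?_
    rw [zetaHom_apply, Real.rpow_neg (by positivity), one_div]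
    push_cast
    rfl
  rw [heq]
  nlinarith [key, mul_nonneg (by linarith : (0:ℝ) ≤ s) hterm]

lemma tsum_primes_rpow_le {s : ℝ} (hs1 : 1 < s) (hs2 : s ≤ 2) :
    ∑' p : Nat.Primes, (p : ℝ) ^ (-s) ≤ Real.log (1/(s-1)) + 1 := by
  have hs0 : (s : ℝ) ≠ 0 := ne_of_gt (by linarith)
  have hexp := exp_tsum_primes (summable_zetaHom hs1 hs0)
    (fun {p} hp => prime_rpow_le_half hs1.le hp)
  set T := ∑' p : Nat.Primes, -Real.log (1 - zetaHom s hs0 p) with hT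
  -- ∑' p^{-s} ≤ T
  have hle : ∑' p : Nat.Primes, (p : ℝ) ^ (-s) ≤ T := by
    refine Summable.tsum_le_tsum (fun p => ?_) (summable_primes_rpow hs1) ?_
    · have hx : (0:ℝ) ≤ (p:ℝ)^(-s) := Real.rpow_nonneg (Nat.cast_nonneg _) _
      have hx2 : (p:ℝ)^(-s) ≤ 2⁻¹ := by
        have := prime_rpow_le_half hs1.le p.2
        rwa [abs_of_nonneg hx] at this
      have hpos : 0 < 1 - (p:ℝ)^(-s) := by linarith
      have := Real.log_le_sub_one_of_pos hpos
      have hzeq : zetaHom s hs0 p = (p:ℝ)^(-s) := rfl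
      rw [hzeq]
      linarith
    · have := summable_neg_log_one_sub hs1 (c := fun _ => 1) (fun n => by norm_num)
      refine this.congr fun p => by rw [one_mul]; rfl
  -- T = log Z
  have hZpos : 0 < ∑' n : ℕ, zetaHom s hs0 n := by
    rw [← hexp]; exact Real.exp_pos _
  have hTlog : T = Real.log (∑' n : ℕ, zetaHom s hs0 n) := by
    rw [← hexp, Real.log_exp]
  have hZle : (∑' n : ℕ, zetaHom s hs0 n) ≤ 2 * (1/(s-1)) := by
    have h1 : (1:ℝ) ≤ 1/(s-1) := by
      rw [le_one_div (by linarith) (by linarith)] <;> linarith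
    have := zeta_sum_le hs1 hs0
    linarith
  calc ∑' p : Nat.Primes, (p : ℝ) ^ (-s) ≤ T := hle
    _ = Real.log (∑' n : ℕ, zetaHom s hs0 n) := hTlog
    _ ≤ Real.log (2 * (1/(s-1))) := Real.log_le_log hZpos hZle
    _ = Real.log 2 + Real.log (1/(s-1)) := Real.log_mul (by norm_num) (one_div_ne_zero (by linarith))
    _ ≤ Real.log (1/(s-1)) + 1 := by
        have : Real.log 2 ≤ 1 := by
          calc Real.log 2 ≤ 2 - 1 := Real.log_le_sub_one_of_pos (by norm_num)
            _ = 1 := by norm_num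
        linarith

noncomputable def kappa (n : ℕ) : ℝ := ((ZMod.χ₄ n : ℤ) : ℝ)

lemma kappa_eq (n : ℕ) :
    kappa n = if n % 2 = 0 then 0 else if n % 4 = 1 then 1 else -1 := by
  rw [kappa, ZMod.χ₄_nat_eq_if_mod_four]
  split_ifs <;> norm_num

lemma kappa_abs_le (n : ℕ) : |kappa n| ≤ 1 := by
  rw [kappa_eq]; split_ifs <;> norm_num

lemma kappa_mul (m n : ℕ) : kappa (m * n) = kappa m * kappa n := by
  rw [kappa, kappa, kappa, Nat.cast_mul, map_mul]
  push_cast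
  ring

lemma kappa_one : kappa 1 = 1 := by rw [kappa_eq]; norm_num

noncomputable def chiHom (s : ℝ) (hs : s ≠ 0) : ℕ →*₀ ℝ where
  toFun n := kappa n * (n : ℝ) ^ (-s)
  map_zero' := by
    show kappa 0 * ((0:ℕ) : ℝ) ^ (-s) = 0
    rw [Nat.cast_zero, Real.zero_rpow (neg_ne_zero.mpr hs), mul_zero]
  map_one' := by
    show kappa 1 * ((1:ℕ) : ℝ) ^ (-s) = 1
    rw [kappa_one, Nat.cast_one, Real.one_rpow, mul_one]
  map_mul' m n := by
    show kappa (m * n) * ((m * n : ℕ) : ℝ) ^ (-s) = _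
    rw [kappa_mul, Nat.cast_mul, Real.mul_rpow (Nat.cast_nonneg m) (Nat.cast_nonneg n)]
    show _ = kappa m * (m : ℝ) ^ (-s) * (kappa n * (n : ℝ) ^ (-s))
    ring

lemma chiHom_apply (s : ℝ) (hs : s ≠ 0) (n : ℕ) :
    chiHom s hs n = kappa n * (n : ℝ) ^ (-s) := rfl

lemma abs_chiHom_le (s : ℝ) (hs : s ≠ 0) (n : ℕ) : |chiHom s hs n| ≤ (n : ℝ) ^ (-s) := by
  rw [chiHom_apply, abs_mul, abs_of_nonneg (Real.rpow_nonneg (Nat.cast_nonneg n) _)]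
  have h2 := Real.rpow_nonneg (Nat.cast_nonneg n) (-s)
  nlinarith [kappa_abs_le n]

lemma summable_chiHom {s : ℝ} (hs1 : 1 < s) (hs0 : s ≠ 0) :
    Summable (fun n => ‖chiHom s hs0 n‖) := by
  have h : Summable (fun n : ℕ => (n : ℝ) ^ (-s)) :=
    Real.summable_nat_rpow.mpr (by linarith)
  exact h.of_nonneg_of_le (fun n => norm_nonneg _)
    (fun n => by rw [Real.norm_eq_abs]; exact abs_chiHom_le s hs0 n)

-- antitone helper
lemma rpow_neg_anti {a b s : ℝ} (ha : 0 < a) (hab : a ≤ b) (hs : 0 ≤ s) :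
    b ^ (-s) ≤ a ^ (-s) := by
  rw [Real.rpow_neg ha.le, Real.rpow_neg (ha.trans_le hab).le]
  exact inv_anti₀ (Real.rpow_pos_of_pos ha s) (Real.rpow_le_rpow ha.le hab hs)


private noncomputable def uu (s : ℝ) (q : ℕ) : ℝ := ((4 * q + 1 : ℕ) : ℝ) ^ (-s)
private noncomputable def hfun (s : ℝ) (q : ℕ) : ℝ := uu s q - ((4 * q + 3 : ℕ) : ℝ) ^ (-s)

lemma uu_nonneg (s : ℝ) (q : ℕ) : 0 ≤ uu s q := Real.rpow_nonneg (by positivity) _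

lemma uu_anti {s : ℝ} (hs : 1 < s) (q : ℕ) : uu s (q + 1) ≤ uu s q := by
  unfold uu
  apply rpow_neg_anti (by positivity) (by push_cast; linarith) (by linarith)

lemma hfun_nonneg {s : ℝ} (hs : 1 < s) (q : ℕ) : 0 ≤ hfun s q := by
  unfold hfun uu
  have : ((4 * q + 3 : ℕ) : ℝ) ^ (-s) ≤ ((4 * q + 1 : ℕ) : ℝ) ^ (-s) :=
    rpow_neg_anti (by positivity) (by push_cast; linarith) (by linarith)
  linarith

lemma summable_uu {s : ℝ} (hs : 1 < s) : Summable (uu s) := by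
  have hbase : Summable (fun q : ℕ => ((q + 1 : ℕ) : ℝ) ^ (-s)) := by
    exact_mod_cast (summable_nat_add_iff (f := fun n : ℕ => (n : ℝ) ^ (-s)) 1).mpr
      (Real.summable_nat_rpow.mpr (by linarith))
  refine hbase.of_nonneg_of_le (fun q => uu_nonneg s q) fun q => ?_
  unfold uu
  apply rpow_neg_anti (by positivity) (by push_cast; linarith) (by linarith)

lemma summable_hfun {s : ℝ} (hs : 1 < s) : Summable (hfun s) := by
  refine (summable_uu hs).of_nonneg_of_le (hfun_nonneg hs) fun q => ?_
  unfold hfun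
  have : 0 ≤ ((4 * q + 3 : ℕ) : ℝ) ^ (-s) := Real.rpow_nonneg (by positivity) _
  linarith

lemma tsum_hfun_le_one {s : ℝ} (hs : 1 < s) : ∑' q, hfun s q ≤ 1 := by
  set H : ℕ → ℝ := fun q => uu s q - uu s (q + 1) with hH
  have hle : ∀ q, hfun s q ≤ H q := by
    intro q
    simp only [hH, hfun]
    have : uu s (q+1) ≤ ((4 * q + 3 : ℕ) : ℝ) ^ (-s) := by
      unfold uu
      apply rpow_neg_anti (by positivity) (by push_cast; linarith) (by linarith)
    linarith
  have hHsum : Summable H := by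
    refine (summable_uu hs).of_nonneg_of_le (fun q => ?_) (fun q => ?_) <;>
      simp only [hH]
    · linarith [uu_anti hs q]
    · linarith [uu_nonneg s (q+1)]
  have hHtsum : ∑' q, H q = 1 := by
    have hpart : ∀ n : ℕ, ∑ q ∈ Finset.range n, H q = uu s 0 - uu s n :=
      fun n => Finset.sum_range_sub' (uu s) n
    have hu0 : uu s 0 = 1 := by unfold uu; norm_num
    have hu_lim : Tendsto (uu s) atTop (𝓝 0) := (summable_uu hs).tendsto_atTop_zero
    have h2 : Tendsto (fun n => ∑ q ∈ Finset.range n, H q) atTop (𝓝 (1 - 0)) := by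
      simp only [hpart, hu0]
      exact tendsto_const_nhds.sub hu_lim
    have h3 := hHsum.hasSum.tendsto_sum_nat
    simpa using tendsto_nhds_unique h3 h2
  calc ∑' q, hfun s q ≤ ∑' q, H q := Summable.tsum_le_tsum hle (summable_hfun hs) hHsum
    _ = 1 := hHtsum

lemma half_le_tsum_hfun {s : ℝ} (hs : 1 < s) : (1:ℝ)/2 ≤ ∑' q, hfun s q := by
  have h0 : (1:ℝ)/2 ≤ hfun s 0 := by
    unfold hfun uu
    norm_num
    have h31 : ((3:ℕ) : ℝ) ^ (-s) ≤ 1/3 := by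
      push_cast
      rw [Real.rpow_neg (by norm_num)]
      rw [show (1:ℝ)/3 = ((3:ℝ)^(1:ℝ))⁻¹ by rw [Real.rpow_one]; norm_num]
      exact inv_anti₀ (by rw [Real.rpow_one]; norm_num)
        (Real.rpow_le_rpow_of_exponent_le (by norm_num) hs.le)
    push_cast at h31 ⊢
    linarith
  calc (1:ℝ)/2 ≤ hfun s 0 := h0
    _ ≤ ∑' q, hfun s q := Summable.le_tsum (summable_hfun hs) 0 fun j _ => hfun_nonneg hs j

lemma chi_L_mem {s : ℝ} (hs1 : 1 < s) (hs0 : s ≠ 0) :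
    (∑' n : ℕ, chiHom s hs0 n) ∈ Set.Icc (1/2 : ℝ) 1 := by
  have hsum : Summable (fun n => chiHom s hs0 n) := (summable_chiHom hs1 hs0).of_norm
  have hcomp : Summable (fun z : ℕ × Fin 4 => chiHom s hs0 ((Nat.divModEquiv 4).symm z)) :=
    hsum.comp_injective (Nat.divModEquiv 4).symm.injective
  have h1 : (∑' n : ℕ, chiHom s hs0 n) = ∑' q : ℕ, hfun s q := by
    rw [← Equiv.tsum_eq (Nat.divModEquiv 4).symm (fun n => chiHom s hs0 n)]
    rw [Summable.tsum_prod' hcomp fun q => hcomp.prod_factor q]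
    refine tsum_congr fun q => ?_
    rw [tsum_fintype]
    have c0 : (((0:Fin 4)) : ℕ) = 0 := rfl
    have c1 : (((1:Fin 4)) : ℕ) = 1 := rfl
    have c2 : (((2:Fin 4)) : ℕ) = 2 := rfl
    have c3 : (((3:Fin 4)) : ℕ) = 3 := rfl
    have hterm : ∀ r : Fin 4, chiHom s hs0 ((Nat.divModEquiv 4).symm (q, r))
        = chiHom s hs0 (q * 4 + (r : ℕ)) := fun r => rfl
    rw [Fin.sum_univ_four]
    simp only [hterm, c0, c1, c2, c3]
    have k0 : kappa (q * 4 + 0) = 0 := by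
      rw [kappa_eq, if_pos (by omega : (q * 4 + 0) % 2 = 0)]
    have k1 : kappa (q * 4 + 1) = 1 := by
      rw [kappa_eq, if_neg (by omega : ¬ (q * 4 + 1) % 2 = 0),
        if_pos (by omega : (q * 4 + 1) % 4 = 1)]
    have k2 : kappa (q * 4 + 2) = 0 := by
      rw [kappa_eq, if_pos (by omega : (q * 4 + 2) % 2 = 0)]
    have k3 : kappa (q * 4 + 3) = -1 := by
      rw [kappa_eq, if_neg (by omega : ¬ (q * 4 + 3) % 2 = 0),
        if_neg (by omega : ¬ (q * 4 + 3) % 4 = 1)]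
    simp only [chiHom_apply, k0, k1, k2, k3, zero_mul, one_mul, neg_one_mul]
    have e1 : q * 4 + 1 = 4 * q + 1 := by ring
    have e3 : q * 4 + 3 = 4 * q + 3 := by ring
    rw [e1, e3]
    unfold hfun uu
    ring
  rw [h1]
  exact ⟨half_le_tsum_hfun hs1, tsum_hfun_le_one hs1⟩

lemma abs_tsum_primes_chi {s : ℝ} (hs1 : 1 < s) (hs2 : s ≤ 2) :
    |∑' p : Nat.Primes, kappa p * (p : ℝ) ^ (-s)| ≤ 3 := by
  have hs0 : s ≠ 0 := ne_of_gt (by linarith)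
  have habs : ∀ {p : ℕ}, p.Prime → |chiHom s hs0 p| ≤ 2⁻¹ := by
    intro p hp
    calc |chiHom s hs0 p| ≤ (p:ℝ)^(-s) := abs_chiHom_le s hs0 p
      _ ≤ 2⁻¹ := by
          have := prime_rpow_le_half hs1.le hp
          rwa [abs_of_nonneg (Real.rpow_nonneg (Nat.cast_nonneg p) _)] at this
  have hexp := exp_tsum_primes (summable_chiHom hs1 hs0) habs
  have hLmem := chi_L_mem hs1 hs0
  set T := ∑' p : Nat.Primes, -Real.log (1 - chiHom s hs0 p) with hT
  have hTlog : T = Real.log (∑' n : ℕ, chiHom s hs0 n) := by rw [← hexp, Real.log_exp]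
  have hTabs : |T| ≤ 1 := by
    rw [hTlog]
    rcases hLmem with ⟨hl, hr⟩
    have hlogpos : Real.log (∑' n : ℕ, chiHom s hs0 n) ≤ 0 :=
      Real.log_nonpos (by linarith) hr
    have hlogge : -1 ≤ Real.log (∑' n : ℕ, chiHom s hs0 n) := by
      have := Real.log_le_log (by norm_num : (0:ℝ) < 1/2) hl
      have hhalf : Real.log (1/2 : ℝ) = -Real.log 2 := by
        rw [one_div, Real.log_inv]
      have hlog2 : Real.log 2 ≤ 1 := by
        calc Real.log 2 ≤ 2 - 1 := Real.log_le_sub_one_of_pos (by norm_num)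
          _ = 1 := by norm_num
      rw [hhalf] at this
      linarith
    rw [abs_le]
    constructor <;> linarith
  -- X + ρ
  have hXsum : Summable (fun p : Nat.Primes => chiHom s hs0 p) :=
    (summable_chiHom hs1 hs0).of_norm.subtype _
  have hGsum : Summable (fun p : Nat.Primes => -Real.log (1 - chiHom s hs0 p)) := by
    have := summable_neg_log_one_sub hs1 (c := kappa) kappa_abs_le
    exact this.congr fun p => rfl
  have hRsum : Summable (fun p : Nat.Primes => -Real.log (1 - chiHom s hs0 p) - chiHom s hs0 p) :=
    hGsum.sub hXsum
  have hsplit : T - (∑' p : Nat.Primes, chiHom s hs0 p)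
      = ∑' p : Nat.Primes, (-Real.log (1 - chiHom s hs0 p) - chiHom s hs0 p) := by
    rw [Summable.tsum_sub hGsum hXsum]
  -- bound the remainder
  have hRbound : |∑' p : Nat.Primes, (-Real.log (1 - chiHom s hs0 p) - chiHom s hs0 p)| ≤ 2 := by
    have hptwise : ∀ p : Nat.Primes,
        |(-Real.log (1 - chiHom s hs0 p) - chiHom s hs0 p)| ≤ 2 * (p:ℝ)^(-(2:ℝ)) := by
      intro p
      have hfp := habs p.2
      have hlt : |chiHom s hs0 p| < 1 := lt_of_le_of_lt hfp (by norm_num)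
      have := log_one_sub_bound hlt
      have heq : -Real.log (1 - chiHom s hs0 p) - chiHom s hs0 p
          = -(chiHom s hs0 p + Real.log (1 - chiHom s hs0 p)) := by ring
      rw [heq, abs_neg]
      have hb : (chiHom s hs0 p)^2 / (1 - |chiHom s hs0 p|) ≤ 2 * (chiHom s hs0 p)^2 := by
        rw [div_le_iff₀ (by linarith [abs_nonneg (chiHom s hs0 p.1)])]
        nlinarith [sq_nonneg (chiHom s hs0 p.1), abs_nonneg (chiHom s hs0 p.1)]
      have hsq : (chiHom s hs0 p)^2 ≤ (p:ℝ)^(-(2:ℝ)) := by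
        have h1 : |chiHom s hs0 p| ≤ (p:ℝ)^(-s) := abs_chiHom_le s hs0 p
        have hp0 : (0:ℝ) < (p:ℝ) := by exact_mod_cast p.2.pos
        have hp1 : (1:ℝ) ≤ (p:ℝ) := by exact_mod_cast p.2.one_lt.le
        have h2 : (p:ℝ)^(-s) * (p:ℝ)^(-s) = (p:ℝ)^(-s + -s) := (Real.rpow_add hp0 _ _).symm
        have h3 : (p:ℝ)^(-s + -s) ≤ (p:ℝ)^(-(2:ℝ)) := by
          apply Real.rpow_le_rpow_of_exponent_le hp1 (by linarith)
        calc (chiHom s hs0 p)^2 = |chiHom s hs0 p|^2 := (sq_abs _).symm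
          _ ≤ ((p:ℝ)^(-s))^2 := by nlinarith [abs_nonneg (chiHom s hs0 p.1), Real.rpow_nonneg (Nat.cast_nonneg p.1) (-s)]
          _ = (p:ℝ)^(-s) * (p:ℝ)^(-s) := sq _
          _ ≤ (p:ℝ)^(-(2:ℝ)) := h2 ▸ h3
      linarith [this, hb, hsq]
    have h2sum : Summable (fun p : Nat.Primes => 2 * (p:ℝ)^(-(2:ℝ))) :=
      (summable_primes_rpow (by norm_num)).mul_left 2
    calc |∑' p : Nat.Primes, (-Real.log (1 - chiHom s hs0 p) - chiHom s hs0 p)|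
        ≤ ∑' p : Nat.Primes, 2 * (p:ℝ)^(-(2:ℝ)) := by
          have hn := norm_tsum_le_tsum_norm (f := fun p : Nat.Primes =>
            -Real.log (1 - chiHom s hs0 p) - chiHom s hs0 p) (by
              refine hRsum.abs.congr fun p => ?_
              rw [Real.norm_eq_abs])
          rw [Real.norm_eq_abs] at hn
          refine hn.trans ?_
          refine Summable.tsum_le_tsum (fun p => ?_) ?_ h2sum
          · rw [Real.norm_eq_abs]; exact hptwise p
          · refine hRsum.abs.congr fun p => ?_
            rw [Real.norm_eq_abs]
      _ = 2 * ∑' p : Nat.Primes, (p:ℝ)^(-(2:ℝ)) := tsum_mul_left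
      _ ≤ 2 * 1 := by
          have := tsum_primes_rpow_le (by norm_num : (1:ℝ) < 2) le_rfl
          simp only [show (1:ℝ)/(2-1) = 1 by norm_num, Real.log_one, zero_add] at this
          have hnn : 0 ≤ ∑' p : Nat.Primes, (p:ℝ)^(-(2:ℝ)) :=
            tsum_nonneg fun p => Real.rpow_nonneg (Nat.cast_nonneg _) _
          linarith
      _ = 2 := by norm_num
  have hXeq : (∑' p : Nat.Primes, kappa p * (p : ℝ) ^ (-s))
      = ∑' p : Nat.Primes, chiHom s hs0 p := rfl
  rw [hXeq]
  have : |∑' p : Nat.Primes, chiHom s hs0 p| ≤ |T| + |∑' p : Nat.Primes, (-Real.log (1 - chiHom s hs0 p) - chiHom s hs0 p)| := by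
    have : (∑' p : Nat.Primes, chiHom s hs0 p) = T - (T - ∑' p : Nat.Primes, chiHom s hs0 p) := by ring
    rw [this, hsplit]
    exact abs_sub _ _
  linarith [hTabs, hRbound, this]

-- Mertens' first theorem (upper bound): for any finset F of primes in [1, N],
-- ∑_{p ∈ F} log p / p ≤ log N + log 4
lemma mertens_first {N : ℕ} (hN : 1 ≤ N) {F : Finset ℕ}
    (hF : ∀ p ∈ F, p.Prime ∧ p ≤ N) :
    ∑ p ∈ F, Real.log p / p ≤ Real.log N + Real.log 4 := by
  have hNfac : Nat.factorial N ≠ 0 := Nat.factorial_ne_zero N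
  -- each p in F: N/p ≤ (N!).factorization p
  have hfact : ∀ p ∈ F, (N / p : ℕ) ≤ (Nat.factorial N).factorization p := by
    intro p hp
    obtain ⟨hpp, hpN⟩ := hF p hp
    rw [← Nat.Prime.pow_dvd_iff_le_factorization hpp hNfac]
    rw [Nat.Prime.pow_dvd_factorial_iff hpp (lt_add_one (Nat.log p N))]
    have h1mem : 1 ∈ Finset.Ico 1 (Nat.log p N + 1) := by
      rw [Finset.mem_Ico]
      refine ⟨le_refl 1, ?_⟩
      have : 1 ≤ Nat.log p N := by
        rw [Nat.one_le_iff_ne_zero]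
        intro h0
        have := Nat.log_eq_zero_iff.mp h0
        rcases this with h | h
        · omega
        · exact absurd h (by linarith [hpp.two_le])
      omega
    calc N / p = N / p ^ 1 := by rw [pow_one]
      _ ≤ ∑ i ∈ Finset.Ico 1 (Nat.log p N + 1), N / p ^ i :=
          Finset.single_le_sum (f := fun i => N / p ^ i) (fun i _ => Nat.zero_le _) h1mem
  -- log (N!) = ∑ over primeFactors
  have hlogfac : Real.log (Nat.factorial N : ℝ) = ∑ p ∈ (Nat.factorial N).primeFactors,
      ((Nat.factorial N).factorization p : ℝ) * Real.log p := by
    conv_lhs => rw [← Nat.factorization_prod_pow_eq_self hNfac]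
    rw [Nat.prod_factorization_eq_prod_primeFactors]
    push_cast
    rw [Real.log_prod]
    · refine Finset.sum_congr rfl fun p hp => ?_
      rw [Real.log_pow]
    · intro p hp
      have hpp := Nat.prime_of_mem_primeFactors hp
      have hp2 : (0:ℝ) < (p:ℝ) := by exact_mod_cast hpp.pos
      positivity
  -- ∑_{p ∈ F} (N/p : ℕ) * log p ≤ log N!
  have hA : ∑ p ∈ F, ((N / p : ℕ) : ℝ) * Real.log p ≤ Real.log (Nat.factorial N : ℝ) := by
    rw [hlogfac]
    have hsub : F ⊆ (Nat.factorial N).primeFactors := by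
      intro p hp
      obtain ⟨hpp, hpN⟩ := hF p hp
      exact Nat.mem_primeFactors.mpr ⟨hpp, Nat.dvd_factorial hpp.pos hpN, hNfac⟩
    calc ∑ p ∈ F, ((N / p : ℕ) : ℝ) * Real.log p
        ≤ ∑ p ∈ F, ((Nat.factorial N).factorization p : ℝ) * Real.log p := by
          refine Finset.sum_le_sum fun p hp => ?_
          have hlog : 0 ≤ Real.log p :=
            Real.log_nonneg (by exact_mod_cast (hF p hp).1.one_lt.le)
          have : ((N / p : ℕ) : ℝ) ≤ ((Nat.factorial N).factorization p : ℝ) := by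
            exact_mod_cast hfact p hp
          nlinarith
      _ ≤ ∑ p ∈ (Nat.factorial N).primeFactors,
            ((Nat.factorial N).factorization p : ℝ) * Real.log p := by
          refine Finset.sum_le_sum_of_subset_of_nonneg hsub fun p hp _ => ?_
          have hpp := Nat.prime_of_mem_primeFactors hp
          have hlog : 0 ≤ Real.log p :=
            Real.log_nonneg (by exact_mod_cast hpp.one_lt.le)
          positivity
  -- log N! ≤ N log N
  have hB : Real.log (Nat.factorial N : ℝ) ≤ (N : ℝ) * Real.log N := by
    have h1 : (Nat.factorial N : ℝ) ≤ (N : ℝ) ^ N := by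
      exact_mod_cast Nat.factorial_le_pow N
    calc Real.log (Nat.factorial N : ℝ) ≤ Real.log ((N:ℝ) ^ N) :=
        Real.log_le_log (by exact_mod_cast Nat.factorial_pos N) h1
      _ = (N : ℝ) * Real.log N := by rw [Real.log_pow]
  -- ∑ log p ≤ N log 4
  have hC : ∑ p ∈ F, Real.log p ≤ (N : ℝ) * Real.log 4 := by
    have h1 : ∑ p ∈ F, Real.log p = Real.log ((∏ p ∈ F, p : ℕ) : ℝ) := by
      push_cast
      rw [Real.log_prod]
      intro p hp
      exact_mod_cast (hF p hp).1.pos.ne'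
    have h3 : (∏ p ∈ F, p) ≤ primorial N := by
      rw [primorial]
      refine Finset.prod_le_prod_of_subset_of_one_le' ?_ ?_
      · intro p hp
        rw [Finset.mem_filter, Finset.mem_range]
        exact ⟨by have := (hF p hp).2; omega, (hF p hp).1⟩
      · intro i hi _
        exact (Finset.mem_filter.mp hi).2.pos
    have h4 : (∏ p ∈ F, p) ≤ 4 ^ N := le_trans h3 (primorial_le_4_pow N)
    have hpos : 0 < (∏ p ∈ F, p) := by
      refine Finset.prod_pos fun p hp => (hF p hp).1.pos
    rw [h1]
    calc Real.log ((∏ p ∈ F, p : ℕ) : ℝ) ≤ Real.log ((4:ℝ) ^ N) := by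
          refine Real.log_le_log (by exact_mod_cast hpos) ?_
          exact_mod_cast h4
      _ = (N : ℝ) * Real.log 4 := by rw [Real.log_pow]
  -- floor division lower bound: (N:ℝ)/p - 1 ≤ (N/p : ℕ)
  have hdivlb : ∀ p ∈ F, (N : ℝ) / p - 1 ≤ ((N / p : ℕ) : ℝ) := by
    intro p hp
    have hpp := (hF p hp).1
    have hppos : (0:ℝ) < (p:ℝ) := by exact_mod_cast hpp.pos
    have hmod := Nat.div_add_mod N p
    have hlt : N % p < p := Nat.mod_lt _ hpp.pos
    have : (N:ℝ) < (p:ℝ) * ((N / p : ℕ) : ℝ) + p := by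
      have e : (N:ℝ) = (p:ℝ) * ((N / p : ℕ) : ℝ) + ((N % p : ℕ) : ℝ) := by
        exact_mod_cast hmod.symm
      rw [e]
      have : ((N % p : ℕ) : ℝ) < (p:ℝ) := by exact_mod_cast hlt
      linarith
    rw [div_sub_one hppos.ne', div_le_iff₀ hppos]
    nlinarith
  -- combine
  have hNpos : (0:ℝ) < (N:ℝ) := by exact_mod_cast hN
  have key : (N:ℝ) * (∑ p ∈ F, Real.log p / p) ≤ (N:ℝ) * (Real.log N + Real.log 4) := by
    have e1 : (N:ℝ) * (∑ p ∈ F, Real.log p / p) = ∑ p ∈ F, ((N:ℝ)/p) * Real.log p := by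
      rw [Finset.mul_sum]
      refine Finset.sum_congr rfl fun p hp => ?_
      have hppos : (0:ℝ) < (p:ℝ) := by exact_mod_cast (hF p hp).1.pos
      field_simp
    have e2 : ∑ p ∈ F, ((N:ℝ)/p) * Real.log p
        ≤ ∑ p ∈ F, (((N / p : ℕ) : ℝ) + 1) * Real.log p := by
      refine Finset.sum_le_sum fun p hp => ?_
      have hlog : 0 ≤ Real.log p :=
        Real.log_nonneg (by exact_mod_cast (hF p hp).1.one_lt.le)
      have := hdivlb p hp
      nlinarith
    have e3 : ∑ p ∈ F, (((N / p : ℕ) : ℝ) + 1) * Real.log p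
        = (∑ p ∈ F, ((N / p : ℕ) : ℝ) * Real.log p) + ∑ p ∈ F, Real.log p := by
      rw [← Finset.sum_add_distrib]
      refine Finset.sum_congr rfl fun p hp => by ring
    rw [e1]
    calc ∑ p ∈ F, ((N:ℝ)/p) * Real.log p
        ≤ (∑ p ∈ F, ((N / p : ℕ) : ℝ) * Real.log p) + ∑ p ∈ F, Real.log p := by
          rw [← e3]; exact e2
      _ ≤ Real.log (Nat.factorial N : ℝ) + (N:ℝ) * Real.log 4 := by
          have := hA; have := hC; linarith
      _ ≤ (N:ℝ) * Real.log N + (N:ℝ) * Real.log 4 := by linarith [hB]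
      _ = (N:ℝ) * (Real.log N + Real.log 4) := by ring
  exact le_of_mul_le_mul_left key hNpos

lemma kappa_ge (n : ℕ) : -1 ≤ kappa n := by rw [kappa_eq]; split_ifs <;> norm_num
lemma kappa_le (n : ℕ) : kappa n ≤ 1 := by rw [kappa_eq]; split_ifs <;> norm_num

lemma log16 : (2:ℝ) ≤ Real.log 16 := by
  have h2 : (0.6931471803 : ℝ) < Real.log 2 := Real.log_two_gt_d9
  have : Real.log 16 = 4 * Real.log 2 := by
    rw [show (16:ℝ) = 2^(4:ℕ) by norm_num, Real.log_pow]
    norm_num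
  linarith

lemma log4 : Real.log 4 ≤ 1.4 := by
  have h2 : Real.log 2 < 0.6931471808 := Real.log_two_lt_d9
  have : Real.log 4 = 2 * Real.log 2 := by
    rw [show (4:ℝ) = 2^(2:ℕ) by norm_num, Real.log_pow]
    norm_num
  linarith

lemma key_prime_sum {x : ℝ} (hx : 16 ≤ x) :
    ∑ p ∈ (Finset.Icc 1 ⌊x⌋₊).filter (fun p => p.Prime ∧ p % 4 = 1), (1:ℝ)/p
      ≤ 0.5 * Real.log (Real.log x) + 7 := by
  have hlx : (2:ℝ) ≤ Real.log x := le_trans log16 (Real.log_le_log (by norm_num) hx)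
  set s : ℝ := 1 + 1/Real.log x with hs
  have hs1 : 1 < s := by
    rw [hs]
    have : 0 < 1/Real.log x := by positivity
    linarith
  have hs2 : s ≤ 2 := by
    rw [hs]
    have : 1/Real.log x ≤ 1/2 := by
      rw [div_le_div_iff₀ (by linarith) (by norm_num)]
      linarith
    linarith
  have hs0 : s ≠ 0 := ne_of_gt (by linarith)
  have hsm1 : s - 1 = 1/Real.log x := by rw [hs]; ring
  have hinv : 1/(s-1) = Real.log x := by rw [hsm1, one_div_one_div]
  set F := (Finset.Icc 1 ⌊x⌋₊).filter (fun p => p.Prime ∧ p % 4 = 1) with hF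
  have hFmem : ∀ p ∈ F, p.Prime ∧ p % 4 = 1 ∧ p ≤ ⌊x⌋₊ := by
    intro p hp
    rw [hF, Finset.mem_filter, Finset.mem_Icc] at hp
    exact ⟨hp.2.1, hp.2.2, hp.1.2⟩
  -- step A: pointwise cutoff transfer
  have hterm : ∀ p ∈ F, (1:ℝ)/p ≤ (p:ℝ)^(-s) + (s-1) * (Real.log p / p) := by
    intro p hp
    have hpp := (hFmem p hp).1
    have hp0 : (0:ℝ) < (p:ℝ) := by exact_mod_cast hpp.pos
    have hlogp : 0 ≤ Real.log p := Real.log_nonneg (by exact_mod_cast hpp.one_lt.le)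
    have e1 : (p:ℝ)^(-s) = (1/p) * Real.exp (-((s-1) * Real.log p)) := by
      rw [show -s = -1 + -(s-1) by ring, Real.rpow_add hp0, Real.rpow_neg_one,
        Real.rpow_def_of_pos hp0, one_div]
      ring_nf
    have e2 : 1 - Real.exp (-((s-1) * Real.log p)) ≤ (s-1) * Real.log p := by
      have := Real.add_one_le_exp (-((s-1) * Real.log p))
      linarith
    have hexp_nonneg : 0 ≤ Real.exp (-((s-1) * Real.log p)) := (Real.exp_pos _).le
    rw [e1]
    have h1p : (0:ℝ) < 1/p := by positivity
    calc (1:ℝ)/p = (1/p) * Real.exp (-((s-1) * Real.log p))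
          + (1/p) * (1 - Real.exp (-((s-1) * Real.log p))) := by ring
      _ ≤ (1/p) * Real.exp (-((s-1) * Real.log p)) + (1/p) * ((s-1) * Real.log p) := by
          have := mul_le_mul_of_nonneg_left e2 h1p.le
          linarith
      _ = (1/p) * Real.exp (-((s-1) * Real.log p)) + (s-1) * (Real.log p / p) := by
          field_simp
  have stepA : ∑ p ∈ F, (1:ℝ)/p
      ≤ (∑ p ∈ F, (p:ℝ)^(-s)) + (s-1) * ∑ p ∈ F, Real.log p / p := by
    rw [Finset.mul_sum, ← Finset.sum_add_distrib]
    exact Finset.sum_le_sum hterm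
  -- step B: Mertens
  have hN1 : 1 ≤ ⌊x⌋₊ := by
    rw [Nat.le_floor_iff (by linarith)]
    norm_num
    linarith
  have hlogN : Real.log ⌊x⌋₊ ≤ Real.log x := by
    refine Real.log_le_log (by exact_mod_cast hN1) (Nat.floor_le (by linarith))
  have stepB : (s-1) * ∑ p ∈ F, Real.log p / p ≤ 2 := by
    have hM := mertens_first hN1 (F := F) (fun p hp => ⟨(hFmem p hp).1, (hFmem p hp).2.2⟩)
    have hsum_nonneg : 0 ≤ ∑ p ∈ F, Real.log p / p := by
      refine Finset.sum_nonneg fun p hp => ?_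
      have hpp := (hFmem p hp).1
      have hp0 : (0:ℝ) < (p:ℝ) := by exact_mod_cast hpp.pos
      have : 0 ≤ Real.log p := Real.log_nonneg (by exact_mod_cast hpp.one_lt.le)
      positivity
    have hMx : ∑ p ∈ F, Real.log p / p ≤ Real.log x + 1.4 := by
      have := log4
      linarith
    have hsm1pos : 0 < s - 1 := by linarith
    calc (s-1) * ∑ p ∈ F, Real.log p / p ≤ (s-1) * (Real.log x + 1.4) := by
          exact mul_le_mul_of_nonneg_left hMx hsm1pos.le
      _ = 1 + 1.4 / Real.log x := by
          rw [hsm1]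
          field_simp
      _ ≤ 2 := by
          have : 1.4 / Real.log x ≤ 1 := by
            rw [div_le_one (by linarith)]
            linarith
          linarith
  -- step C: tsum bound
  set g : Nat.Primes → ℝ := fun p => (1 + kappa p)/2 * (p:ℝ)^(-s) with hg
  have hg_sum : Summable g := by
    refine (summable_primes_rpow hs1).of_nonneg_of_le (fun p => ?_) (fun p => ?_) <;>
      simp only [hg]
    · have := kappa_ge p.1
      have := Real.rpow_nonneg (Nat.cast_nonneg p.1) (-s)
      nlinarith
    · have h1 := kappa_le p.1
      have h2 := Real.rpow_nonneg (Nat.cast_nonneg p.1) (-s)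
      nlinarith
  have hw_nonneg : ∀ n, 0 ≤ pext g n := by
    intro n
    rw [pext]
    split_ifs with h
    · simp only [hg]
      have := kappa_ge n
      have := Real.rpow_nonneg (Nat.cast_nonneg n) (-s)
      nlinarith
    · exact le_refl 0
  have stepC : ∑ p ∈ F, (p:ℝ)^(-s) ≤ 0.5 * Real.log (Real.log x) + 2 := by
    have heqF : ∀ p ∈ F, (p:ℝ)^(-s) = pext g p := by
      intro p hp
      obtain ⟨hpp, hp4, _⟩ := hFmem p hp
      rw [pext, dif_pos hpp]
      simp only [hg]
      have hk : kappa p = 1 := by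
        rw [kappa_eq, if_neg (by omega), if_pos hp4]
      rw [hk]
      norm_num
    have h1 : ∑ p ∈ F, (p:ℝ)^(-s) = ∑ p ∈ F, pext g p := Finset.sum_congr rfl heqF
    have h2 : ∑ p ∈ F, pext g p ≤ ∑' n : ℕ, pext g n :=
      Summable.sum_le_tsum F (fun i _ => hw_nonneg i) (pext_summable hg_sum)
    have hchi_sub : Summable (fun p : Nat.Primes => kappa p * (p:ℝ)^(-s)) := by
      have := ((summable_chiHom hs1 hs0).of_norm).subtype {p : ℕ | p.Prime}
      exact this.congr fun p => by rw [Function.comp_apply, chiHom_apply]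
    have h3 : ∑' n : ℕ, pext g n
        = (1/2) * (∑' p : Nat.Primes, (p:ℝ)^(-s))
          + (1/2) * (∑' p : Nat.Primes, kappa p * (p:ℝ)^(-s)) := by
      rw [pext_tsum hg_sum]
      have he : g = fun p : Nat.Primes =>
          (1/2) * (p:ℝ)^(-s) + (1/2) * (kappa p * (p:ℝ)^(-s)) := by
        funext p
        simp only [hg]
        ring
      rw [he, Summable.tsum_add ((summable_primes_rpow hs1).mul_left _) (hchi_sub.mul_left _),
        tsum_mul_left, tsum_mul_left]
    have h4 : (∑' p : Nat.Primes, (p:ℝ)^(-s)) ≤ Real.log (Real.log x) + 1 := by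
      have := tsum_primes_rpow_le hs1 hs2
      rwa [hinv] at this
    have h5 : (∑' p : Nat.Primes, kappa p * (p:ℝ)^(-s)) ≤ 3 :=
      le_of_abs_le (abs_tsum_primes_chi hs1 hs2)
    rw [h1]
    calc ∑ p ∈ F, pext g p ≤ ∑' n : ℕ, pext g n := h2
      _ = (1/2) * (∑' p : Nat.Primes, (p:ℝ)^(-s))
          + (1/2) * (∑' p : Nat.Primes, kappa p * (p:ℝ)^(-s)) := h3
      _ ≤ (1/2) * (Real.log (Real.log x) + 1) + (1/2) * 3 := by
          have := h4; have := h5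
          linarith
      _ = 0.5 * Real.log (Real.log x) + 2 := by ring
  calc ∑ p ∈ F, (1:ℝ)/p
      ≤ (∑ p ∈ F, (p:ℝ)^(-s)) + (s-1) * ∑ p ∈ F, Real.log p / p := stepA
    _ ≤ (0.5 * Real.log (Real.log x) + 2) + 2 := by linarith [stepB, stepC]
    _ ≤ 0.5 * Real.log (Real.log x) + 7 := by linarith

noncomputable def Afin (N l : ℕ) : Finset ℕ :=
  (Finset.Icc 1 N).filter
    (fun a => (∃ n : ℕ, 1 ≤ n ∧ a ∣ n ^ 2 + 1) ∧ a.primeFactors.card = l)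

lemma Afin_mem {N l a : ℕ} (ha : a ∈ Afin N l) :
    1 ≤ a ∧ a ≤ N ∧ (∃ n : ℕ, 1 ≤ n ∧ a ∣ n ^ 2 + 1) ∧ a.primeFactors.card = l := by
  rw [Afin, Finset.mem_filter, Finset.mem_Icc] at ha
  exact ⟨ha.1.1, ha.1.2, ha.2.1, ha.2.2⟩

lemma Afin_mem' {N l a : ℕ} (h1 : 1 ≤ a) (h2 : a ≤ N)
    (h3 : ∃ n : ℕ, 1 ≤ n ∧ a ∣ n ^ 2 + 1) (h4 : a.primeFactors.card = l) :
    a ∈ Afin N l := by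
  rw [Afin, Finset.mem_filter, Finset.mem_Icc]
  exact ⟨⟨h1, h2⟩, h3, h4⟩

lemma totient_inv_nonneg (a : ℕ) : (0:ℝ) ≤ 1 / a.totient := by positivity

lemma key_step (N l : ℕ) :
    ((l+1 : ℕ) : ℝ) * ∑ a ∈ Afin N (l+1), (1:ℝ) / a.totient
      ≤ (∑ q ∈ Afin N 1, (1:ℝ) / q.totient) * (∑ b ∈ Afin N l, (1:ℝ) / b.totient) := by
  -- LHS as sigma sum
  have h1 : ((l+1 : ℕ) : ℝ) * ∑ a ∈ Afin N (l+1), (1:ℝ) / a.totient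
      = ∑ σ ∈ (Afin N (l+1)).sigma (fun a => a.primeFactors),
          (1:ℝ) / σ.1.totient := by
    rw [Finset.sum_sigma, Finset.mul_sum]
    refine Finset.sum_congr rfl fun a ha => ?_
    have e0 : ∑ s ∈ a.primeFactors, (1:ℝ) / (⟨a, s⟩ : Σ _ : ℕ, ℕ).fst.totient
        = ∑ _s ∈ a.primeFactors, (1:ℝ) / a.totient := rfl
    rw [e0, Finset.sum_const, (Afin_mem ha).2.2.2, nsmul_eq_mul]
  rw [h1]
  set S := (Afin N (l+1)).sigma (fun a => a.primeFactors) with hS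
  set i : (Σ _ : ℕ, ℕ) → ℕ × ℕ :=
    fun σ => (σ.2 ^ (σ.1.factorization σ.2), σ.1 / σ.2 ^ (σ.1.factorization σ.2)) with hi
  set g : ℕ × ℕ → ℝ := fun y => ((1:ℝ) / y.1.totient) * ((1:ℝ) / y.2.totient) with hg
  -- basic facts about σ ∈ S
  have hfacts : ∀ σ ∈ S, σ.1 ∈ Afin N (l+1) ∧ σ.2 ∈ σ.1.primeFactors := by
    intro σ hσ
    rw [hS, Finset.mem_sigma] at hσ
    exact hσ
  have hmain : ∀ σ ∈ S, (i σ).1 ∈ Afin N 1 ∧ (i σ).2 ∈ Afin N l ∧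
      (1:ℝ) / σ.1.totient = g (i σ) := by
    intro σ hσ
    obtain ⟨ha, hp⟩ := hfacts σ hσ
    obtain ⟨ha1, haN, haM, haω⟩ := Afin_mem ha
    set a := σ.1
    set p := σ.2
    have hane : a ≠ 0 := by omega
    have hpp : p.Prime := Nat.prime_of_mem_primeFactors hp
    have hpdvd : p ∣ a := Nat.dvd_of_mem_primeFactors hp
    set k := a.factorization p with hk
    have hkpos : k ≠ 0 := by
      have := Nat.Prime.factorization_pos_of_dvd hpp hane hpdvd
      omega
    have hqb : p ^ k * (a / p ^ k) = a := Nat.ordProj_mul_ordCompl_eq_self a p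
    set q := p ^ k
    set b := a / p ^ k
    have hqpos : 0 < q := pow_pos hpp.pos k
    have hbpos : 0 < b := Nat.ordCompl_pos p hane
    have hqdvd : q ∣ a := Nat.ordProj_dvd a p
    have hbdvd : b ∣ a := Nat.ordCompl_dvd a p
    have hco : Nat.Coprime q b := (Nat.coprime_ordCompl hpp hane).pow_left k
    have hqN : q ≤ N := le_trans (Nat.le_of_dvd (by omega) hqdvd) haN
    have hbN : b ≤ N := le_trans (Nat.le_of_dvd (by omega) hbdvd) haN
    have hMq : ∃ n : ℕ, 1 ≤ n ∧ q ∣ n ^ 2 + 1 := by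
      obtain ⟨n, hn, hd⟩ := haM
      exact ⟨n, hn, dvd_trans hqdvd hd⟩
    have hMb : ∃ n : ℕ, 1 ≤ n ∧ b ∣ n ^ 2 + 1 := by
      obtain ⟨n, hn, hd⟩ := haM
      exact ⟨n, hn, dvd_trans hbdvd hd⟩
    have hpfq : q.primeFactors = {p} := Nat.primeFactors_prime_pow hkpos hpp
    have hωq : q.primeFactors.card = 1 := by rw [hpfq]; rfl
    have hωb : b.primeFactors.card = l := by
      have hunion : a.primeFactors = q.primeFactors ∪ b.primeFactors := by
        conv_lhs => rw [← hqb]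
        exact Nat.primeFactors_mul (by omega) (by omega)
      have hdisj : Disjoint q.primeFactors b.primeFactors :=
        Nat.Coprime.disjoint_primeFactors hco
      have := haω
      rw [hunion, Finset.card_union_of_disjoint hdisj, hωq] at this
      omega
    refine ⟨Afin_mem' hqpos hqN hMq hωq, Afin_mem' hbpos hbN hMb hωb, ?_⟩
    have htot : a.totient = q.totient * b.totient := by
      conv_lhs => rw [← hqb]
      exact Nat.totient_mul hco
    rw [hg]
    show (1:ℝ) / a.totient = ((1:ℝ) / q.totient) * ((1:ℝ) / b.totient)
    rw [htot]
    push_cast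
    rw [one_div, one_div, one_div, mul_inv]
  -- injectivity
  have hinj : ∀ σ ∈ S, ∀ τ ∈ S, i σ = i τ → σ = τ := by
    intro σ hσ τ hτ heq
    obtain ⟨haσ, hpσ⟩ := hfacts σ hσ
    obtain ⟨haτ, hpτ⟩ := hfacts τ hτ
    have hppσ : σ.2.Prime := Nat.prime_of_mem_primeFactors hpσ
    have hppτ : τ.2.Prime := Nat.prime_of_mem_primeFactors hpτ
    have haneσ : σ.1 ≠ 0 := by have := (Afin_mem haσ).1; omega
    have haneτ : τ.1 ≠ 0 := by have := (Afin_mem haτ).1; omega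
    have hkσ : σ.1.factorization σ.2 ≠ 0 := by
      have := Nat.Prime.factorization_pos_of_dvd hppσ haneσ
        (Nat.dvd_of_mem_primeFactors hpσ)
      omega
    have hkτ : τ.1.factorization τ.2 ≠ 0 := by
      have := Nat.Prime.factorization_pos_of_dvd hppτ haneτ
        (Nat.dvd_of_mem_primeFactors hpτ)
      omega
    have h1 : (i σ).1 = (i τ).1 := by rw [heq]
    have h2 : (i σ).2 = (i τ).2 := by rw [heq]
    simp only [hi] at h1 h2
    -- σ.2 = τ.2
    have hpeq : σ.2 = τ.2 := by
      have hd1 : σ.2 ∣ σ.2 ^ (σ.1.factorization σ.2) := dvd_pow_self _ hkσ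
      rw [h1] at hd1
      have hd2 : σ.2 ∣ τ.2 := hppσ.dvd_of_dvd_pow hd1
      exact (Nat.prime_dvd_prime_iff_eq hppσ hppτ).mp hd2
    have haeq : σ.1 = τ.1 := by
      have e1 := Nat.ordProj_mul_ordCompl_eq_self σ.1 σ.2
      have e2 := Nat.ordProj_mul_ordCompl_eq_self τ.1 τ.2
      rw [← e2, ← h2, ← h1]
      exact e1.symm
    exact Sigma.ext haeq (heq_of_eq hpeq)
  -- now conclude
  have hsum1 : ∑ σ ∈ S, (1:ℝ) / σ.1.totient = ∑ σ ∈ S, g (i σ) :=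
    Finset.sum_congr rfl fun σ hσ => (hmain σ hσ).2.2
  have hsum2 : ∑ σ ∈ S, g (i σ) = ∑ y ∈ S.image i, g y := (Finset.sum_image hinj).symm
  have hsub : S.image i ⊆ (Afin N 1) ×ˢ (Afin N l) := by
    intro y hy
    rw [Finset.mem_image] at hy
    obtain ⟨σ, hσ, rfl⟩ := hy
    rw [Finset.mem_product]
    exact ⟨(hmain σ hσ).1, (hmain σ hσ).2.1⟩
  have hsum3 : ∑ y ∈ S.image i, g y ≤ ∑ y ∈ (Afin N 1) ×ˢ (Afin N l), g y := by
    refine Finset.sum_le_sum_of_subset_of_nonneg hsub fun y _ _ => ?_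
    rw [hg]
    positivity
  have hsum4 : ∑ y ∈ (Afin N 1) ×ˢ (Afin N l), g y
      = (∑ q ∈ Afin N 1, (1:ℝ) / q.totient) * (∑ b ∈ Afin N l, (1:ℝ) / b.totient) := by
    rw [Finset.sum_product, hg, Finset.sum_mul_sum]
  calc ∑ σ ∈ S, (1:ℝ) / σ.1.totient = ∑ y ∈ S.image i, g y := by rw [hsum1, hsum2]
    _ ≤ ∑ y ∈ (Afin N 1) ×ˢ (Afin N l), g y := hsum3
    _ = _ := hsum4

lemma Afin_sum_le (N l : ℕ) :
    ∑ a ∈ Afin N l, (1:ℝ) / a.totient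
      ≤ (∑ q ∈ Afin N 1, (1:ℝ) / q.totient) ^ l / (Nat.factorial l) := by
  induction l with
  | zero =>
      simp only [pow_zero, Nat.factorial_zero, Nat.cast_one, div_one]
      have hsub : Afin N 0 ⊆ {1} := by
        intro a ha
        obtain ⟨h1, _, _, hω⟩ := Afin_mem ha
        have : a.primeFactors = ∅ := Finset.card_eq_zero.mp hω
        have := Nat.primeFactors_eq_empty.mp this
        rw [Finset.mem_singleton]
        omega
      calc ∑ a ∈ Afin N 0, (1:ℝ) / a.totient
          ≤ ∑ a ∈ ({1} : Finset ℕ), (1:ℝ) / a.totient :=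
            Finset.sum_le_sum_of_subset_of_nonneg hsub fun a _ _ => totient_inv_nonneg a
        _ = 1 := by simp [Nat.totient_one]
  | succ l ih =>
      have hstep := key_step N l
      have hS_nonneg : (0:ℝ) ≤ ∑ q ∈ Afin N 1, (1:ℝ) / q.totient :=
        Finset.sum_nonneg fun q _ => totient_inv_nonneg q
      have hl1 : (0:ℝ) < ((l+1 : ℕ) : ℝ) := by positivity
      have h2 : ∑ a ∈ Afin N (l+1), (1:ℝ) / a.totient
          ≤ (∑ q ∈ Afin N 1, (1:ℝ) / q.totient)
            * (∑ b ∈ Afin N l, (1:ℝ) / b.totient) / ((l+1 : ℕ) : ℝ) := by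
        rw [le_div_iff₀ hl1]
        calc (∑ a ∈ Afin N (l+1), (1:ℝ) / a.totient) * ((l+1 : ℕ) : ℝ)
            = ((l+1 : ℕ) : ℝ) * ∑ a ∈ Afin N (l+1), (1:ℝ) / a.totient := by ring
          _ ≤ _ := hstep
      refine h2.trans ?_
      have h3 : (∑ q ∈ Afin N 1, (1:ℝ) / q.totient)
            * (∑ b ∈ Afin N l, (1:ℝ) / b.totient) / ((l+1 : ℕ) : ℝ)
          ≤ (∑ q ∈ Afin N 1, (1:ℝ) / q.totient)
            * ((∑ q ∈ Afin N 1, (1:ℝ) / q.totient) ^ l / (Nat.factorial l))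
            / ((l+1 : ℕ) : ℝ) := by
        exact (div_le_div_iff_of_pos_right hl1).mpr (mul_le_mul_of_nonneg_left ih hS_nonneg)
      refine h3.trans (le_of_eq ?_)
      rw [Nat.factorial_succ]
      push_cast
      field_simp
      ring

lemma telescope_eq {N : ℕ} (hN : 1 ≤ N) :
    ∑ m ∈ Finset.Icc 2 N, (1:ℝ)/((m:ℝ)*((m:ℝ)-1)) = 1 - 1/(N:ℝ) := by
  induction N, hN using Nat.le_induction with
  | base => simp
  | succ N hN ih =>
      rw [Finset.sum_Icc_succ_top (by omega : 2 ≤ N + 1), ih]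
      have h1 : (1:ℝ) ≤ (N:ℝ) := by exact_mod_cast hN
      have h2 : ((N+1 : ℕ) : ℝ) = (N:ℝ) + 1 := by push_cast; ring
      rw [h2]
      have hN0 : (N:ℝ) ≠ 0 := by linarith
      have hN1 : (N:ℝ) + 1 ≠ 0 := by linarith
      field_simp
      rw [add_sub_cancel_right, div_self hN0]
      ring

lemma telescope_le (N : ℕ) :
    ∑ m ∈ Finset.Icc 2 N, (1:ℝ)/((m:ℝ)*((m:ℝ)-1)) ≤ 1 := by
  rcases Nat.lt_or_ge N 1 with h | h
  · rw [show N = 0 by omega]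
    simp
  · rw [telescope_eq h]
    have : (0:ℝ) < (N:ℝ) := by exact_mod_cast h
    have : 0 ≤ 1/(N:ℝ) := by positivity
    linarith

lemma M_prime {p : ℕ} (hp : p.Prime) (hM : ∃ n : ℕ, 1 ≤ n ∧ p ∣ n ^ 2 + 1) :
    p = 2 ∨ p % 4 = 1 := by
  haveI : Fact p.Prime := ⟨hp⟩
  obtain ⟨n, hn, hdvd⟩ := hM
  have hsq : ((n : ZMod p))^2 = -1 := by
    have h0 : ((n^2 + 1 : ℕ) : ZMod p) = 0 := (ZMod.natCast_eq_zero_iff _ _).mpr hdvd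
    push_cast at h0
    linear_combination h0
  have h4 : p % 4 ≠ 3 := by
    rw [← ZMod.exists_sq_eq_neg_one_iff]
    exact ⟨(n : ZMod p), by rw [← hsq]; ring⟩
  rcases hp.eq_two_or_odd with h2 | hodd
  · exact Or.inl h2
  · right
    omega

lemma A1_bound {x : ℝ} (hx : 16 ≤ x) :
    ∑ a ∈ Afin ⌊x⌋₊ 1, (1:ℝ)/a.totient ≤ 0.5 * Real.log (Real.log x) + 13 := by
  set N := ⌊x⌋₊ with hNdef
  have hN16 : 16 ≤ N := by
    rw [hNdef]
    exact Nat.le_floor (by exact_mod_cast hx)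
  rw [← Finset.sum_filter_add_sum_filter_not (Afin N 1) Nat.Prime
    (fun a => (1:ℝ)/a.totient)]
  set F := (Finset.Icc 1 N).filter (fun p => p.Prime ∧ p % 4 = 1) with hFdef
  have hFmem : ∀ p ∈ F, p.Prime ∧ p % 4 = 1 ∧ p ≤ N := by
    intro p hp
    rw [hFdef, Finset.mem_filter, Finset.mem_Icc] at hp
    exact ⟨hp.2.1, hp.2.2, hp.1.2⟩
  -- prime part
  have hT1 : ∑ a ∈ (Afin N 1).filter Nat.Prime, (1:ℝ)/a.totient
      ≤ 0.5 * Real.log (Real.log x) + 9 := by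
    have hsub : (Afin N 1).filter Nat.Prime ⊆ insert 2 F := by
      intro a ha
      rw [Finset.mem_filter] at ha
      obtain ⟨haA, hap⟩ := ha
      obtain ⟨h1, h2, hM, _⟩ := Afin_mem haA
      rcases M_prime hap hM with h | h
      · rw [h]; exact Finset.mem_insert_self 2 _
      · refine Finset.mem_insert_of_mem ?_
        rw [hFdef, Finset.mem_filter, Finset.mem_Icc]
        exact ⟨⟨h1, h2⟩, hap, h⟩
    have h2notF : 2 ∉ F := by
      intro h
      have := (hFmem 2 h).2.1
      omega
    calc ∑ a ∈ (Afin N 1).filter Nat.Prime, (1:ℝ)/a.totient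
        ≤ ∑ a ∈ insert 2 F, (1:ℝ)/a.totient := by
          refine Finset.sum_le_sum_of_subset_of_nonneg hsub fun a _ _ => by positivity
      _ = (1:ℝ)/Nat.totient 2 + ∑ p ∈ F, (1:ℝ)/p.totient := by
          rw [Finset.sum_insert h2notF]
      _ = 1 + ∑ p ∈ F, (1:ℝ)/p.totient := by norm_num [Nat.totient_two]
      _ ≤ 1 + ((∑ p ∈ F, (1:ℝ)/p) + ∑ p ∈ F, (1:ℝ)/((p:ℝ)*((p:ℝ)-1))) := by
          have : ∀ p ∈ F, (1:ℝ)/p.totient = 1/p + 1/((p:ℝ)*((p:ℝ)-1)) := by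
            intro p hp
            obtain ⟨hpp, _, _⟩ := hFmem p hp
            rw [Nat.totient_prime hpp]
            have hp2 : (2:ℝ) ≤ (p:ℝ) := by exact_mod_cast hpp.two_le
            have hcast : ((p - 1 : ℕ) : ℝ) = (p:ℝ) - 1 := by
              have : 1 ≤ p := hpp.pos
              push_cast [this]
              ring
            rw [hcast]
            have hne : (p:ℝ) ≠ 0 := by linarith
            have hne1 : (p:ℝ) - 1 ≠ 0 := by linarith
            field_simp
            ring
          rw [← Finset.sum_add_distrib]
          refine le_of_eq ?_
          congr 1
          exact Finset.sum_congr rfl this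
      _ ≤ 1 + ((0.5 * Real.log (Real.log x) + 7) + 1) := by
          have hA := key_prime_sum hx
          rw [← hNdef] at hA
          rw [← hFdef] at hA
          have hB : ∑ p ∈ F, (1:ℝ)/((p:ℝ)*((p:ℝ)-1)) ≤ 1 := by
            refine le_trans ?_ (telescope_le N)
            refine Finset.sum_le_sum_of_subset_of_nonneg ?_ fun m hm _ => ?_
            · intro p hp
              obtain ⟨hpp, _, hpN⟩ := hFmem p hp
              rw [Finset.mem_Icc]
              exact ⟨hpp.two_le, hpN⟩
            · rw [Finset.mem_Icc] at hm
              have h2m : (2:ℝ) ≤ (m:ℝ) := by exact_mod_cast hm.1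
              have h0 : (0:ℝ) < (m:ℝ)*((m:ℝ)-1) := by nlinarith
              positivity
          linarith
      _ = 0.5 * Real.log (Real.log x) + 9 := by ring
  -- non-prime part
  have hT2 : ∑ a ∈ (Afin N 1).filter (fun a => ¬ a.Prime), (1:ℝ)/a.totient ≤ 4 := by
    set Q := (Afin N 1).filter (fun a => ¬ a.Prime) with hQdef
    set j : ℕ → ℕ × ℕ := fun a => (a.minFac, a.factorization a.minFac) with hj
    set g : ℕ × ℕ → ℝ := fun y => 2 * ((1:ℝ)/(y.1:ℝ))^y.2 with hg
    have hQfacts : ∀ a ∈ Q, a.minFac.Prime ∧ 2 ≤ a.factorization a.minFac ∧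
        a = a.minFac ^ (a.factorization a.minFac) ∧ a ≤ N := by
      intro a ha
      rw [hQdef, Finset.mem_filter] at ha
      obtain ⟨haA, hnp⟩ := ha
      obtain ⟨h1, h2, _, hω⟩ := Afin_mem haA
      have hane1 : a ≠ 1 := by
        intro h
        rw [h] at hω
        simp [Nat.primeFactors_one] at hω
      have hane0 : a ≠ 0 := by omega
      have hpp : a.minFac.Prime := Nat.minFac_prime hane1
      set p := a.minFac
      have hpdvd : p ∣ a := Nat.minFac_dvd a
      have hppf : p ∈ a.primeFactors := Nat.mem_primeFactors.mpr ⟨hpp, hpdvd, hane0⟩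
      have hpf : a.primeFactors = {p} := by
        obtain ⟨y, hy⟩ := Finset.card_eq_one.mp hω
        rw [hy] at hppf ⊢
        rw [Finset.mem_singleton] at hppf
        rw [hppf]
      set k := a.factorization p with hk
      have hk0 : k ≠ 0 := by
        have := Nat.Prime.factorization_pos_of_dvd hpp hane0 hpdvd
        omega
      have hb1 : a / p ^ k = 1 := by
        rw [Nat.eq_one_iff_not_exists_prime_dvd]
        intro r hr hrd
        have hrda : r ∣ a := dvd_trans hrd (Nat.ordCompl_dvd a p)
        have hrpf : r ∈ a.primeFactors := Nat.mem_primeFactors.mpr ⟨hr, hrda, hane0⟩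
        rw [hpf, Finset.mem_singleton] at hrpf
        rw [hrpf] at hrd
        exact Nat.not_dvd_ordCompl hpp hane0 hrd
      have haeq : a = p ^ k := by
        have := Nat.ordProj_mul_ordCompl_eq_self a p
        rw [hb1, mul_one] at this
        exact this.symm
      have hk2 : 2 ≤ k := by
        rcases Nat.lt_or_ge k 2 with h | h
        · interval_cases k
          · omega
          · rw [haeq, pow_one] at hnp
            exact absurd hpp hnp
        · exact h
      exact ⟨hpp, hk2, haeq, h2⟩
    have hptwise : ∀ a ∈ Q, (1:ℝ)/a.totient ≤ g (j a) := by
      intro a ha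
      obtain ⟨hpp, hk2, haeq, _⟩ := hQfacts a ha
      set p := a.minFac
      set k := a.factorization p
      have htot : a.totient = p ^ (k-1) * (p - 1) := by
        conv_lhs => rw [haeq]
        exact Nat.totient_prime_pow hpp (by omega)
      have hp2 : (2:ℝ) ≤ (p:ℝ) := by exact_mod_cast hpp.two_le
      have hcast : (a.totient : ℝ) = (p:ℝ)^(k-1) * ((p:ℝ) - 1) := by
        rw [htot]
        have h1 : 1 ≤ p := hpp.pos
        push_cast [h1]
        ring
      have hpow : (p:ℝ)^k = (p:ℝ)^(k-1) * (p:ℝ) := by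
        conv_lhs => rw [show k = (k-1) + 1 by omega]
        rw [pow_succ]
      have hφpos : (0:ℝ) < (p:ℝ)^(k-1) * ((p:ℝ) - 1) := by
        have : (0:ℝ) < (p:ℝ)^(k-1) := by positivity
        nlinarith
      have hhalf : (p:ℝ)^k / 2 ≤ (a.totient : ℝ) := by
        rw [hcast, hpow]
        have hpk1 : (0:ℝ) < (p:ℝ)^(k-1) := by positivity
        nlinarith
      rw [hg]
      show (1:ℝ)/a.totient ≤ 2 * ((1:ℝ)/(p:ℝ))^k
      have hgval : 2 * ((1:ℝ)/(p:ℝ))^k = 2 / (p:ℝ)^k := by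
        rw [div_pow, one_pow]
        ring
      rw [hgval]
      rw [div_le_div_iff₀ (by rw [hcast]; exact hφpos) (by positivity)]
      nlinarith [hcast, hhalf, hφpos]
    have hinj : ∀ a ∈ Q, ∀ b ∈ Q, j a = j b → a = b := by
      intro a ha b hb heq
      obtain ⟨_, _, haeq, _⟩ := hQfacts a ha
      obtain ⟨_, _, hbeq, _⟩ := hQfacts b hb
      have h1 : a.minFac = b.minFac := by
        have := congrArg Prod.fst heq
        exact this
      have h2 : a.factorization a.minFac = b.factorization b.minFac := by
        have := congrArg Prod.snd heq
        exact this
      rw [haeq, hbeq, h2, h1]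
    have hD : Q.image j ⊆ (Finset.Icc 2 N) ×ˢ (Finset.Icc 2 N) := by
      intro y hy
      rw [Finset.mem_image] at hy
      obtain ⟨a, ha, rfl⟩ := hy
      obtain ⟨hpp, hk2, haeq, haN⟩ := hQfacts a ha
      rw [Finset.mem_product, Finset.mem_Icc, Finset.mem_Icc]
      have hapos : 0 < a := by rw [haeq]; exact pow_pos hpp.pos _
      constructor
      · exact ⟨hpp.two_le, le_trans (Nat.minFac_le hapos) haN⟩
      · refine ⟨hk2, ?_⟩
        show a.factorization a.minFac ≤ N
        have h1 : a.factorization a.minFac < 2 ^ (a.factorization a.minFac) :=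
          Nat.lt_two_pow_self
        have h2 : 2 ^ (a.factorization a.minFac) ≤ a.minFac ^ (a.factorization a.minFac) :=
          Nat.pow_le_pow_left hpp.two_le _
        rw [← haeq] at h2
        omega
    calc ∑ a ∈ Q, (1:ℝ)/a.totient ≤ ∑ a ∈ Q, g (j a) := Finset.sum_le_sum hptwise
      _ = ∑ y ∈ Q.image j, g y := (Finset.sum_image hinj).symm
      _ ≤ ∑ y ∈ (Finset.Icc 2 N) ×ˢ (Finset.Icc 2 N), g y := by
          refine Finset.sum_le_sum_of_subset_of_nonneg hD fun y _ _ => ?_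
          rw [hg]
          positivity
      _ = ∑ p ∈ Finset.Icc 2 N, ∑ k ∈ Finset.Icc 2 N, 2 * ((1:ℝ)/(p:ℝ))^k := by
          rw [Finset.sum_product]
      _ ≤ ∑ p ∈ Finset.Icc 2 N, 4 * ((1:ℝ)/((p:ℝ)*((p:ℝ)-1))) := by
          refine Finset.sum_le_sum fun p hp => ?_
          rw [Finset.mem_Icc] at hp
          have hp2 : (2:ℝ) ≤ (p:ℝ) := by exact_mod_cast hp.1
          have hinner : ∑ k ∈ Finset.Icc 2 N, ((1:ℝ)/(p:ℝ))^k
              ≤ ((1:ℝ)/(p:ℝ))^2 * 2 := by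
            rw [show Finset.Icc 2 N = Finset.Ico 2 (N+1) by rw [Finset.Ico_add_one_right_eq_Icc],
              Finset.sum_Ico_eq_sum_range]
            have hper : ∀ i ∈ Finset.range (N + 1 - 2), ((1:ℝ)/(p:ℝ))^(2+i)
                ≤ ((1:ℝ)/(p:ℝ))^2 * ((1:ℝ)/2)^i := by
              intro i _
              rw [pow_add]
              refine mul_le_mul_of_nonneg_left ?_ (by positivity)
              refine pow_le_pow_left₀ (by positivity) ?_ i
              rw [div_le_div_iff₀ (by linarith) (by norm_num)]
              linarith
            calc ∑ i ∈ Finset.range (N+1-2), ((1:ℝ)/(p:ℝ))^(2+i)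
                ≤ ∑ i ∈ Finset.range (N+1-2), ((1:ℝ)/(p:ℝ))^2 * ((1:ℝ)/2)^i :=
                  Finset.sum_le_sum hper
              _ = ((1:ℝ)/(p:ℝ))^2 * ∑ i ∈ Finset.range (N+1-2), ((1:ℝ)/2)^i := by
                  rw [Finset.mul_sum]
              _ ≤ ((1:ℝ)/(p:ℝ))^2 * 2 := by
                  refine mul_le_mul_of_nonneg_left (sum_geometric_two_le _) (by positivity)
          have hsq : ((1:ℝ)/(p:ℝ))^2 ≤ (1:ℝ)/((p:ℝ)*((p:ℝ)-1)) := by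
            rw [div_pow, one_pow]
            rw [div_le_div_iff₀ (by positivity) (by nlinarith)]
            nlinarith
          calc ∑ k ∈ Finset.Icc 2 N, 2 * ((1:ℝ)/(p:ℝ))^k
              = 2 * ∑ k ∈ Finset.Icc 2 N, ((1:ℝ)/(p:ℝ))^k := by rw [Finset.mul_sum]
            _ ≤ 2 * (((1:ℝ)/(p:ℝ))^2 * 2) := by
                refine mul_le_mul_of_nonneg_left hinner (by norm_num)
            _ = 4 * ((1:ℝ)/(p:ℝ))^2 := by ring
            _ ≤ 4 * ((1:ℝ)/((p:ℝ)*((p:ℝ)-1))) := by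
                refine mul_le_mul_of_nonneg_left hsq (by norm_num)
      _ = 4 * ∑ p ∈ Finset.Icc 2 N, (1:ℝ)/((p:ℝ)*((p:ℝ)-1)) := by rw [Finset.mul_sum]
      _ ≤ 4 * 1 := by
          refine mul_le_mul_of_nonneg_left (telescope_le N) (by norm_num)
      _ = 4 := by norm_num
  linarith

end Helpers

/-- There exists an absolute constant `B > 0` such that for every `l ≥ 0` and all
`x ≥ 16`, `∑_{a ≤ x, a ∈ 𝓜, ω(a) = l} 1/φ(a) ≤ (0.5·log log x + B)^l / l!`,
where `𝓜` is the set of positive integers dividing `n²+1` for some `n ≥ 1`. -/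
theorem sum_inv_totient_M_omega_eq :
    ∃ B : ℝ, 0 < B ∧ ∀ l : ℕ, ∀ x : ℝ, x ≥ 16 →
      (∑ a ∈ (Finset.Icc 1 ⌊x⌋₊).filter
          (fun a => (∃ n : ℕ, 1 ≤ n ∧ a ∣ n ^ 2 + 1) ∧ a.primeFactors.card = l),
        (1 : ℝ) / a.totient) ≤
      (0.5 * Real.log (Real.log x) + B) ^ l / (Nat.factorial l) := by
  refine ⟨13, by norm_num, fun l x hx => ?_⟩
  have hx' : (16:ℝ) ≤ x := hx
  have h1 : (∑ a ∈ (Finset.Icc 1 ⌊x⌋₊).filter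
      (fun a => (∃ n : ℕ, 1 ≤ n ∧ a ∣ n ^ 2 + 1) ∧ a.primeFactors.card = l),
        (1 : ℝ) / a.totient) = ∑ a ∈ Afin ⌊x⌋₊ l, (1:ℝ) / a.totient := rfl
  rw [h1]
  have h2 := Afin_sum_le ⌊x⌋₊ l
  have hS_nonneg : (0:ℝ) ≤ ∑ q ∈ Afin ⌊x⌋₊ 1, (1:ℝ) / q.totient :=
    Finset.sum_nonneg fun q _ => totient_inv_nonneg q
  have h3 := A1_bound hx'
  have h4 : (∑ q ∈ Afin ⌊x⌋₊ 1, (1:ℝ) / q.totient) ^ l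
      ≤ (0.5 * Real.log (Real.log x) + 13) ^ l :=
    pow_le_pow_left₀ hS_nonneg h3 l
  have h5 : (0:ℝ) < (Nat.factorial l : ℝ) := by
    exact_mod_cast Nat.factorial_pos l
  refine h2.trans ?_
  exact (div_le_div_iff_of_pos_right h5).mpr h4
end
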